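/- arXiv:2508.06940 — 5 statements merged into one kernel-verified Lean document; each statement's English description precedes it below -/
import Mathlib

section
/- Let −μ*/(1−μ*) ≤ ρ ≤ 1 and set λ := ln(ρ·(1/μ*) + 1−ρ)/ln(1/μ*) if ρ ≥ 0, and λ := −ln(1−ρ)/ln(1−μ*) if ρ < 0. Then for every nonnegative function f : Ω^n → ℝ it holds that ‖T_ρ f‖_∞ ≤ ∏_{S⊆{1,…,n}} ‖E(f|S)‖_∞^{λ^{|S|}·(1−λ)^{n−|S|}} (with the convention 0^0 = 1 in the exponents). -/
open Finset

/-- Expectation of `f : Ω^n → ℝ` under the product measure `μ^{⊗n}`. -/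
noncomputable def pExpct {Ω : Type*} [Fintype Ω] (μ : Ω → ℝ) {n : ℕ}
    (f : (Fin n → Ω) → ℝ) : ℝ :=
  ∑ x : Fin n → Ω, (∏ i, μ (x i)) * f x

/-- Conditional expectation on the coordinates in `S`:
`E(f|S)(x) = E_{y∼μ^{⊗n}} f(z)` where `z_i = x_i` for `i ∈ S` and `z_i = y_i` otherwise. -/
noncomputable def condExp {Ω : Type*} [Fintype Ω] (μ : Ω → ℝ) {n : ℕ}
    (S : Finset (Fin n)) (f : (Fin n → Ω) → ℝ) : (Fin n → Ω) → ℝ :=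
  fun x => pExpct μ (fun y => f (S.piecewise x y))

/-- The noise operator on all `n` coordinates:
`T_ρ f = Σ_S ρ^{|S|} (1-ρ)^{n-|S|} E(f|S)`. -/
noncomputable def noiseOpN {Ω : Type*} [Fintype Ω] (μ : Ω → ℝ) {n : ℕ}
    (ρ : ℝ) (f : (Fin n → Ω) → ℝ) : (Fin n → Ω) → ℝ :=
  fun x => ∑ S : Finset (Fin n), ρ ^ S.card * (1 - ρ) ^ (n - S.card) * condExp μ S f x

/-- The `1`-norm with respect to the product measure. -/
noncomputable def p1Norm {Ω : Type*} [Fintype Ω] (μ : Ω → ℝ) {n : ℕ}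
    (f : (Fin n → Ω) → ℝ) : ℝ :=
  ∑ x : Fin n → Ω, (∏ i, μ (x i)) * |f x|

/-- The `∞`-norm `max_{x∈Ω^n} |f(x)|`. -/
noncomputable def pInfNorm {Ω : Type*} [Fintype Ω] {n : ℕ} (f : (Fin n → Ω) → ℝ) : ℝ :=
  ⨆ x : Fin n → Ω, |f x|

set_option linter.unusedSectionVars false

namespace Stmt5Aux

variable {n : ℕ} {Ω : Type*} [Fintype Ω]

def emb (n : ℕ) : Fin n ↪ Fin (n + 1) := ⟨Fin.succ, Fin.succ_injective n⟩

lemma zero_not_mem_map (S : Finset (Fin n)) : (0 : Fin (n + 1)) ∉ S.map (emb n) := by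
  simp only [Finset.mem_map, emb, Function.Embedding.coeFn_mk]
  rintro ⟨i, -, hi⟩
  exact Fin.succ_ne_zero i hi

lemma succ_mem_map (S : Finset (Fin n)) (i : Fin n) : i.succ ∈ S.map (emb n) ↔ i ∈ S := by
  simp only [Finset.mem_map, emb, Function.Embedding.coeFn_mk]
  constructor
  · rintro ⟨j, hj, hji⟩; rwa [← Fin.succ_injective n hji]
  · exact fun h => ⟨i, h, rfl⟩

lemma card_map_emb (S : Finset (Fin n)) : (S.map (emb n)).card = S.card := Finset.card_map _

lemma card_insert_map (S : Finset (Fin n)) :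
    (insert (0 : Fin (n + 1)) (S.map (emb n))).card = S.card + 1 := by
  rw [Finset.card_insert_of_notMem (zero_not_mem_map S), Finset.card_map]

/-- Splitting a sum over subsets of `Fin (n+1)` according to membership of `0`. -/
lemma sum_finset_succ {M : Type*} [AddCommMonoid M] (H : Finset (Fin (n + 1)) → M) :
    ∑ S : Finset (Fin (n + 1)), H S
      = ∑ S : Finset (Fin n), (H (S.map (emb n)) + H (insert 0 (S.map (emb n)))) := by
  have hbij : Function.Bijective
      (fun p : Finset (Fin n) × Bool =>
        if p.2 then insert (0 : Fin (n+1)) (p.1.map (emb n)) else p.1.map (emb n)) := by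
    constructor
    · rintro ⟨S, b⟩ ⟨S', b'⟩ h
      cases b <;> cases b' <;>
        simp only [Bool.false_eq_true, if_false, if_true] at h
      · have hS : S = S' := Finset.map_injective (emb n) h
        rw [hS]
      · have h0 : (0 : Fin (n+1)) ∈ S.map (emb n) := by
          rw [h]; exact Finset.mem_insert_self _ _
        exact absurd h0 (zero_not_mem_map S)
      · have h0 : (0 : Fin (n+1)) ∈ S'.map (emb n) := by
          rw [← h]; exact Finset.mem_insert_self _ _
        exact absurd h0 (zero_not_mem_map S')
      · have h2 : S.map (emb n) = S'.map (emb n) := by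
          have := congrArg (fun t : Finset (Fin (n+1)) => t.erase 0) h
          simpa [Finset.erase_insert (zero_not_mem_map S),
            Finset.erase_insert (zero_not_mem_map S')] using this
        have hS : S = S' := Finset.map_injective (emb n) h2
        rw [hS]
    · intro T
      refine ⟨⟨(univ.filter fun i : Fin n => i.succ ∈ T), (0 : Fin (n+1)) ∈ T⟩, ?_⟩
      have hmap : (univ.filter fun i : Fin n => i.succ ∈ T).map (emb n) = T.erase 0 := by
        ext x
        refine Fin.cases ?_ (fun j => ?_) x
        · simp [Finset.mem_map, emb, Fin.succ_ne_zero]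
        · simp [Finset.mem_map, emb, Fin.succ_inj, Fin.succ_ne_zero]
      by_cases h0 : (0 : Fin (n+1)) ∈ T <;>
        simp [h0, hmap, Finset.insert_erase, Finset.erase_eq_of_notMem]
  rw [← Fintype.sum_bijective _ hbij _ H (fun p => rfl)]
  rw [Fintype.sum_prod_type]
  refine Finset.sum_congr rfl fun S _ => ?_
  rw [Fintype.sum_bool]
  simp [add_comm]

/-- Product version. -/
lemma prod_finset_succ {M : Type*} [CommMonoid M] (H : Finset (Fin (n + 1)) → M) :
    ∏ S : Finset (Fin (n + 1)), H S
      = ∏ S : Finset (Fin n), (H (S.map (emb n)) * H (insert 0 (S.map (emb n)))) := by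
  let H' : Finset (Fin (n+1)) → Additive M := fun S => Additive.ofMul (H S)
  exact sum_finset_succ H'

lemma sum_pi_succ {M : Type*} [AddCommMonoid M] (G : (Fin (n + 1) → Ω) → M) :
    ∑ w : Fin (n + 1) → Ω, G w = ∑ y : Ω, ∑ z : Fin n → Ω, G (Fin.cons y z) := by
  have h1 : ∑ w : Fin (n + 1) → Ω, G w = ∑ p : Ω × (Fin n → Ω), G (Fin.cons p.1 p.2) :=
    (Fintype.sum_equiv (Fin.consEquiv (fun _ => Ω)) _ _ (fun p => rfl)).symm
  rw [h1, Fintype.sum_prod_type]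

lemma piecewise_map_cons (S : Finset (Fin n)) (a b : Ω) (x z : Fin n → Ω) :
    (S.map (emb n)).piecewise (Fin.cons a x) (Fin.cons b z)
      = Fin.cons (α := fun _ => Ω) b (S.piecewise x z) := by
  funext i
  refine Fin.cases ?_ (fun j => ?_) i
  · rw [Finset.piecewise_eq_of_notMem _ _ _ (zero_not_mem_map S), Fin.cons_zero, Fin.cons_zero]
  · by_cases hj : j ∈ S
    · rw [Finset.piecewise_eq_of_mem _ _ _ ((succ_mem_map S j).2 hj), Fin.cons_succ, Fin.cons_succ,
        Finset.piecewise_eq_of_mem _ _ _ hj]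
    · rw [Finset.piecewise_eq_of_notMem _ _ _ (fun h => hj ((succ_mem_map S j).1 h)),
        Fin.cons_succ, Fin.cons_succ, Finset.piecewise_eq_of_notMem _ _ _ hj]

lemma piecewise_insert_cons (S : Finset (Fin n)) (a b : Ω) (x z : Fin n → Ω) :
    (insert 0 (S.map (emb n))).piecewise (Fin.cons a x) (Fin.cons b z)
      = Fin.cons (α := fun _ => Ω) a (S.piecewise x z) := by
  funext i
  refine Fin.cases ?_ (fun j => ?_) i
  · rw [Finset.piecewise_eq_of_mem _ _ _ (Finset.mem_insert_self _ _), Fin.cons_zero, Fin.cons_zero]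
  · have hmem : j.succ ∈ insert (0:Fin (n+1)) (S.map (emb n)) ↔ j ∈ S := by
      rw [Finset.mem_insert, succ_mem_map]
      simp [Fin.succ_ne_zero]
    by_cases hj : j ∈ S
    · rw [Finset.piecewise_eq_of_mem _ _ _ (hmem.2 hj), Fin.cons_succ, Fin.cons_succ,
        Finset.piecewise_eq_of_mem _ _ _ hj]
    · rw [Finset.piecewise_eq_of_notMem _ _ _ (fun h => hj (hmem.1 h)),
        Fin.cons_succ, Fin.cons_succ, Finset.piecewise_eq_of_notMem _ _ _ hj]


section Rec

variable (μ : Ω → ℝ)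

lemma pExpct_succ (g : (Fin (n + 1) → Ω) → ℝ) :
    pExpct μ g = ∑ y, μ y * pExpct μ (fun z => g (Fin.cons y z)) := by
  unfold pExpct
  rw [sum_pi_succ (fun w => (∏ i, μ (w i)) * g w)]
  refine Finset.sum_congr rfl fun y _ => ?_
  rw [Finset.mul_sum]
  refine Finset.sum_congr rfl fun z _ => ?_
  rw [Fin.prod_univ_succ]
  simp only [Fin.cons_zero, Fin.cons_succ]
  ring

lemma pExpct_nonneg {g : (Fin n → Ω) → ℝ} (hμ : ∀ x, 0 ≤ μ x) (hg : ∀ x, 0 ≤ g x) :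
    0 ≤ pExpct μ g :=
  Finset.sum_nonneg fun x _ => mul_nonneg (Finset.prod_nonneg fun i _ => hμ (x i)) (hg x)

lemma pExpct_sum {ι : Type*} [Fintype ι] (c : ι → ℝ) (g : ι → (Fin n → Ω) → ℝ) :
    pExpct μ (fun z => ∑ b : ι, c b * g b z) = ∑ b : ι, c b * pExpct μ (g b) := by
  unfold pExpct
  simp only [Finset.mul_sum]
  rw [Finset.sum_comm]
  exact Finset.sum_congr rfl fun b _ => Finset.sum_congr rfl fun x _ => by ring

lemma condExp_map_cons (S : Finset (Fin n)) (f : (Fin (n + 1) → Ω) → ℝ) (y : Ω)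
    (x' : Fin n → Ω) :
    condExp μ (S.map (emb n)) f (Fin.cons y x')
      = ∑ b, μ b * condExp μ S (fun z => f (Fin.cons b z)) x' := by
  unfold condExp
  rw [pExpct_succ]
  refine Finset.sum_congr rfl fun b _ => ?_
  congr 1
  unfold pExpct
  refine Finset.sum_congr rfl fun z _ => ?_
  dsimp only
  rw [piecewise_map_cons]

lemma condExp_insert_cons (hμsum : ∑ x, μ x = 1) (S : Finset (Fin n))
    (f : (Fin (n + 1) → Ω) → ℝ) (y : Ω) (x' : Fin n → Ω) :
    condExp μ (insert 0 (S.map (emb n))) f (Fin.cons y x')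
      = condExp μ S (fun z => f (Fin.cons y z)) x' := by
  unfold condExp
  rw [pExpct_succ]
  have : ∀ b : Ω, pExpct μ (fun z =>
        f ((insert 0 (S.map (emb n))).piecewise (Fin.cons y x') (Fin.cons b z)))
      = pExpct μ (fun z => f (Fin.cons y (S.piecewise x' z))) := by
    intro b
    unfold pExpct
    refine Finset.sum_congr rfl fun z _ => ?_
    dsimp only
    rw [piecewise_insert_cons]
  simp only [this]
  rw [← Finset.sum_mul, hμsum, one_mul]

lemma noiseOpN_cons (hμsum : ∑ x, μ x = 1) (ρ : ℝ) (f : (Fin (n + 1) → Ω) → ℝ) (y : Ω)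
    (x' : Fin n → Ω) :
    noiseOpN μ ρ f (Fin.cons y x')
      = ρ * noiseOpN μ ρ (fun z => f (Fin.cons y z)) x'
        + (1 - ρ) * ∑ b, μ b * noiseOpN μ ρ (fun z => f (Fin.cons b z)) x' := by
  have hc : ∀ S : Finset (Fin n), n + 1 - (S.map (emb n)).card = (n - S.card) + 1 := by
    intro S
    have h1 : S.card ≤ n := by
      have := S.card_le_univ
      simpa [Fintype.card_fin] using this
    rw [card_map_emb]
    omega
  unfold noiseOpN
  rw [sum_finset_succ
    (fun S => ρ ^ S.card * (1 - ρ) ^ (n + 1 - S.card) * condExp μ S f (Fin.cons y x')),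
    Finset.sum_add_distrib, add_comm]
  congr 1
  · rw [Finset.mul_sum]
    refine Finset.sum_congr rfl fun S _ => ?_
    rw [condExp_insert_cons μ hμsum, card_insert_map]
    have h1 : n + 1 - (S.card + 1) = n - S.card := by omega
    rw [h1, pow_succ]
    ring
  · have hL : ∀ S : Finset (Fin n),
        ρ ^ (S.map (emb n)).card * (1 - ρ) ^ (n + 1 - (S.map (emb n)).card)
            * condExp μ (S.map (emb n)) f (Fin.cons y x')
          = ∑ b, μ b * ((1 - ρ) * (ρ ^ S.card * (1 - ρ) ^ (n - S.card)
              * condExp μ S (fun z => f (Fin.cons b z)) x')) := by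
      intro S
      rw [condExp_map_cons, hc S, card_map_emb, pow_succ, Finset.mul_sum]
      exact Finset.sum_congr rfl fun b _ => by ring
    simp only [hL]
    rw [Finset.sum_comm, Finset.mul_sum]
    refine Finset.sum_congr rfl fun b _ => ?_
    rw [Finset.mul_sum, Finset.mul_sum]
    exact Finset.sum_congr rfl fun S _ => by ring

end Rec

section Norm

variable [Nonempty Ω]

lemma abs_le_pInfNorm (f : (Fin n → Ω) → ℝ) (x : Fin n → Ω) : |f x| ≤ pInfNorm f := by
  unfold pInfNorm
  exact le_ciSup (Set.Finite.bddAbove (Set.finite_range fun x => |f x|)) x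

lemma le_pInfNorm (f : (Fin n → Ω) → ℝ) (x : Fin n → Ω) : f x ≤ pInfNorm f :=
  (le_abs_self _).trans (abs_le_pInfNorm f x)

lemma pInfNorm_nonneg (f : (Fin n → Ω) → ℝ) : 0 ≤ pInfNorm f :=
  le_trans (abs_nonneg _) (abs_le_pInfNorm f (Classical.arbitrary _))

lemma pInfNorm_le (f : (Fin n → Ω) → ℝ) (c : ℝ) (h : ∀ x, |f x| ≤ c) : pInfNorm f ≤ c := by
  unfold pInfNorm
  exact ciSup_le h

end Norm

section Chord

/-- The chord of a concave power function lies below the function. -/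
lemma chord_le {p m₀ m₁ m : ℝ} (hp0 : 0 ≤ p) (hp1 : p ≤ 1) (h0 : 0 ≤ m₀)
    (hlt : m₀ < m₁) (hm0 : m₀ ≤ m) (hm1 : m ≤ m₁) :
    ((m₁ - m) * m₀ ^ p + (m - m₀) * m₁ ^ p) / (m₁ - m₀) ≤ m ^ p := by
  have hd : 0 < m₁ - m₀ := by linarith
  have hane : 0 ≤ (m₁ - m) / (m₁ - m₀) := div_nonneg (by linarith) hd.le
  have hbne : 0 ≤ (m - m₀) / (m₁ - m₀) := div_nonneg (by linarith) hd.le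
  have hab : (m₁ - m) / (m₁ - m₀) + (m - m₀) / (m₁ - m₀) = 1 := by
    field_simp
    ring
  have hconc := (Real.concaveOn_rpow hp0 hp1).2 (Set.mem_Ici.2 h0)
      (Set.mem_Ici.2 (by linarith : (0:ℝ) ≤ m₁)) hane hbne hab
  have hmix : (m₁ - m) / (m₁ - m₀) * m₀ + (m - m₀) / (m₁ - m₀) * m₁ = m := by
    field_simp
    ring
  rw [smul_eq_mul, smul_eq_mul, smul_eq_mul, smul_eq_mul, hmix] at hconc
  calc ((m₁ - m) * m₀ ^ p + (m - m₀) * m₁ ^ p) / (m₁ - m₀)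
      = (m₁ - m) / (m₁ - m₀) * m₀ ^ p + (m - m₀) / (m₁ - m₀) * m₁ ^ p := by ring
    _ ≤ m ^ p := hconc

lemma combine_helper {Q P c M m m₀ T : ℝ} (hQP : Q * P = M) (hden : M - m₀ ≠ 0)
    (htarget : M * ((M - m) * c + (m - m₀)) = T * (M - m₀)) :
    Q * (((M - m) * (c * P) + (m - m₀) * P) / (M - m₀)) = T := by
  have h1 : Q * ((M - m) * (c * P) + (m - m₀) * P) = M * ((M - m) * c + (m - m₀)) := by
    rw [← hQP]; ring
  rw [← mul_div_assoc, h1, htarget, mul_div_assoc, div_self hden, mul_one]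

end Chord

section Mus

variable {μ : Ω → ℝ} {μs : ℝ}

lemma mus_pos (hμpos : ∀ x, 0 < μ x) (hμs_mem : ∃ x, μ x = μs) : 0 < μs := by
  obtain ⟨x, hx⟩ := hμs_mem
  exact hx ▸ hμpos x

lemma mus_lt_one (hΩ : 2 ≤ Fintype.card Ω) (hμpos : ∀ x, 0 < μ x) (hμsum : ∑ x, μ x = 1)
    (hμs_le : ∀ x, μs ≤ μ x) : μs < 1 := by
  classical
  obtain ⟨a, b, hab⟩ := Fintype.exists_pair_of_one_lt_card (α := Ω) (by omega)
  have hle : μ a + μ b ≤ 1 := by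
    rw [← hμsum]
    have := Finset.sum_le_sum_of_subset_of_nonneg (Finset.subset_univ ({a, b} : Finset Ω))
      (fun i _ _ => (hμpos i).le)
    rwa [Finset.sum_pair hab] at this
  have h1 := hμs_le a
  have h2 := hμs_le b
  linarith

end Mus

section Lam

variable {μs ρ lam : ℝ}

lemma lam_bounds (hs0 : 0 < μs) (hs1 : μs < 1)
    (hρm : -μs ≤ ρ * (1 - μs)) (hρ1 : ρ ≤ 1)
    (hlam : lam = if 0 ≤ ρ then Real.log (ρ * (1 / μs) + 1 - ρ) / Real.log (1 / μs)
      else -(Real.log (1 - ρ) / Real.log (1 - μs))) :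
    0 ≤ lam ∧ lam ≤ 1 := by
  by_cases hρ : 0 ≤ ρ
  · rw [if_pos hρ] at hlam
    have hinv : 1 < 1 / μs := by rw [lt_div_iff₀ hs0]; linarith
    have hlog : 0 < Real.log (1 / μs) := Real.log_pos hinv
    have hN1 : 1 ≤ ρ * (1 / μs) + 1 - ρ := by nlinarith [mul_nonneg hρ (sub_nonneg.2 hinv.le)]
    have hN2 : ρ * (1 / μs) + 1 - ρ ≤ 1 / μs := by nlinarith [mul_nonneg (sub_nonneg.2 hρ1) (sub_nonneg.2 hinv.le)]
    constructor
    · rw [hlam]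
      exact div_nonneg (Real.log_nonneg hN1) hlog.le
    · rw [hlam, div_le_one hlog]
      exact (Real.log_le_log_iff (by linarith) (by linarith)).2 hN2
  · push_neg at hρ
    rw [if_neg (not_le.2 hρ)] at hlam
    have h1ρ : 1 < 1 - ρ := by linarith
    have hlog : Real.log (1 - μs) < 0 := Real.log_neg (by linarith) (by linarith)
    have hlogρ : 0 < Real.log (1 - ρ) := Real.log_pos h1ρ
    constructor
    · rw [hlam, neg_nonneg]
      exact div_nonpos_of_nonneg_of_nonpos hlogρ.le hlog.le
    · have h2 : 1 - ρ ≤ 1 / (1 - μs) := (le_div_iff₀ (by linarith)).2 (by nlinarith)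
      have h3 : Real.log (1 - ρ) ≤ Real.log (1 / (1 - μs)) :=
        (Real.log_le_log_iff (by linarith) (one_div_pos.2 (by linarith))).2 h2
      rw [one_div, Real.log_inv] at h3
      rw [hlam, ← div_neg, div_le_one (by linarith : 0 < -Real.log (1 - μs))]
      exact h3

lemma mus_rpow_eq (hs0 : 0 < μs) (hs1 : μs < 1) (hρ : 0 ≤ ρ) (hρ1 : ρ ≤ 1)
    (hlam : lam = Real.log (ρ * (1 / μs) + 1 - ρ) / Real.log (1 / μs)) :
    μs ^ (1 - lam) = ρ + (1 - ρ) * μs := by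
  have hinv : 1 < 1 / μs := by rw [lt_div_iff₀ hs0]; linarith
  have hlog : 0 < Real.log (1 / μs) := Real.log_pos hinv
  have hN1 : (1:ℝ) ≤ ρ * (1 / μs) + 1 - ρ := by
    nlinarith [mul_nonneg hρ (sub_nonneg.2 hinv.le)]
  have hNpos : (0:ℝ) < ρ * (1 / μs) + 1 - ρ := by linarith
  have hll : lam * Real.log (1 / μs) = Real.log (ρ * (1 / μs) + 1 - ρ) := by
    rw [hlam]; field_simp [hlog.ne']
  have hlinv : Real.log (1 / μs) = -Real.log μs := by rw [one_div, Real.log_inv]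
  rw [Real.rpow_def_of_pos hs0]
  have heq : Real.log μs * (1 - lam) = Real.log μs + Real.log (ρ * (1 / μs) + 1 - ρ) := by
    rw [← hll, hlinv]; ring
  rw [heq, Real.exp_add, Real.exp_log hs0, Real.exp_log hNpos]
  field_simp
  ring

lemma one_sub_mus_rpow_eq (hs0 : 0 < μs) (hs1 : μs < 1) (hρ : ρ < 0)
    (hlam : lam = -(Real.log (1 - ρ) / Real.log (1 - μs))) :
    (1 - μs) ^ (-lam) = 1 - ρ := by
  have hlog : Real.log (1 - μs) < 0 := Real.log_neg (by linarith) (by linarith)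
  have h1ρ : (0:ℝ) < 1 - ρ := by linarith
  have hll : -lam * Real.log (1 - μs) = Real.log (1 - ρ) := by
    rw [hlam]; field_simp [hlog.ne]
  rw [Real.rpow_def_of_pos (by linarith),
    show Real.log (1 - μs) * -lam = Real.log (1 - ρ) by rw [← hll]; ring]
  exact Real.exp_log h1ρ

end Lam

section Key

variable {μs ρ lam : ℝ} {μ : Ω → ℝ}

lemma key [Nonempty Ω] (hΩ : 2 ≤ Fintype.card Ω) (hμpos : ∀ x, 0 < μ x)
    (hμsum : ∑ x, μ x = 1)
    (hμs_le : ∀ x, μs ≤ μ x) (hμs_mem : ∃ x, μ x = μs)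
    (hρ0 : -(μs / (1 - μs)) ≤ ρ) (hρ1 : ρ ≤ 1)
    (hlam : lam = if 0 ≤ ρ then Real.log (ρ * (1 / μs) + 1 - ρ) / Real.log (1 / μs)
      else -(Real.log (1 - ρ) / Real.log (1 - μs)))
    (g : Ω → ℝ) (hg : ∀ y, 0 ≤ g y) {M : ℝ} (hgM : ∀ y, g y ≤ M) (hM : ∃ y, g y = M)
    (x : Ω) :
    ρ * g x + (1 - ρ) * (∑ y, μ y * g y) ≤ M ^ lam * (∑ y, μ y * g y) ^ (1 - lam) := by
  classical
  have hs0 : 0 < μs := mus_pos hμpos hμs_mem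
  have hs1 : μs < 1 := mus_lt_one hΩ hμpos hμsum hμs_le
  have hρm : -μs ≤ ρ * (1 - μs) := by
    have h2 : -μs / (1 - μs) ≤ ρ := by rw [neg_div]; exact hρ0
    exact (div_le_iff₀ (by linarith)).1 h2
  obtain ⟨hlam0, hlam1⟩ := lam_bounds hs0 hs1 hρm hρ1 hlam
  obtain ⟨m, hm⟩ : ∃ m', ∑ y, μ y * g y = m' := ⟨_, rfl⟩
  rw [hm]
  obtain ⟨y₀, hy₀⟩ := hM
  have hM0 : 0 ≤ M := hy₀ ▸ hg y₀
  rcases eq_or_lt_of_le hM0 with hM0' | hMpos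
  · have hgz : ∀ y, g y = 0 := fun y => le_antisymm (by have := hgM y; linarith) (hg y)
    have hmz : m = 0 := by rw [← hm]; simp [hgz]
    rw [hmz, ← hM0']
    have hzz : ρ * g x + (1 - ρ) * 0 = 0 := by rw [hgz x]; ring
    rw [hzz]
    positivity
  · have hmM : m ≤ M := by
      rw [← hm]
      calc ∑ y, μ y * g y ≤ ∑ y, μ y * M :=
          Finset.sum_le_sum fun y _ => mul_le_mul_of_nonneg_left (hgM y) (hμpos y).le
        _ = M := by rw [← Finset.sum_mul, hμsum, one_mul]
    have hμsM : μs * M ≤ m := by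
      have h1 : μ y₀ * g y₀ ≤ m := by
        rw [← hm]
        exact Finset.single_le_sum (f := fun y => μ y * g y)
          (fun y _ => mul_nonneg (hμpos y).le (hg y)) (Finset.mem_univ y₀)
      rw [hy₀] at h1
      nlinarith [hμs_le y₀]
    have hmpos : 0 < m := lt_of_lt_of_le (by positivity) hμsM
    by_cases hρ : 0 ≤ ρ
    · rw [if_pos hρ] at hlam
      have hN : μs ^ (1 - lam) = ρ + (1 - ρ) * μs := mus_rpow_eq hs0 hs1 hρ hρ1 hlam
      have hQP : M ^ lam * M ^ (1 - lam) = M := by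
        rw [← Real.rpow_add hMpos, show lam + (1 - lam) = 1 by ring, Real.rpow_one]
      have hch := chord_le (p := 1 - lam) (by linarith) (by linarith)
        (by positivity : (0:ℝ) ≤ μs * M)
        (by have h8 := mul_lt_of_lt_one_left hMpos hs1; linarith : μs * M < M) hμsM hmM
      have hrw : (μs * M) ^ (1 - lam) = (ρ + (1 - ρ) * μs) * M ^ (1 - lam) := by
        rw [Real.mul_rpow hs0.le hM0, hN]
      rw [hrw] at hch
      have hident := combine_helper (c := ρ + (1 - ρ) * μs) (m := m) (m₀ := μs * M)
        (T := ρ * M + (1 - ρ) * m) hQP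
        (sub_ne_zero.2 ((by have h9 := mul_pos hs0 hMpos; have h8 := mul_lt_of_lt_one_left hMpos hs1; linarith : μs * M < M).ne'))
        (by ring)
      calc ρ * g x + (1 - ρ) * m ≤ ρ * M + (1 - ρ) * m := by nlinarith [hgM x]
        _ = M ^ lam * (((M - m) * ((ρ + (1 - ρ) * μs) * M ^ (1 - lam))
              + (m - μs * M) * M ^ (1 - lam)) / (M - μs * M)) := hident.symm
        _ ≤ M ^ lam * m ^ (1 - lam) :=
          mul_le_mul_of_nonneg_left hch (Real.rpow_nonneg hM0 _)
    · push_neg at hρ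
      rw [if_neg (not_le.2 hρ)] at hlam
      have hpow : (1 - μs) ^ (-lam) = 1 - ρ := one_sub_mus_rpow_eq hs0 hs1 hρ hlam
      by_cases hA : m ≤ (1 - μs) * M
      · have h1 : ρ * g x ≤ 0 := mul_nonpos_of_nonpos_of_nonneg hρ.le (hg x)
        have hb : m / M ≤ 1 - μs := by rw [div_le_iff₀ hMpos]; nlinarith
        have h3 : (1 - μs) ^ (-lam) ≤ (m / M) ^ (-lam) :=
          Real.rpow_le_rpow_of_nonpos (by positivity) hb (neg_nonpos.2 hlam0)
        rw [hpow, Real.rpow_neg (by positivity), ← Real.inv_rpow (by positivity), inv_div] at h3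
        have hml : (0:ℝ) < m ^ lam := Real.rpow_pos_of_pos hmpos lam
        have h4 : (M / m) ^ lam * m = M ^ lam * m ^ (1 - lam) := by
          rw [Real.div_rpow hM0 hmpos.le,
            show (1:ℝ) - lam = 1 + -lam by ring, Real.rpow_add hmpos, Real.rpow_one,
            Real.rpow_neg hmpos.le]
          field_simp
        calc ρ * g x + (1 - ρ) * m ≤ (1 - ρ) * m := by linarith
          _ ≤ (M / m) ^ lam * m := mul_le_mul_of_nonneg_right h3 hmpos.le
          _ = M ^ lam * m ^ (1 - lam) := h4
      · push_neg at hA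
        have hgx : (m - (1 - μ x) * M) / μ x ≤ g x := by
          rw [div_le_iff₀ (hμpos x)]
          have hsplit : μ x * g x + ∑ y ∈ Finset.univ.erase x, μ y * g y = m := by
            rw [← hm]
            exact Finset.add_sum_erase Finset.univ (fun y => μ y * g y) (Finset.mem_univ x)
          have hb2 : ∑ y ∈ Finset.univ.erase x, μ y * g y
              ≤ ∑ y ∈ Finset.univ.erase x, μ y * M :=
            Finset.sum_le_sum fun y _ => mul_le_mul_of_nonneg_left (hgM y) (hμpos y).le
          have hc2 : ∑ y ∈ Finset.univ.erase x, μ y = 1 - μ x := by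
            have h5 := Finset.add_sum_erase Finset.univ μ (Finset.mem_univ x)
            rw [hμsum] at h5
            linarith
          have hc3 : ∑ y ∈ Finset.univ.erase x, μ y * M = (1 - μ x) * M := by
            rw [← Finset.sum_mul, hc2]
          nlinarith
        have step1 : ρ * g x ≤ ρ * ((m - (1 - μ x) * M) / μ x) :=
          mul_le_mul_of_nonpos_left hgx hρ.le
        have step2 : ρ * ((m - (1 - μ x) * M) / μ x) ≤ ρ * ((m - (1 - μs) * M) / μs) := by
          refine mul_le_mul_of_nonpos_left ?_ hρ.le
          rw [div_le_div_iff₀ hs0 (hμpos x)]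
          nlinarith [mul_nonneg (sub_nonneg.2 (hμs_le x)) (sub_nonneg.2 hmM)]
        have hQP : M ^ lam * M ^ (1 - lam) = M := by
          rw [← Real.rpow_add hMpos, show lam + (1 - lam) = 1 by ring, Real.rpow_one]
        have hch := chord_le (p := 1 - lam) (by linarith) (by linarith)
          (mul_nonneg (by linarith) hM0) (by have h9 := mul_pos hs0 hMpos; linarith : (1 - μs) * M < M)
          hA.le hmM
        have hpow2 : ((1 - μs) * M) ^ (1 - lam) = ((1 - μs) * (1 - ρ)) * M ^ (1 - lam) := by
          rw [Real.mul_rpow (by linarith) hM0]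
          congr 1
          rw [show (1:ℝ) - lam = 1 + -lam by ring, Real.rpow_add (by linarith), Real.rpow_one,
            hpow]
        rw [hpow2] at hch
        have htarget : M * ((M - m) * ((1 - μs) * (1 - ρ)) + (m - (1 - μs) * M))
            = (ρ * ((m - (1 - μs) * M) / μs) + (1 - ρ) * m) * (M - (1 - μs) * M) := by
          field_simp
          ring
        have hident := combine_helper (c := (1 - μs) * (1 - ρ)) (m := m)
          (m₀ := (1 - μs) * M)
          (T := ρ * ((m - (1 - μs) * M) / μs) + (1 - ρ) * m) hQP
          (sub_ne_zero.2 ((by have h9 := mul_pos hs0 hMpos; linarith : (1 - μs) * M < M).ne'))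
          htarget
        calc ρ * g x + (1 - ρ) * m
            ≤ ρ * ((m - (1 - μs) * M) / μs) + (1 - ρ) * m := by linarith [step1.trans step2]
          _ = M ^ lam * (((M - m) * (((1 - μs) * (1 - ρ)) * M ^ (1 - lam))
              + (m - (1 - μs) * M) * M ^ (1 - lam)) / (M - (1 - μs) * M)) := hident.symm
          _ ≤ M ^ lam * m ^ (1 - lam) :=
            mul_le_mul_of_nonneg_left hch (Real.rpow_nonneg hM0 _)

end Key

section Main

variable {μ : Ω → ℝ} {μs ρ lam : ℝ}

lemma condExp_sum {ι : Type*} [Fintype ι] (μ : Ω → ℝ) (c : ι → ℝ)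
    (h : ι → (Fin n → Ω) → ℝ) (S : Finset (Fin n)) (x : Fin n → Ω) :
    condExp μ S (fun z => ∑ b, c b * h b z) x = ∑ b, c b * condExp μ S (h b) x :=
  pExpct_sum μ c (fun b y => h b (S.piecewise x y))

lemma noiseOpN_sum {ι : Type*} [Fintype ι] (μ : Ω → ℝ) (ρ : ℝ) (c : ι → ℝ)
    (h : ι → (Fin n → Ω) → ℝ) (x : Fin n → Ω) :
    noiseOpN μ ρ (fun z => ∑ b, c b * h b z) x = ∑ b, c b * noiseOpN μ ρ (h b) x := by
  unfold noiseOpN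
  simp only [condExp_sum, Finset.mul_sum]
  rw [Finset.sum_comm]
  refine Finset.sum_congr rfl fun b _ => ?_
  exact Finset.sum_congr rfl fun S _ => by ring

lemma univ_finset_fin_zero : (Finset.univ : Finset (Finset (Fin 0))) = {∅} := by
  ext S
  simp only [Finset.mem_univ, Finset.mem_singleton, true_iff]
  exact Finset.eq_empty_of_isEmpty S

lemma noiseOpN_fin_zero (μ : Ω → ℝ) (ρ : ℝ) (f : (Fin 0 → Ω) → ℝ) (x : Fin 0 → Ω) :
    noiseOpN μ ρ f x = condExp μ ∅ f x := by
  unfold noiseOpN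
  rw [univ_finset_fin_zero, Finset.sum_singleton]
  simp

lemma noiseOpN_nonneg (hμpos : ∀ x, 0 < μ x) (hμsum : ∑ x, μ x = 1)
    (hμs_le : ∀ x, μs ≤ μ x) (hρ1 : ρ ≤ 1) (hρμs : 0 ≤ ρ + (1 - ρ) * μs) :
    ∀ {n : ℕ} (f : (Fin n → Ω) → ℝ), (∀ x, 0 ≤ f x) → ∀ x, 0 ≤ noiseOpN μ ρ f x := by
  intro n
  induction n with
  | zero =>
    intro f hf x
    rw [noiseOpN_fin_zero]
    exact pExpct_nonneg μ (fun x => (hμpos x).le) (fun y => hf _)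
  | succ n ih =>
    intro f hf x
    rw [← Fin.cons_self_tail x, noiseOpN_cons μ hμsum]
    have hg : ∀ y : Ω, 0 ≤ noiseOpN μ ρ (fun z => f (Fin.cons y z)) (Fin.tail x) :=
      fun y => ih _ (fun z => hf _) _
    have hsum_ge : μ (x 0) * noiseOpN μ ρ (fun z => f (Fin.cons (x 0) z)) (Fin.tail x)
        ≤ ∑ b, μ b * noiseOpN μ ρ (fun z => f (Fin.cons b z)) (Fin.tail x) :=
      Finset.single_le_sum (fun y _ => mul_nonneg (hμpos y).le (hg y)) (Finset.mem_univ (x 0))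
    have h2 : (1 - ρ) * (μ (x 0) * noiseOpN μ ρ (fun z => f (Fin.cons (x 0) z)) (Fin.tail x))
        ≤ (1 - ρ) * ∑ b, μ b * noiseOpN μ ρ (fun z => f (Fin.cons b z)) (Fin.tail x) :=
      mul_le_mul_of_nonneg_left hsum_ge (by linarith)
    have h3 : 0 ≤ (ρ + (1 - ρ) * μ (x 0))
        * noiseOpN μ ρ (fun z => f (Fin.cons (x 0) z)) (Fin.tail x) :=
      mul_nonneg (by nlinarith [mul_nonneg (sub_nonneg.2 hρ1) (sub_nonneg.2 (hμs_le (x 0)))])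
        (hg (x 0))
    nlinarith

variable [Nonempty Ω]

lemma condExp_slice_le (hμsum : ∑ x, μ x = 1) (S : Finset (Fin n))
    (f : (Fin (n + 1) → Ω) → ℝ) (y : Ω) :
    pInfNorm (condExp μ S (fun z => f (Fin.cons y z)))
      ≤ pInfNorm (condExp μ (insert 0 (S.map (emb n))) f) := by
  apply pInfNorm_le
  intro x'
  rw [← condExp_insert_cons μ hμsum S f y x']
  exact abs_le_pInfNorm _ (Fin.cons y x')

lemma condExp_avg_le (S : Finset (Fin n)) (f : (Fin (n + 1) → Ω) → ℝ) :
    pInfNorm (condExp μ S (fun z => ∑ b, μ b * f (Fin.cons b z)))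
      ≤ pInfNorm (condExp μ (S.map (emb n)) f) := by
  apply pInfNorm_le
  intro x'
  have hy : condExp μ S (fun z => ∑ b, μ b * f (Fin.cons b z)) x'
      = condExp μ (S.map (emb n)) f (Fin.cons (Classical.arbitrary Ω) x') :=
    (condExp_sum μ (fun b => μ b) (fun b z => f (Fin.cons b z)) S x').trans
      (condExp_map_cons μ S f (Classical.arbitrary Ω) x').symm
  rw [hy]
  exact abs_le_pInfNorm _ _

lemma main_ind (hΩ : 2 ≤ Fintype.card Ω) (hμpos : ∀ x, 0 < μ x) (hμsum : ∑ x, μ x = 1)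
    (hμs_le : ∀ x, μs ≤ μ x) (hμs_mem : ∃ x, μ x = μs)
    (hρ0 : -(μs / (1 - μs)) ≤ ρ) (hρ1 : ρ ≤ 1)
    (hlam : lam = if 0 ≤ ρ then Real.log (ρ * (1 / μs) + 1 - ρ) / Real.log (1 / μs)
      else -(Real.log (1 - ρ) / Real.log (1 - μs))) :
    ∀ {n : ℕ} (f : (Fin n → Ω) → ℝ), (∀ x, 0 ≤ f x) → ∀ x,
      noiseOpN μ ρ f x ≤ ∏ S : Finset (Fin n),
        pInfNorm (condExp μ S f) ^ (lam ^ S.card * (1 - lam) ^ (n - S.card)) := by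
  have hs0 : 0 < μs := mus_pos hμpos hμs_mem
  have hs1 : μs < 1 := mus_lt_one hΩ hμpos hμsum hμs_le
  have hρm : -μs ≤ ρ * (1 - μs) := by
    have h2 : -μs / (1 - μs) ≤ ρ := by rw [neg_div]; exact hρ0
    exact (div_le_iff₀ (by linarith)).1 h2
  obtain ⟨hlam0, hlam1⟩ := lam_bounds hs0 hs1 hρm hρ1 hlam
  have hρμs : 0 ≤ ρ + (1 - ρ) * μs := by nlinarith [hρm]
  intro n
  induction n with
  | zero =>
    intro f hf x
    rw [noiseOpN_fin_zero, univ_finset_fin_zero, Finset.prod_singleton]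
    have he : lam ^ (∅ : Finset (Fin 0)).card
        * (1 - lam) ^ (0 - (∅ : Finset (Fin 0)).card) = 1 := by simp
    rw [he, Real.rpow_one]
    exact le_pInfNorm _ x
  | succ n ih =>
    intro f hf x
    rw [← Fin.cons_self_tail x]
    set g : Ω → ℝ := fun y => noiseOpN μ ρ (fun z => f (Fin.cons y z)) (Fin.tail x) with hgdef
    have hgnn : ∀ y, 0 ≤ g y :=
      fun y => noiseOpN_nonneg hμpos hμsum hμs_le hρ1 hρμs _ (fun z => hf _) _
    obtain ⟨y₀, hy₀⟩ := Finite.exists_max g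
    have hkey := key hΩ hμpos hμsum hμs_le hμs_mem hρ0 hρ1 hlam g hgnn hy₀ ⟨y₀, rfl⟩ (x 0)
    have hw'nn : ∀ S : Finset (Fin n), 0 ≤ lam ^ S.card * (1 - lam) ^ (n - S.card) :=
      fun S => mul_nonneg (pow_nonneg hlam0 _) (pow_nonneg (by linarith) _)
    have hMU : g y₀ ≤ ∏ S : Finset (Fin n),
        pInfNorm (condExp μ (insert 0 (S.map (emb n))) f)
          ^ (lam ^ S.card * (1 - lam) ^ (n - S.card)) := by
      refine (ih _ (fun z => hf _) (Fin.tail x)).trans ?_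
      refine Finset.prod_le_prod (fun S _ => Real.rpow_nonneg (pInfNorm_nonneg _) _)
        (fun S _ => ?_)
      exact Real.rpow_le_rpow (pInfNorm_nonneg _) (condExp_slice_le hμsum S f y₀) (hw'nn S)
    have hmnn : 0 ≤ ∑ b, μ b * g b :=
      Finset.sum_nonneg fun b _ => mul_nonneg (hμpos b).le (hgnn b)
    have hmV : ∑ b, μ b * g b ≤ ∏ S : Finset (Fin n),
        pInfNorm (condExp μ (S.map (emb n)) f)
          ^ (lam ^ S.card * (1 - lam) ^ (n - S.card)) := by
      have hlin : ∑ b, μ b * g b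
          = noiseOpN μ ρ (fun z => ∑ b, μ b * f (Fin.cons b z)) (Fin.tail x) :=
        (noiseOpN_sum μ ρ (fun b => μ b) (fun b z => f (Fin.cons b z)) (Fin.tail x)).symm
      rw [hlin]
      refine (ih _ (fun z => Finset.sum_nonneg fun b _ =>
        mul_nonneg (hμpos b).le (hf _)) (Fin.tail x)).trans ?_
      refine Finset.prod_le_prod (fun S _ => Real.rpow_nonneg (pInfNorm_nonneg _) _)
        (fun S _ => ?_)
      exact Real.rpow_le_rpow (pInfNorm_nonneg _) (condExp_avg_le S f) (hw'nn S)
    have hUnn : (0:ℝ) ≤ ∏ S : Finset (Fin n),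
        pInfNorm (condExp μ (insert 0 (S.map (emb n))) f)
          ^ (lam ^ S.card * (1 - lam) ^ (n - S.card)) :=
      Finset.prod_nonneg fun S _ => Real.rpow_nonneg (pInfNorm_nonneg _) _
    have hstep : g y₀ ^ lam * (∑ b, μ b * g b) ^ (1 - lam)
        ≤ (∏ S : Finset (Fin n), pInfNorm (condExp μ (insert 0 (S.map (emb n))) f)
            ^ (lam ^ S.card * (1 - lam) ^ (n - S.card))) ^ lam
          * (∏ S : Finset (Fin n), pInfNorm (condExp μ (S.map (emb n)) f)
            ^ (lam ^ S.card * (1 - lam) ^ (n - S.card))) ^ (1 - lam) := by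
      have h1 := Real.rpow_le_rpow (hgnn y₀) hMU hlam0
      have h2 := Real.rpow_le_rpow hmnn hmV (by linarith : (0:ℝ) ≤ 1 - lam)
      exact mul_le_mul h1 h2 (Real.rpow_nonneg hmnn _) (Real.rpow_nonneg hUnn _)
    calc noiseOpN μ ρ f (Fin.cons (x 0) (Fin.tail x))
        = ρ * g (x 0) + (1 - ρ) * ∑ b, μ b * g b :=
          noiseOpN_cons μ hμsum ρ f (x 0) (Fin.tail x)
      _ ≤ g y₀ ^ lam * (∑ b, μ b * g b) ^ (1 - lam) := hkey
      _ ≤ _ := hstep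
      _ = ∏ S : Finset (Fin (n + 1)), pInfNorm (condExp μ S f)
            ^ (lam ^ S.card * (1 - lam) ^ (n + 1 - S.card)) := by
        rw [prod_finset_succ (fun S : Finset (Fin (n + 1)) => pInfNorm (condExp μ S f)
          ^ (lam ^ S.card * (1 - lam) ^ (n + 1 - S.card)))]
        rw [← Real.finset_prod_rpow _ _
            (fun S _ => Real.rpow_nonneg (pInfNorm_nonneg _) _) lam,
          ← Real.finset_prod_rpow _ _
            (fun S _ => Real.rpow_nonneg (pInfNorm_nonneg _) _) (1 - lam),
          ← Finset.prod_mul_distrib]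
        refine Finset.prod_congr rfl fun S _ => ?_
        have hcard : S.card ≤ n := by
          have := S.card_le_univ
          simpa [Fintype.card_fin] using this
        have hA : lam ^ S.card * (1 - lam) ^ (n - S.card) * lam
            = lam ^ (S.card + 1) * (1 - lam) ^ (n - S.card) := by rw [pow_succ]; ring
        have hB : lam ^ S.card * (1 - lam) ^ (n - S.card) * (1 - lam)
            = lam ^ S.card * (1 - lam) ^ ((n - S.card) + 1) := by rw [pow_succ]; ring
        rw [← Real.rpow_mul (pInfNorm_nonneg _), ← Real.rpow_mul (pInfNorm_nonneg _), hA, hB,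
          card_map_emb, card_insert_map,
          show n + 1 - S.card = (n - S.card) + 1 by omega,
          show n + 1 - (S.card + 1) = n - S.card by omega]
        exact mul_comm _ _

end Main

end Stmt5Aux

theorem stmt5 {Ω : Type*} [Fintype Ω] [Nonempty Ω] (hΩ : 2 ≤ Fintype.card Ω)
    (μ : Ω → ℝ) (hμpos : ∀ x, 0 < μ x) (hμsum : ∑ x, μ x = 1)
    (μs : ℝ) (hμs_le : ∀ x, μs ≤ μ x) (hμs_mem : ∃ x, μ x = μs)
    (ρ lam : ℝ) (hρ0 : -(μs / (1 - μs)) ≤ ρ) (hρ1 : ρ ≤ 1)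
    (hlam : lam = if 0 ≤ ρ then Real.log (ρ * (1 / μs) + 1 - ρ) / Real.log (1 / μs)
      else -(Real.log (1 - ρ) / Real.log (1 - μs)))
    (n : ℕ) (f : (Fin n → Ω) → ℝ) (hf : ∀ x, 0 ≤ f x) :
    pInfNorm (noiseOpN μ ρ f) ≤
      ∏ S : Finset (Fin n),
        pInfNorm (condExp μ S f) ^ (lam ^ S.card * (1 - lam) ^ (n - S.card)) := by
  have hnn : ∀ x, 0 ≤ noiseOpN μ ρ f x := by
    have hs0 : 0 < μs := Stmt5Aux.mus_pos hμpos hμs_mem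
    have hs1 : μs < 1 := Stmt5Aux.mus_lt_one hΩ hμpos hμsum hμs_le
    have hρm : -μs ≤ ρ * (1 - μs) := by
      have h2 : -μs / (1 - μs) ≤ ρ := by rw [neg_div]; exact hρ0
      exact (div_le_iff₀ (by linarith)).1 h2
    exact Stmt5Aux.noiseOpN_nonneg hμpos hμsum hμs_le hρ1 (by nlinarith [hρm]) f hf
  apply Stmt5Aux.pInfNorm_le
  intro x
  rw [abs_of_nonneg (hnn x)]
  exact Stmt5Aux.main_ind hΩ hμpos hμsum hμs_le hμs_mem hρ0 hρ1 hlam f hf x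
end

section
/- Let λ ∈ (0,1), write k := 1/μ* and z := (k^λ − 1)/(k − 1) ∈ (0,1). Then for every nonnegative function f : Ω^n → ℝ it holds that ‖T_{√z} f‖_2^2 ≤ ∏_{S⊆{1,…,n}} ( ‖E(f|S)‖_2^2 )^{λ^{|S|}·(1−λ)^{n−|S|}}; that is, the noise stability Stab_z[f] := ‖T_{√z} f‖_2^2 is at most the geometric mean over the random subset S∼λ (each coordinate included independently with probability λ) of ‖E(f|S)‖_2^2. -/
open Finset

/-- The `q`-norm with respect to the product measure. -/
noncomputable def pqNorm {Ω : Type*} [Fintype Ω] (μ : Ω → ℝ) {n : ℕ}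
    (q : ℝ) (f : (Fin n → Ω) → ℝ) : ℝ :=
  (∑ x : Fin n → Ω, (∏ i, μ (x i)) * |f x| ^ q) ^ (1 / q)

section Abstract
variable {ι : Type*} [DecidableEq ι]

lemma myCardFacts {A S : Finset ι} {a : ι} (ha : a ∉ A) (hS : S ⊆ A) :
    (insert a S).card = S.card + 1 ∧
    (insert a A).card - S.card = (A.card - S.card) + 1 ∧
    (insert a A).card - (insert a S).card = A.card - S.card := by
  have haS : a ∉ S := fun h => ha (hS h)
  have h1 : (insert a S).card = S.card + 1 := Finset.card_insert_of_notMem haS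
  have h2 : (insert a A).card = A.card + 1 := Finset.card_insert_of_notMem ha
  have h3 : S.card ≤ A.card := Finset.card_le_card hS
  refine ⟨h1, ?_, ?_⟩ <;> omega

lemma myBinomSum (p : ℝ) (A : Finset ι) :
    ∑ S ∈ A.powerset, p ^ S.card * (1 - p) ^ (A.card - S.card) = 1 := by
  induction A using Finset.induction_on with
  | empty => simp
  | @insert a A ha ih =>
    rw [Finset.sum_powerset_insert ha]
    have e1 : ∑ S ∈ A.powerset, p ^ S.card * (1-p) ^ ((insert a A).card - S.card)
        = (∑ S ∈ A.powerset, p ^ S.card * (1-p) ^ (A.card - S.card)) * (1-p) := by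
      rw [Finset.sum_mul]
      refine Finset.sum_congr rfl fun S hS => ?_
      obtain ⟨h1, h2, h3⟩ := myCardFacts ha (Finset.mem_powerset.mp hS)
      rw [h2, pow_succ]; ring
    have e2 : ∑ S ∈ A.powerset,
          p ^ (insert a S).card * (1-p) ^ ((insert a A).card - (insert a S).card)
        = (∑ S ∈ A.powerset, p ^ S.card * (1-p) ^ (A.card - S.card)) * p := by
      rw [Finset.sum_mul]
      refine Finset.sum_congr rfl fun S hS => ?_
      obtain ⟨h1, h2, h3⟩ := myCardFacts ha (Finset.mem_powerset.mp hS)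
      have h4 : (insert a A).card - (S.card + 1) = A.card - S.card := by omega
      rw [h1, h4, pow_succ]; ring
    rw [e1, e2, ih]; ring
end Abstract

section Abstract2
variable {ι : Type*} [DecidableEq ι]

lemma myPairSum (r : ℝ) (A : Finset ι) : ∀ V : Finset ι → ℝ,
    ∑ S ∈ A.powerset, ∑ T ∈ A.powerset,
      (r ^ S.card * (1-r) ^ (A.card - S.card)) * (r ^ T.card * (1-r) ^ (A.card - T.card))
        * V (S ∩ T)
    = ∑ U ∈ A.powerset, (r^2) ^ U.card * (1 - r^2) ^ (A.card - U.card) * V U := by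
  induction A using Finset.induction_on with
  | empty => intro V; simp
  | @insert a A ha ih =>
    intro V
    have expand : ∀ g : Finset ι → Finset ι → ℝ,
        ∑ S ∈ (insert a A).powerset, ∑ T ∈ (insert a A).powerset, g S T
        = ∑ S ∈ A.powerset, ∑ T ∈ A.powerset,
            (g S T + g S (insert a T) + (g (insert a S) T + g (insert a S) (insert a T))) := by
      intro g
      have h1 : ∀ S, ∑ T ∈ (insert a A).powerset, g S T
          = ∑ T ∈ A.powerset, (g S T + g S (insert a T)) := fun S => by
        rw [Finset.sum_powerset_insert ha, ← Finset.sum_add_distrib]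
      rw [Finset.sum_powerset_insert ha, Finset.sum_congr rfl fun S _ => h1 S,
          Finset.sum_congr rfl fun S _ => h1 (insert a S), ← Finset.sum_add_distrib]
      exact Finset.sum_congr rfl fun S _ => by rw [← Finset.sum_add_distrib]
    rw [expand]
    have key : ∑ S ∈ A.powerset, ∑ T ∈ A.powerset,
        (((r ^ S.card * (1-r) ^ ((insert a A).card - S.card)) * (r ^ T.card * (1-r) ^ ((insert a A).card - T.card)) * V (S ∩ T)
         + (r ^ S.card * (1-r) ^ ((insert a A).card - S.card)) * (r ^ (insert a T).card * (1-r) ^ ((insert a A).card - (insert a T).card)) * V (S ∩ insert a T))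
         + ((r ^ (insert a S).card * (1-r) ^ ((insert a A).card - (insert a S).card)) * (r ^ T.card * (1-r) ^ ((insert a A).card - T.card)) * V (insert a S ∩ T)
         + (r ^ (insert a S).card * (1-r) ^ ((insert a A).card - (insert a S).card)) * (r ^ (insert a T).card * (1-r) ^ ((insert a A).card - (insert a T).card)) * V (insert a S ∩ insert a T)))
        = ∑ S ∈ A.powerset, ∑ T ∈ A.powerset,
          ((1 - r^2) * ((r ^ S.card * (1-r) ^ (A.card - S.card)) * (r ^ T.card * (1-r) ^ (A.card - T.card)) * V (S ∩ T))
           + r^2 * ((r ^ S.card * (1-r) ^ (A.card - S.card)) * (r ^ T.card * (1-r) ^ (A.card - T.card)) * V (insert a (S ∩ T)))) := by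
      refine Finset.sum_congr rfl fun S hS => Finset.sum_congr rfl fun T hT => ?_
      have hSA := Finset.mem_powerset.mp hS
      have hTA := Finset.mem_powerset.mp hT
      have haS : a ∉ S := fun h => ha (hSA h)
      have haT : a ∉ T := fun h => ha (hTA h)
      obtain ⟨hS1, hS2, _⟩ := myCardFacts ha hSA
      obtain ⟨hT1, hT2, _⟩ := myCardFacts ha hTA
      have hS4 : (insert a A).card - (S.card + 1) = A.card - S.card := by omega
      have hT4 : (insert a A).card - (T.card + 1) = A.card - T.card := by omega
      have i1 : insert a S ∩ T = S ∩ T := Finset.insert_inter_of_notMem haT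
      have i2 : S ∩ insert a T = S ∩ T := Finset.inter_insert_of_notMem haS
      have i3 : insert a S ∩ insert a T = insert a (S ∩ T) := by
        rw [Finset.insert_inter_of_mem (Finset.mem_insert_self a T), i2]
      rw [i1, i2, i3, hS1, hT1, hS2, hT2, hS4, hT4, pow_succ, pow_succ, pow_succ, pow_succ]
      ring
    rw [key, Finset.sum_powerset_insert ha]
    have split : ∀ X Y : Finset ι → Finset ι → ℝ,
        ∑ S ∈ A.powerset, ∑ T ∈ A.powerset, ((1-r^2) * X S T + r^2 * Y S T)
        = (1-r^2) * (∑ S ∈ A.powerset, ∑ T ∈ A.powerset, X S T)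
          + r^2 * (∑ S ∈ A.powerset, ∑ T ∈ A.powerset, Y S T) := by
      intro X Y
      rw [Finset.mul_sum, Finset.mul_sum, ← Finset.sum_add_distrib]
      refine Finset.sum_congr rfl fun S _ => ?_
      rw [Finset.mul_sum, Finset.mul_sum, ← Finset.sum_add_distrib]
    rw [split, ih V, ih (fun U => V (insert a U))]
    have e1 : ∑ U ∈ A.powerset, (r^2) ^ U.card * (1 - r^2) ^ ((insert a A).card - U.card) * V U
        = (1-r^2) * ∑ U ∈ A.powerset, (r^2) ^ U.card * (1 - r^2) ^ (A.card - U.card) * V U := by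
      rw [Finset.mul_sum]
      refine Finset.sum_congr rfl fun U hU => ?_
      obtain ⟨_, h2, _⟩ := myCardFacts ha (Finset.mem_powerset.mp hU)
      rw [h2, pow_succ]; ring
    have e2 : ∑ U ∈ A.powerset,
          (r^2) ^ (insert a U).card * (1 - r^2) ^ ((insert a A).card - (insert a U).card) * V (insert a U)
        = r^2 * ∑ U ∈ A.powerset, (r^2) ^ U.card * (1 - r^2) ^ (A.card - U.card) * V (insert a U) := by
      rw [Finset.mul_sum]
      refine Finset.sum_congr rfl fun U hU => ?_
      obtain ⟨h1, h2, _⟩ := myCardFacts ha (Finset.mem_powerset.mp hU)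
      have h4 : (insert a A).card - (U.card + 1) = A.card - U.card := by omega
      rw [h1, h4, pow_succ]; ring
    rw [e1, e2]
end Abstract2

section Abstract3
variable {ι : Type*} [DecidableEq ι]

lemma myRpowSum {α : Type*} {k : ℝ} (hk : 0 < k) (s : Finset α) (w : α → ℝ) :
    ∏ i ∈ s, k ^ (w i) = k ^ (∑ i ∈ s, w i) := by
  induction s using Finset.cons_induction with
  | empty => simp
  | cons a s ha ih => rw [Finset.prod_cons, Finset.sum_cons, Real.rpow_add hk, ih]

lemma myTwoPoint (k lam : ℝ) (hk : 1 < k) (hl0 : 0 < lam) (hl1 : lam < 1) :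
    ∀ a b : ℝ, 0 < b → b ≤ a → a ≤ k * b →
      ((k ^ lam - 1)/(k-1)) * a + (1 - (k ^ lam - 1)/(k-1)) * b ≤ a ^ lam * b ^ (1 - lam) := by
  intro a b hb hba hak
  have hk0 : (0:ℝ) < k := lt_trans one_pos hk
  have hk1 : k - 1 ≠ 0 := by linarith
  have ha : 0 < a := lt_of_lt_of_le hb hba
  set z := (k ^ lam - 1)/(k-1) with hzdef
  set t := a / b with htdef
  have ht1 : 1 ≤ t := (one_le_div hb).mpr hba
  have htk : t ≤ k := (div_le_iff₀ hb).mpr hak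
  have ht0 : 0 ≤ t := le_trans zero_le_one ht1
  set θ := (k - t)/(k-1) with hθdef
  have hθ0 : 0 ≤ θ := div_nonneg (by linarith) (by linarith)
  have hθ1 : 0 ≤ 1 - θ := by
    have : θ ≤ 1 := by rw [hθdef, div_le_one (by linarith)]; linarith
    linarith
  have hcc := (Real.concaveOn_rpow hl0.le hl1.le).2 (Set.mem_Ici.mpr zero_le_one)
    (Set.mem_Ici.mpr hk0.le) hθ0 hθ1 (by ring)
  simp only [smul_eq_mul] at hcc
  have hmix : θ * 1 + (1 - θ) * k = t := by
    rw [hθdef]; field_simp; ring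
  have hvals : θ * (1:ℝ) ^ lam + (1 - θ) * k ^ lam = z * t + (1 - z) := by
    rw [Real.one_rpow, hθdef, hzdef]; field_simp; ring
  rw [hmix, hvals] at hcc
  -- hcc : z * t + (1 - z) ≤ t ^ lam
  have hrhs : a ^ lam * b ^ (1 - lam) = t ^ lam * b := by
    have hab : a = t * b := by rw [htdef, div_mul_cancel₀ _ (ne_of_gt hb)]
    rw [hab, Real.mul_rpow ht0 hb.le, mul_assoc, ← Real.rpow_add hb]
    norm_num
  have hlhs : z * a + (1 - z) * b = (z * t + (1 - z)) * b := by
    have hab : a = t * b := by rw [htdef, div_mul_cancel₀ _ (ne_of_gt hb)]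
    rw [hab]; ring
  rw [hlhs, hrhs]
  exact mul_le_mul_of_nonneg_right hcc hb.le

lemma myMain (k lam z : ℝ) (hk1 : 1 < k) (hl0 : 0 < lam) (hl1 : lam < 1)
    (hz0 : 0 ≤ z) (hz1 : z ≤ 1)
    (htwo : ∀ a b : ℝ, 0 < b → b ≤ a → a ≤ k * b →
      z * a + (1 - z) * b ≤ a ^ lam * b ^ (1 - lam))
    (A : Finset ι) : ∀ V : Finset ι → ℝ, (∀ U, 0 < V U) →
    (∀ U i, V U ≤ V (insert i U)) → (∀ U i, V (insert i U) ≤ k * V U) →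
    ∑ U ∈ A.powerset, z ^ U.card * (1 - z) ^ (A.card - U.card) * V U
      ≤ ∏ U ∈ A.powerset, V U ^ (lam ^ U.card * (1 - lam) ^ (A.card - U.card)) := by
  have hk0 : (0:ℝ) < k := lt_trans one_pos hk1
  induction A using Finset.induction_on with
  | empty =>
    intro V hpos _ _
    simp [Real.rpow_one]
  | @insert a A ha ih =>
    intro V hpos hmono hrat
    set w : Finset ι → ℝ := fun U => lam ^ U.card * (1 - lam) ^ (A.card - U.card) with hw
    have hwpos : ∀ U, 0 < w U := fun U =>
      mul_pos (pow_pos hl0 _) (pow_pos (by linarith) _)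
    set Bs := ∏ U ∈ A.powerset, V U ^ (w U) with hBs
    set As := ∏ U ∈ A.powerset, V (insert a U) ^ (w U) with hAs
    have hBpos : 0 < Bs :=
      Finset.prod_pos fun U _ => Real.rpow_pos_of_pos (hpos U) _
    have hBA : Bs ≤ As :=
      Finset.prod_le_prod (fun U _ => (Real.rpow_pos_of_pos (hpos U) _).le)
        (fun U _ => Real.rpow_le_rpow (hpos U).le (hmono U a) (hwpos U).le)
    have hAkB : As ≤ k * Bs := by
      have step1 : As ≤ ∏ U ∈ A.powerset, (k * V U) ^ (w U) :=
        Finset.prod_le_prod (fun U _ => (Real.rpow_pos_of_pos (hpos _) _).le)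
          (fun U _ => Real.rpow_le_rpow (hpos _).le (hrat U a) (hwpos U).le)
      have step2 : ∏ U ∈ A.powerset, (k * V U) ^ (w U)
          = (∏ U ∈ A.powerset, k ^ (w U)) * Bs := by
        rw [hBs, ← Finset.prod_mul_distrib]
        exact Finset.prod_congr rfl fun U _ => Real.mul_rpow hk0.le (hpos U).le
      have step3 : ∏ U ∈ A.powerset, k ^ (w U) = k := by
        rw [myRpowSum hk0, myBinomSum lam A, Real.rpow_one]
      calc As ≤ _ := step1
        _ = _ := step2
        _ = k * Bs := by rw [step3]
    have hB : ∑ U ∈ A.powerset, z ^ U.card * (1 - z) ^ (A.card - U.card) * V U ≤ Bs :=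
      ih V hpos hmono hrat
    have hA : ∑ U ∈ A.powerset, z ^ U.card * (1 - z) ^ (A.card - U.card) * V (insert a U)
        ≤ As := by
      refine ih (fun U => V (insert a U)) (fun U => hpos _) (fun U i => ?_) (fun U i => ?_)
      · show V (insert a U) ≤ V (insert a (insert i U))
        rw [Finset.insert_comm a i]; exact hmono (insert a U) i
      · show V (insert a (insert i U)) ≤ k * V (insert a U)
        rw [Finset.insert_comm a i]; exact hrat (insert a U) i
    rw [Finset.sum_powerset_insert ha, Finset.prod_powerset_insert ha]
    have e1 : ∑ U ∈ A.powerset, z ^ U.card * (1 - z) ^ ((insert a A).card - U.card) * V U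
        = (1 - z) * ∑ U ∈ A.powerset, z ^ U.card * (1 - z) ^ (A.card - U.card) * V U := by
      rw [Finset.mul_sum]
      refine Finset.sum_congr rfl fun U hU => ?_
      obtain ⟨_, h2, _⟩ := myCardFacts ha (Finset.mem_powerset.mp hU)
      rw [h2, pow_succ]; ring
    have e2 : ∑ U ∈ A.powerset,
          z ^ (insert a U).card * (1 - z) ^ ((insert a A).card - (insert a U).card) * V (insert a U)
        = z * ∑ U ∈ A.powerset, z ^ U.card * (1 - z) ^ (A.card - U.card) * V (insert a U) := by
      rw [Finset.mul_sum]
      refine Finset.sum_congr rfl fun U hU => ?_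
      obtain ⟨h1, h2, _⟩ := myCardFacts ha (Finset.mem_powerset.mp hU)
      have h4 : (insert a A).card - (U.card + 1) = A.card - U.card := by omega
      rw [h1, h4, pow_succ]; ring
    have p1 : ∏ U ∈ A.powerset,
          V U ^ (lam ^ U.card * (1 - lam) ^ ((insert a A).card - U.card))
        = Bs ^ (1 - lam) := by
      rw [hBs, ← Real.finset_prod_rpow _ _
        (fun U _ => (Real.rpow_pos_of_pos (hpos U) _).le) (1 - lam)]
      refine Finset.prod_congr rfl fun U hU => ?_
      obtain ⟨_, h2, _⟩ := myCardFacts ha (Finset.mem_powerset.mp hU)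
      have : lam ^ U.card * (1 - lam) ^ ((insert a A).card - U.card) = w U * (1 - lam) := by
        rw [h2, hw, pow_succ]; ring
      rw [this, Real.rpow_mul (hpos U).le]
    have p2 : ∏ U ∈ A.powerset,
          V (insert a U) ^ (lam ^ (insert a U).card * (1 - lam) ^ ((insert a A).card - (insert a U).card))
        = As ^ lam := by
      rw [hAs, ← Real.finset_prod_rpow _ _
        (fun U _ => (Real.rpow_pos_of_pos (hpos _) _).le) lam]
      refine Finset.prod_congr rfl fun U hU => ?_
      obtain ⟨h1, h2, _⟩ := myCardFacts ha (Finset.mem_powerset.mp hU)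
      have h4 : (insert a A).card - (U.card + 1) = A.card - U.card := by omega
      have : lam ^ (insert a U).card * (1 - lam) ^ ((insert a A).card - (insert a U).card)
          = w U * lam := by
        rw [h1, h4, hw, pow_succ]; ring
      rw [this, Real.rpow_mul (hpos _).le]
    rw [e1, e2, p1, p2]
    have final := htwo As Bs hBpos hBA hAkB
    have h1z : (0:ℝ) ≤ 1 - z := by linarith
    calc (1 - z) * (∑ U ∈ A.powerset, z ^ U.card * (1 - z) ^ (A.card - U.card) * V U)
          + z * (∑ U ∈ A.powerset, z ^ U.card * (1 - z) ^ (A.card - U.card) * V (insert a U))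
        ≤ (1 - z) * Bs + z * As :=
          add_le_add (mul_le_mul_of_nonneg_left hB h1z) (mul_le_mul_of_nonneg_left hA hz0)
      _ ≤ As ^ lam * Bs ^ (1 - lam) := by linarith [final]
      _ = Bs ^ (1 - lam) * As ^ lam := mul_comm _ _
end Abstract3


section Concrete
variable {Ω : Type*} [Fintype Ω] (μ : Ω → ℝ) {n : ℕ}

lemma myWpos (hμ : ∀ x, 0 < μ x) (x : Fin n → Ω) : 0 < ∏ i, μ (x i) :=
  Finset.prod_pos fun i _ => hμ _

lemma mySumW (hμsum : ∑ x, μ x = 1) : ∑ x : Fin n → Ω, ∏ i, μ (x i) = 1 := by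
  classical
  rw [← Fintype.prod_sum (fun (_ : Fin n) (a : Ω) => μ a)]
  simp [hμsum]

lemma myFiber [DecidableEq Ω] (hμsum : ∑ x, μ x = 1) (i : Fin n) (c : Ω) :
    ∑ x ∈ Finset.univ.filter (fun x : Fin n → Ω => x i = c), ∏ j, μ (x j) = μ c := by
  classical
  rw [Finset.sum_filter]
  have h1 : ∀ x : Fin n → Ω, (if x i = c then (∏ j, μ (x j)) else 0)
      = ∏ j, (if j = i then (if x j = c then μ (x j) else 0) else μ (x j)) := by
    intro x
    by_cases h : x i = c
    · rw [if_pos h]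
      refine Finset.prod_congr rfl fun j _ => ?_
      by_cases hj : j = i
      · subst hj; simp [h]
      · simp [hj]
    · rw [if_neg h]
      refine (Finset.prod_eq_zero (Finset.mem_univ i) ?_).symm
      simp [h]
  rw [Finset.sum_congr rfl fun x _ => h1 x,
      ← Fintype.prod_sum (fun (j : Fin n) (a : Ω) =>
        if j = i then (if a = c then μ a else 0) else μ a)]
  have h2 : ∀ j : Fin n,
      (∑ a : Ω, if j = i then (if a = c then μ a else 0) else μ a)
      = if j = i then μ c else 1 := by
    intro j
    by_cases hj : j = i
    · simp [hj, Finset.sum_ite_eq' Finset.univ c μ]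
    · simp [hj, hμsum]
  rw [Finset.prod_congr rfl fun j _ => h2 j]
  simp [Finset.prod_ite_eq' Finset.univ i (fun _ => μ c)]

lemma myPwA (S : Finset (Fin n)) (x y : Fin n → Ω) :
    S.piecewise (S.piecewise x y) (S.piecewise y x) = x := by
  funext j
  by_cases h : j ∈ S
  · simp [Finset.piecewise_eq_of_mem _ _ _ h]
  · simp [Finset.piecewise_eq_of_notMem _ _ _ h]

lemma myPwW (S : Finset (Fin n)) (x y : Fin n → Ω) :
    (∏ i, μ (S.piecewise x y i)) * ∏ i, μ (S.piecewise y x i)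
      = (∏ i, μ (x i)) * ∏ i, μ (y i) := by
  rw [← Finset.prod_mul_distrib, ← Finset.prod_mul_distrib]
  refine Finset.prod_congr rfl fun i _ => ?_
  by_cases h : i ∈ S
  · simp [Finset.piecewise_eq_of_mem _ _ _ h]
  · simp [Finset.piecewise_eq_of_notMem _ _ _ h, mul_comm]

lemma mySwap (S : Finset (Fin n)) (F : (Fin n → Ω) → (Fin n → Ω) → ℝ) :
    ∑ p : (Fin n → Ω) × (Fin n → Ω),
      ((∏ i, μ (p.1 i)) * ∏ i, μ (p.2 i)) * F (S.piecewise p.1 p.2) (S.piecewise p.2 p.1)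
    = ∑ p : (Fin n → Ω) × (Fin n → Ω),
      ((∏ i, μ (p.1 i)) * ∏ i, μ (p.2 i)) * F p.1 p.2 := by
  classical
  have inv : Function.Involutive (fun p : (Fin n → Ω) × (Fin n → Ω) =>
      (S.piecewise p.1 p.2, S.piecewise p.2 p.1)) := fun p =>
    Prod.ext (myPwA S p.1 p.2) (myPwA S p.2 p.1)
  refine Fintype.sum_equiv (inv.toPerm _) _ _ fun p => ?_
  simp only [Function.Involutive.coe_toPerm]
  rw [myPwW]
end Concrete

section Concrete2
variable {Ω : Type*} [Fintype Ω] (μ : Ω → ℝ) {n : ℕ}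

lemma myAdj (hμsum : ∑ x, μ x = 1) (S : Finset (Fin n)) (φ ψ : (Fin n → Ω) → ℝ) :
    ∑ x : Fin n → Ω, (∏ i, μ (x i)) * (condExp μ S φ x * ψ x)
    = ∑ x : Fin n → Ω, (∏ i, μ (x i)) * (φ x * condExp μ S ψ x) := by
  have l1 : ∑ x : Fin n → Ω, (∏ i, μ (x i)) * (condExp μ S φ x * ψ x)
      = ∑ p : (Fin n → Ω) × (Fin n → Ω),
          ((∏ i, μ (p.1 i)) * ∏ i, μ (p.2 i)) * (φ (S.piecewise p.1 p.2) * ψ p.1) := by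
    rw [Fintype.sum_prod_type]
    refine Finset.sum_congr rfl fun x _ => ?_
    simp only [condExp, pExpct]
    rw [Finset.sum_mul, Finset.mul_sum]
    exact Finset.sum_congr rfl fun y _ => by ring
  have r1 : ∑ x : Fin n → Ω, (∏ i, μ (x i)) * (φ x * condExp μ S ψ x)
      = ∑ p : (Fin n → Ω) × (Fin n → Ω),
          ((∏ i, μ (p.1 i)) * ∏ i, μ (p.2 i)) * (φ p.1 * ψ (S.piecewise p.1 p.2)) := by
    rw [Fintype.sum_prod_type]
    refine Finset.sum_congr rfl fun x _ => ?_
    simp only [condExp, pExpct]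
    rw [Finset.mul_sum, Finset.mul_sum]
    exact Finset.sum_congr rfl fun y _ => by ring
  rw [l1, r1]
  have l2 : ∀ p : (Fin n → Ω) × (Fin n → Ω),
      ((∏ i, μ (p.1 i)) * ∏ i, μ (p.2 i)) * (φ (S.piecewise p.1 p.2) * ψ p.1)
      = ((∏ i, μ (p.1 i)) * ∏ i, μ (p.2 i)) *
        (φ (S.piecewise p.1 p.2) * ψ (S.piecewise (S.piecewise p.1 p.2) (S.piecewise p.2 p.1))) := by
    intro p; rw [myPwA]
  rw [Finset.sum_congr rfl fun p _ => l2 p]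
  exact mySwap μ S (fun a b => φ a * ψ (S.piecewise a b))

lemma myTow (hμsum : ∑ x, μ x = 1) (S T : Finset (Fin n)) (f : (Fin n → Ω) → ℝ) :
    condExp μ T (condExp μ S f) = condExp μ (S ∩ T) f := by
  funext x
  have l1 : condExp μ T (condExp μ S f) x
      = ∑ p : (Fin n → Ω) × (Fin n → Ω), ((∏ i, μ (p.1 i)) * ∏ i, μ (p.2 i)) *
          f ((S ∩ T).piecewise x (S.piecewise p.1 p.2)) := by
    simp only [condExp, pExpct]
    rw [Fintype.sum_prod_type]
    refine Finset.sum_congr rfl fun y _ => ?_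
    rw [Finset.mul_sum]
    refine Finset.sum_congr rfl fun y' _ => ?_
    have harg : S.piecewise (T.piecewise x y) y' = (S ∩ T).piecewise x (S.piecewise y y') := by
      funext j
      by_cases hS : j ∈ S <;> by_cases hT : j ∈ T <;>
        simp [Finset.piecewise, hS, hT]
    rw [harg]; ring
  rw [l1]
  have l2 : ∀ p : (Fin n → Ω) × (Fin n → Ω),
      ((∏ i, μ (p.1 i)) * ∏ i, μ (p.2 i)) * f ((S ∩ T).piecewise x (S.piecewise p.1 p.2))
      = ((∏ i, μ (p.1 i)) * ∏ i, μ (p.2 i)) *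
        (fun a _ => f ((S ∩ T).piecewise x a)) (S.piecewise p.1 p.2) (S.piecewise p.2 p.1) := by
    intro p; rfl
  rw [Finset.sum_congr rfl fun p _ => l2 p, mySwap μ S (fun a _ => f ((S ∩ T).piecewise x a))]
  simp only [condExp, pExpct]
  rw [Fintype.sum_prod_type]
  refine Finset.sum_congr rfl fun y _ => ?_
  have l3 : ∀ b : Fin n → Ω,
      ((∏ i, μ (y i)) * ∏ i, μ (b i)) * f ((S ∩ T).piecewise x y)
      = (∏ i, μ (b i)) * ((∏ i, μ (y i)) * f ((S ∩ T).piecewise x y)) := fun b => by ring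
  rw [Finset.sum_congr rfl fun b _ => l3 b, ← Finset.sum_mul, mySumW μ hμsum, one_mul]

lemma myIpSelf (hμsum : ∑ x, μ x = 1) (S T : Finset (Fin n)) (f : (Fin n → Ω) → ℝ) :
    ∑ x : Fin n → Ω, (∏ i, μ (x i)) * (condExp μ S f x * condExp μ T f x)
    = ∑ x : Fin n → Ω, (∏ i, μ (x i)) *
        (condExp μ (S ∩ T) f x * condExp μ (S ∩ T) f x) := by
  calc ∑ x : Fin n → Ω, (∏ i, μ (x i)) * (condExp μ S f x * condExp μ T f x)
      = ∑ x : Fin n → Ω, (∏ i, μ (x i)) * (f x * condExp μ S (condExp μ T f) x) :=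
        myAdj μ hμsum S f (condExp μ T f)
    _ = ∑ x : Fin n → Ω, (∏ i, μ (x i)) * (f x * condExp μ (S ∩ T) f x) := by
        rw [myTow μ hμsum T S, Finset.inter_comm T S]
    _ = ∑ x : Fin n → Ω, (∏ i, μ (x i)) *
          (f x * condExp μ (S ∩ T) (condExp μ (S ∩ T) f) x) := by
        rw [myTow μ hμsum (S ∩ T) (S ∩ T), Finset.inter_self]
    _ = ∑ x : Fin n → Ω, (∏ i, μ (x i)) *
          (condExp μ (S ∩ T) f x * condExp μ (S ∩ T) f x) :=
        (myAdj μ hμsum (S ∩ T) f (condExp μ (S ∩ T) f)).symm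

lemma myCondNonneg (hμpos : ∀ a, 0 < μ a) (S : Finset (Fin n)) (f : (Fin n → Ω) → ℝ)
    (hf : ∀ x, 0 ≤ f x) (x : Fin n → Ω) : 0 ≤ condExp μ S f x :=
  Finset.sum_nonneg fun y _ => mul_nonneg (myWpos μ hμpos y).le (hf _)

lemma myCondCongr (S : Finset (Fin n)) (f : (Fin n → Ω) → ℝ) (x x' : Fin n → Ω)
    (h : ∀ j ∈ S, x j = x' j) : condExp μ S f x = condExp μ S f x' := by
  simp only [condExp, pExpct]
  refine Finset.sum_congr rfl fun y _ => ?_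
  have hpc : S.piecewise x y = S.piecewise x' y :=
    S.piecewise_congr h (fun _ _ => rfl)
  rw [hpc]

lemma myPoint (hμpos : ∀ a, 0 < μ a) (hμsum : ∑ x, μ x = 1) (μs : ℝ)
    (hμs_le : ∀ a, μs ≤ μ a) (f : (Fin n → Ω) → ℝ) (hf : ∀ x, 0 ≤ f x)
    (U : Finset (Fin n)) (i : Fin n) (hi : i ∉ U) (x : Fin n → Ω)
    (hμs0 : 0 ≤ μs) :
    μs * condExp μ (insert i U) f x
      ≤ condExp μ U (condExp μ (insert i U) f) x := by
  classical
  set h := condExp μ (insert i U) f with hh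
  have hnn : ∀ y, 0 ≤ h y := myCondNonneg μ hμpos _ f hf
  have step1 : ∑ y ∈ Finset.univ.filter (fun y : Fin n → Ω => y i = x i),
        (∏ j, μ (y j)) * h (U.piecewise x y)
      ≤ condExp μ U h x := by
    simp only [condExp, pExpct]
    refine Finset.sum_le_sum_of_subset_of_nonneg (Finset.filter_subset _ _)
      fun y _ _ => mul_nonneg (myWpos μ hμpos y).le (hnn _)
  have step2 : ∀ y ∈ Finset.univ.filter (fun y : Fin n → Ω => y i = x i),
      (∏ j, μ (y j)) * h (U.piecewise x y) = (∏ j, μ (y j)) * h x := by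
    intro y hy
    rw [Finset.mem_filter] at hy
    congr 1
    refine myCondCongr μ (insert i U) f _ _ fun j hj => ?_
    rcases Finset.mem_insert.mp hj with hj | hj
    · subst hj; rw [Finset.piecewise_eq_of_notMem _ _ _ hi, hy.2]
    · rw [Finset.piecewise_eq_of_mem _ _ _ hj]
  calc μs * h x ≤ μ (x i) * h x := mul_le_mul_of_nonneg_right (hμs_le _) (hnn x)
    _ = ∑ y ∈ Finset.univ.filter (fun y : Fin n → Ω => y i = x i),
          (∏ j, μ (y j)) * h x := by rw [← Finset.sum_mul, myFiber μ hμsum i (x i)]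
    _ = ∑ y ∈ Finset.univ.filter (fun y : Fin n → Ω => y i = x i),
          (∏ j, μ (y j)) * h (U.piecewise x y) := (Finset.sum_congr rfl step2).symm
    _ ≤ condExp μ U h x := step1

end Concrete2

section CS
variable {α : Type*} [Fintype α]

lemma myCS (w a b : α → ℝ) (hw : ∀ x, 0 ≤ w x) :
    (∑ x, w x * (a x * b x)) ^ 2
      ≤ (∑ x, w x * (a x * a x)) * (∑ x, w x * (b x * b x)) := by
  calc (∑ x, w x * (a x * b x)) ^ 2
      = (∑ x, (Real.sqrt (w x) * a x) * (Real.sqrt (w x) * b x)) ^ 2 := by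
        congr 1
        refine Finset.sum_congr rfl fun x _ => ?_
        rw [show (Real.sqrt (w x) * a x) * (Real.sqrt (w x) * b x)
            = (Real.sqrt (w x) * Real.sqrt (w x)) * (a x * b x) by ring,
          Real.mul_self_sqrt (hw x)]
    _ ≤ (∑ x, (Real.sqrt (w x) * a x) ^ 2) * (∑ x, (Real.sqrt (w x) * b x) ^ 2) :=
        Finset.sum_mul_sq_le_sq_mul_sq _ _ _
    _ = (∑ x, w x * (a x * a x)) * (∑ x, w x * (b x * b x)) := by
        congr 1 <;> refine Finset.sum_congr rfl fun x _ => ?_ <;>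
          rw [mul_pow, Real.sq_sqrt (hw x)] <;> ring
end CS

section PQ
variable {Ω : Type*} [Fintype Ω] (μ : Ω → ℝ) {n : ℕ}

lemma myPqSq (hμpos : ∀ a, 0 < μ a) (g : (Fin n → Ω) → ℝ) :
    pqNorm μ 2 g ^ 2 = ∑ x : Fin n → Ω, (∏ i, μ (x i)) * (g x * g x) := by
  unfold pqNorm
  have h1 : ∀ x : Fin n → Ω, (∏ i, μ (x i)) * |g x| ^ (2:ℝ)
      = (∏ i, μ (x i)) * (g x * g x) := by
    intro x
    rw [show ((2:ℝ) = ((2:ℕ):ℝ)) by norm_num, Real.rpow_natCast, sq_abs, sq]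
  rw [Finset.sum_congr rfl fun x _ => h1 x]
  have hs : 0 ≤ ∑ x : Fin n → Ω, (∏ i, μ (x i)) * (g x * g x) :=
    Finset.sum_nonneg fun x _ => mul_nonneg (myWpos μ hμpos x).le (mul_self_nonneg _)
  rw [← Real.rpow_natCast ((∑ x : Fin n → Ω, (∏ i, μ (x i)) * (g x * g x)) ^ (1/(2:ℝ))) 2,
    ← Real.rpow_mul hs]
  norm_num
end PQ


theorem stmt6 {Ω : Type*} [Fintype Ω] (hΩ : 2 ≤ Fintype.card Ω)
    (μ : Ω → ℝ) (hμpos : ∀ x, 0 < μ x) (hμsum : ∑ x, μ x = 1)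
    (μs : ℝ) (hμs_le : ∀ x, μs ≤ μ x) (hμs_mem : ∃ x, μ x = μs)
    (lam k z : ℝ) (hlam0 : 0 < lam) (hlam1 : lam < 1)
    (hk : k = 1 / μs) (hz : z = (k ^ lam - 1) / (k - 1))
    (n : ℕ) (f : (Fin n → Ω) → ℝ) (hf : ∀ x, 0 ≤ f x) :
    (0 < z ∧ z < 1) ∧
      pqNorm μ 2 (noiseOpN μ (Real.sqrt z) f) ^ 2 ≤
        ∏ S : Finset (Fin n),
          (pqNorm μ 2 (condExp μ S f) ^ 2) ^ (lam ^ S.card * (1 - lam) ^ (n - S.card)) := by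
  classical
  obtain ⟨x₀, hx₀⟩ := hμs_mem
  have hμs0 : 0 < μs := hx₀ ▸ hμpos x₀
  have hcard : (2:ℝ) ≤ (Fintype.card Ω : ℝ) := by exact_mod_cast hΩ
  have hcs : (Fintype.card Ω : ℝ) * μs ≤ 1 := by
    have h2 : ∀ x ∈ (univ : Finset Ω), μs ≤ μ x := fun x _ => hμs_le x
    have h3 := Finset.card_nsmul_le_sum (univ : Finset Ω) μ μs h2
    rw [hμsum] at h3
    simpa [nsmul_eq_mul, Finset.card_univ] using h3
  have hμs1 : μs < 1 := by nlinarith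
  have hk0 : 0 < k := by rw [hk]; positivity
  have hk1 : 1 < k := by rw [hk]; exact (one_lt_div hμs0).mpr hμs1
  have hkl1 : 1 < k ^ lam := by
    have h := Real.rpow_lt_rpow_of_exponent_lt hk1 hlam0
    rwa [Real.rpow_zero] at h
  have hklk : k ^ lam < k := by
    have h := Real.rpow_lt_rpow_of_exponent_lt hk1 hlam1
    rwa [Real.rpow_one] at h
  have hz0 : 0 < z := by rw [hz]; exact div_pos (by linarith) (by linarith)
  have hz1 : z < 1 := by rw [hz, div_lt_one (by linarith)]; linarith
  refine ⟨⟨hz0, hz1⟩, ?_⟩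
  have hWpos : ∀ x : Fin n → Ω, 0 < ∏ i, μ (x i) := myWpos μ hμpos
  by_cases hEf : pExpct μ f = 0
  · -- f is identically zero
    have hEf' : ∑ x : Fin n → Ω, (∏ i, μ (x i)) * f x = 0 := hEf
    have hf0 : ∀ x, f x = 0 := by
      intro x
      have hterms : ∀ y ∈ (univ : Finset (Fin n → Ω)), 0 ≤ (∏ i, μ (y i)) * f y :=
        fun y _ => mul_nonneg (hWpos y).le (hf y)
      have h4 := (Finset.sum_eq_zero_iff_of_nonneg hterms).mp hEf' x (Finset.mem_univ x)
      exact (mul_eq_zero.mp h4).resolve_left (ne_of_gt (hWpos x))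
    have hce : ∀ (S : Finset (Fin n)) (x : Fin n → Ω), condExp μ S f x = 0 := by
      intro S x
      simp only [condExp, pExpct, hf0, mul_zero, Finset.sum_const_zero]
    have hno : ∀ x, noiseOpN μ (Real.sqrt z) f x = 0 := by
      intro x
      simp only [noiseOpN, hce, mul_zero, Finset.sum_const_zero]
    have hpq0 : ∀ g : (Fin n → Ω) → ℝ, (∀ x, g x = 0) → pqNorm μ 2 g = 0 := by
      intro g hg
      unfold pqNorm
      have h5 : ∀ x : Fin n → Ω, (∏ i, μ (x i)) * |g x| ^ (2:ℝ) = 0 := by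
        intro x
        rw [hg, abs_zero, Real.zero_rpow (by norm_num : (2:ℝ) ≠ 0), mul_zero]
      rw [Finset.sum_congr rfl fun x _ => h5 x, Finset.sum_const_zero,
        Real.zero_rpow (by norm_num : 1/(2:ℝ) ≠ 0)]
    rw [hpq0 _ hno, zero_pow (by norm_num : 2 ≠ 0)]
    exact Finset.prod_nonneg fun S _ => Real.rpow_nonneg (sq_nonneg _) _
  · have hEfpos : 0 < pExpct μ f :=
      lt_of_le_of_ne
        (Finset.sum_nonneg fun x _ => mul_nonneg (hWpos x).le (hf x)) (Ne.symm hEf)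
    set V : Finset (Fin n) → ℝ := fun U =>
      ∑ x : Fin n → Ω, (∏ i, μ (x i)) * (condExp μ U f x * condExp μ U f x) with hV
    have hVnn : ∀ U, 0 ≤ V U := fun U => Finset.sum_nonneg fun x _ =>
      mul_nonneg (hWpos x).le (mul_self_nonneg _)
    have hgram : ∀ S T : Finset (Fin n),
        ∑ x : Fin n → Ω, (∏ i, μ (x i)) * (condExp μ S f x * condExp μ T f x)
          = V (S ∩ T) := fun S T => myIpSelf μ hμsum S T f
    have hkey : ∀ (U : Finset (Fin n)) (i : Fin n),
        ∑ x : Fin n → Ω, (∏ j, μ (x j)) *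
          (condExp μ (insert i U) f x * condExp μ U f x) = V U := by
      intro U i
      rw [hgram (insert i U) U, Finset.inter_eq_right.mpr (Finset.subset_insert i U)]
    have hmono : ∀ (U : Finset (Fin n)) (i : Fin n), V U ≤ V (insert i U) := by
      intro U i
      have hcs2 := myCS (fun x : Fin n → Ω => ∏ j, μ (x j))
        (condExp μ (insert i U) f) (condExp μ U f) (fun x => (hWpos x).le)
      rw [hkey U i] at hcs2
      rcases (hVnn U).eq_or_lt with h0 | h0
      · rw [← h0]; exact hVnn _
      · rw [sq] at hcs2
        exact le_of_mul_le_mul_right hcs2 h0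
    have hchain : ∀ U : Finset (Fin n), V ∅ ≤ V U := by
      intro U
      induction U using Finset.induction_on with
      | empty => exact le_rfl
      | @insert a s ha ih => exact le_trans ih (hmono s a)
    have hVempty : V ∅ = pExpct μ f * pExpct μ f := by
      have hce : ∀ x : Fin n → Ω, condExp μ (∅ : Finset (Fin n)) f x = pExpct μ f := by
        intro x
        simp [condExp, Finset.piecewise_empty]
      calc V ∅ = ∑ x : Fin n → Ω, (∏ i, μ (x i)) * (pExpct μ f * pExpct μ f) := by
            refine Finset.sum_congr rfl fun x _ => ?_
            rw [hce x]
        _ = (∑ x : Fin n → Ω, ∏ i, μ (x i)) * (pExpct μ f * pExpct μ f) := by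
            rw [← Finset.sum_mul]
        _ = pExpct μ f * pExpct μ f := by rw [mySumW μ hμsum, one_mul]
    have hVpos : ∀ U, 0 < V U := fun U =>
      lt_of_lt_of_le (hVempty ▸ mul_pos hEfpos hEfpos) (hchain U)
    have hrat : ∀ (U : Finset (Fin n)) (i : Fin n), V (insert i U) ≤ k * V U := by
      intro U i
      by_cases hi : i ∈ U
      · rw [Finset.insert_eq_self.mpr hi]
        nlinarith [hVnn U, hk1]
      · have htow : condExp μ U (condExp μ (insert i U) f) = condExp μ U f := by
          rw [myTow μ hμsum (insert i U) U,
            Finset.inter_eq_right.mpr (Finset.subset_insert i U)]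
        have hnn := myCondNonneg μ hμpos (insert i U) f hf
        have hpt : ∀ x, condExp μ (insert i U) f x ≤ k * condExp μ U f x := by
          intro x
          have h1 := myPoint μ hμpos hμsum μs hμs_le f hf U i hi x hμs0.le
          rw [htow] at h1
          have h2 := mul_le_mul_of_nonneg_left h1 (one_div_pos.mpr hμs0).le
          rw [hk]
          calc condExp μ (insert i U) f x
              = (1/μs) * (μs * condExp μ (insert i U) f x) := by field_simp
            _ ≤ (1/μs) * condExp μ U f x := h2
        calc V (insert i U)
            ≤ ∑ x : Fin n → Ω, (∏ j, μ (x j)) *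
                (condExp μ (insert i U) f x * (k * condExp μ U f x)) :=
              Finset.sum_le_sum fun x _ =>
                mul_le_mul_of_nonneg_left
                  (mul_le_mul_of_nonneg_left (hpt x) (hnn x)) (hWpos x).le
          _ = k * ∑ x : Fin n → Ω, (∏ j, μ (x j)) *
                (condExp μ (insert i U) f x * condExp μ U f x) := by
              rw [Finset.mul_sum]
              exact Finset.sum_congr rfl fun x _ => by ring
          _ = k * V U := by rw [hkey U i]
    -- two point inequality
    have htwo := myTwoPoint k lam hk1 hlam0 hlam1
    rw [← hz] at htwo
    -- expansion
    have hρ : Real.sqrt z ^ 2 = z := Real.sq_sqrt hz0.le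
    have hexp : ∑ x : Fin n → Ω, (∏ i, μ (x i)) *
          (noiseOpN μ (Real.sqrt z) f x * noiseOpN μ (Real.sqrt z) f x)
        = ∑ S : Finset (Fin n), ∑ T : Finset (Fin n),
            (Real.sqrt z ^ S.card * (1 - Real.sqrt z) ^ (n - S.card)) *
              (Real.sqrt z ^ T.card * (1 - Real.sqrt z) ^ (n - T.card)) * V (S ∩ T) := by
      have e1 : ∀ x : Fin n → Ω, (∏ i, μ (x i)) *
            (noiseOpN μ (Real.sqrt z) f x * noiseOpN μ (Real.sqrt z) f x)
          = ∑ S : Finset (Fin n), ∑ T : Finset (Fin n),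
              (Real.sqrt z ^ S.card * (1 - Real.sqrt z) ^ (n - S.card)) *
                (Real.sqrt z ^ T.card * (1 - Real.sqrt z) ^ (n - T.card)) *
                ((∏ i, μ (x i)) * (condExp μ S f x * condExp μ T f x)) := by
        intro x
        simp only [noiseOpN]
        rw [Finset.sum_mul_sum, Finset.mul_sum]
        refine Finset.sum_congr rfl fun S _ => ?_
        rw [Finset.mul_sum]
        exact Finset.sum_congr rfl fun T _ => by ring
      rw [Finset.sum_congr rfl fun x _ => e1 x]
      rw [Finset.sum_comm]
      refine Finset.sum_congr rfl fun S _ => ?_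
      rw [Finset.sum_comm]
      refine Finset.sum_congr rfl fun T _ => ?_
      rw [← Finset.mul_sum, hgram S T]
    have hps := myPairSum (Real.sqrt z) (univ : Finset (Fin n)) V
    rw [Finset.powerset_univ, Finset.card_univ, Fintype.card_fin, hρ] at hps
    have hmain := myMain k lam z hk1 hlam0 hlam1 hz0.le hz1.le htwo
      (univ : Finset (Fin n)) V hVpos hmono hrat
    rw [Finset.powerset_univ, Finset.card_univ, Fintype.card_fin] at hmain
    have hVpq : ∀ S : Finset (Fin n), pqNorm μ 2 (condExp μ S f) ^ 2 = V S := by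
      intro S
      rw [myPqSq μ hμpos (condExp μ S f), hV]
    calc pqNorm μ 2 (noiseOpN μ (Real.sqrt z) f) ^ 2
        = ∑ x : Fin n → Ω, (∏ i, μ (x i)) *
            (noiseOpN μ (Real.sqrt z) f x * noiseOpN μ (Real.sqrt z) f x) :=
          myPqSq μ hμpos _
      _ = ∑ S : Finset (Fin n), ∑ T : Finset (Fin n),
            (Real.sqrt z ^ S.card * (1 - Real.sqrt z) ^ (n - S.card)) *
              (Real.sqrt z ^ T.card * (1 - Real.sqrt z) ^ (n - T.card)) * V (S ∩ T) := hexp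
      _ = ∑ U : Finset (Fin n), z ^ U.card * (1 - z) ^ (n - U.card) * V U := hps
      _ ≤ ∏ U : Finset (Fin n), V U ^ (lam ^ U.card * (1 - lam) ^ (n - U.card)) := hmain
      _ = ∏ S : Finset (Fin n),
            (pqNorm μ 2 (condExp μ S f) ^ 2) ^ (lam ^ S.card * (1 - lam) ^ (n - S.card)) := by
          exact Finset.prod_congr rfl fun S _ => by rw [hVpq S]
end

section
/- Let q ∈ [2,∞) be real, ρ ∈ (0,1), and set λ := ln( μ*·(1+ρ·(1/μ*−1))^q + (1−μ*)·(1−ρ)^q ) / ((q−1)·ln(1/μ*)). For any probability distribution ν on Ω, writing ν T_ρ := ρ·ν + (1−ρ)·μ, it holds that D_q(ν T_ρ ‖ μ) ≤ λ · D_q(ν ‖ μ), with equality if and only if ν = μ or ν is the point mass at some x* with μ(x*) = μ*. -/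
open Finset
open scoped Classical

lemma young_lt {w1 w2 X Y : ℝ} (hw1 : 0 < w1) (hw2 : 0 < w2) (hw : w1 + w2 = 1)
    (hX : 0 < X) (hY : 0 < Y) (hXY : X ≠ Y) : X ^ w1 * Y ^ w2 < w1 * X + w2 * Y := by
  have hne : Real.log X ≠ Real.log Y := fun h =>
    hXY (Real.log_injOn_pos (Set.mem_Ioi.2 hX) (Set.mem_Ioi.2 hY) h)
  have h := strictConvexOn_exp.2 (Set.mem_univ (Real.log X)) (Set.mem_univ (Real.log Y))
      hne hw1 hw2 hw
  simp only [smul_eq_mul] at h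
  rw [Real.exp_log hX, Real.exp_log hY] at h
  calc X ^ w1 * Y ^ w2 = Real.exp (Real.log X * w1) * Real.exp (Real.log Y * w2) := by
        rw [Real.rpow_def_of_pos hX, Real.rpow_def_of_pos hY]
    _ = Real.exp (w1 * Real.log X + w2 * Real.log Y) := by rw [← Real.exp_add]; ring_nf
    _ < w1 * X + w2 * Y := h

/-- Pure polynomial core of the second-derivative positivity. Here `p2` stands for
`σ^(q-2)`, `t1` for `τ^(q-1)`, `σ = D + τ`. -/
lemma quadpos (q D τ p2 t1 P : ℝ) (hD : 0 < D) (hτ : 0 < τ) (hP : 0 < P) (hq : 0 < q)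
    (hq1 : 1 ≤ q) (hp2 : 0 < p2) (ht1 : 0 < t1)
    (hV : 0 < p2*(D+τ)*(D+τ) - t1*τ)
    (hY : 0 < p2*(D+τ)*(D+τ) - q*(D+τ)*t1 + (q-1)*(t1*τ)) :
    0 < (P + q*D*(p2*(D+τ)) + q*(q-1)*D^2*p2) * (P + (p2*(D+τ)*(D+τ) - t1*τ))
        - (P + q*D*(p2*(D+τ))) * (P + q*D*(p2*(D+τ))) := by
  set V : ℝ := p2*(D+τ)*(D+τ) - t1*τ with hVdef
  set V1 : ℝ := q*D*(p2*(D+τ)) with hV1def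
  set G2 : ℝ := q*(q-1)*D^2*p2 with hG2def
  have hV1pos : 0 < V1 := by simp only [hV1def]; positivity
  have hq1' : (0:ℝ) ≤ q - 1 := by linarith
  have hG2pos : 0 ≤ G2 := by
    simp only [hG2def]
    exact mul_nonneg (mul_nonneg (mul_nonneg hq.le hq1') (sq_nonneg D)) hp2.le
  have hid : (V1+G2)*V - V1*V1 = q*D*p2*τ*(p2*(D+τ)*(D+τ) - q*(D+τ)*t1 + (q-1)*(t1*τ)) := by
    simp only [hVdef, hV1def, hG2def]
    ring
  have hidpos : 0 < (V1+G2)*V - V1*V1 := by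
    rw [hid]
    exact mul_pos (mul_pos (mul_pos (mul_pos hq hD) hp2) hτ) hY
  have hsub : 0 ≤ V + G2 - V1 := by
    have s0 : V1^2 ≤ (V1+G2)*V := by rw [pow_two]; linarith
    have s1 : V1 ≤ Real.sqrt ((V1+G2)*V) :=
      calc V1 = Real.sqrt (V1^2) := (Real.sqrt_sq hV1pos.le).symm
        _ ≤ Real.sqrt ((V1+G2)*V) := Real.sqrt_le_sqrt s0
    have s2 : Real.sqrt ((V1+G2)*V) = Real.sqrt (V1+G2) * Real.sqrt V :=
      Real.sqrt_mul (by linarith) _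
    have s3 : Real.sqrt (V1+G2) * Real.sqrt V * 2 ≤ (V1+G2) + V := by
      nlinarith [sq_nonneg (Real.sqrt (V1+G2) - Real.sqrt V),
        Real.sq_sqrt (show (0:ℝ) ≤ V1+G2 by linarith),
        Real.sq_sqrt hV.le]
    linarith
  have h8 : 0 ≤ P*(V + G2 - V1) := mul_nonneg hP.le hsub
  have expand : (P + V1 + G2) * (P + V) - (P + V1) * (P + V1)
      = P*(V + G2 - V1) + ((V1+G2)*V - V1*V1) := by ring
  rw [expand]
  exact add_pos_of_nonneg_of_pos h8 hidpos

lemma keyC (q ρ L : ℝ) (hq : 2 ≤ q) (hρ0 : 0 < ρ) (hρ1 : ρ < 1) (hL : 0 < L) :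
    StrictConvexOn ℝ (Set.Icc 0 L)
      (fun u => Real.log ((1-ρ)^q * (Real.exp u - 1) + (ρ * Real.exp u + (1-ρ))^q) - u) := by
  set τ := 1 - ρ with hτdef
  have hτ : 0 < τ := by simp only [hτdef]; linarith
  have hq1 : (1:ℝ) < q := by linarith
  have hq0 : (0:ℝ) < q := by linarith
  have hq10 : (0:ℝ) < q - 1 := by linarith
  have hσpos : ∀ u : ℝ, 0 < ρ * Real.exp u + τ := fun u => by
    have := Real.exp_pos u; nlinarith
  set W : ℝ → ℝ := fun u => τ^q * (Real.exp u - 1) + (ρ * Real.exp u + τ)^q with hW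
  set N : ℝ → ℝ := fun u => τ^q * Real.exp u + q*ρ*Real.exp u*(ρ * Real.exp u + τ)^(q-1)
    with hN
  have hWpos : ∀ u : ℝ, 0 ≤ u → 0 < W u := by
    intro u hu
    have h1 : 1 ≤ Real.exp u := Real.one_le_exp hu
    have h2 : 0 < (ρ * Real.exp u + τ)^q := Real.rpow_pos_of_pos (hσpos u) q
    have h3 : 0 ≤ τ^q * (Real.exp u - 1) :=
      mul_nonneg (Real.rpow_pos_of_pos hτ q).le (by linarith)
    simp only [hW]; nlinarith
  have hinner : ∀ u : ℝ, HasDerivAt (fun v : ℝ => ρ * Real.exp v + τ) (ρ * Real.exp u) u :=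
    fun u => ((Real.hasDerivAt_exp u).const_mul ρ).add_const τ
  have hWd : ∀ u : ℝ, HasDerivAt W (N u) u := by
    intro u
    have h1 : HasDerivAt (fun v : ℝ => τ^q * (Real.exp v - 1)) (τ^q * Real.exp u) u :=
      ((Real.hasDerivAt_exp u).sub_const 1).const_mul (τ^q)
    have h2 := (hinner u).rpow_const (p := q) (Or.inl (hσpos u).ne')
    have h3 := h1.add h2
    refine h3.congr_deriv ?_
    simp only [hN]
    ring
  have hNd : ∀ u : ℝ, HasDerivAt N
      (N u + q*(q-1)*ρ^2*(Real.exp u)^2*(ρ * Real.exp u + τ)^(q-2)) u := by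
    intro u
    have h1 : HasDerivAt (fun v : ℝ => τ^q * Real.exp v) (τ^q * Real.exp u) u :=
      (Real.hasDerivAt_exp u).const_mul (τ^q)
    have h2 := (hinner u).rpow_const (p := q-1) (Or.inl (hσpos u).ne')
    rw [show q-1-1 = q-2 by ring] at h2
    have h3 := ((Real.hasDerivAt_exp u).const_mul (q*ρ)).mul h2
    have h4 := h1.add h3
    refine h4.congr_deriv ?_
    simp only [hN]
    ring
  have hnum : ∀ u : ℝ, 0 < u →
      0 < (N u + q*(q-1)*ρ^2*(Real.exp u)^2*(ρ * Real.exp u + τ)^(q-2)) * W u - N u * N u := by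
    intro u hu
    have hE1 : 1 < Real.exp u := by
      rw [← Real.exp_zero]; exact Real.exp_lt_exp.2 hu
    have hEpos : (0:ℝ) < Real.exp u := Real.exp_pos u
    have hσp : 0 < ρ * Real.exp u + τ := hσpos u
    have hστ : τ < ρ * Real.exp u + τ := by nlinarith
    have e1 : (ρ * Real.exp u + τ)^(q-1) = (ρ * Real.exp u + τ)^(q-2) * (ρ * Real.exp u + τ) := by
      rw [← Real.rpow_add_one hσp.ne' (q-2)]; congr 1; ring
    have e2 : (ρ * Real.exp u + τ)^q
        = (ρ * Real.exp u + τ)^(q-2) * (ρ * Real.exp u + τ) * (ρ * Real.exp u + τ) := by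
      rw [← Real.rpow_add_one hσp.ne' (q-2), ← Real.rpow_add_one hσp.ne' (q-2+1)]
      congr 1; ring
    have e3 : τ^q = τ^(q-1) * τ := by
      rw [← Real.rpow_add_one hτ.ne' (q-1)]; congr 1; ring
    have hp2pos : 0 < (ρ * Real.exp u + τ)^(q-2) := Real.rpow_pos_of_pos hσp _
    have ht1pos : 0 < τ^(q-1) := Real.rpow_pos_of_pos hτ _
    have hVpos0 : 0 < (ρ * Real.exp u + τ)^q - τ^q := by
      have := Real.rpow_lt_rpow hτ.le hστ hq0
      linarith
    -- strict Young
    have hYpos0 : 0 < (ρ * Real.exp u + τ)^q - q*(ρ * Real.exp u + τ)*τ^(q-1) + (q-1)*τ^q := by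
      have hXYne : τ^q ≠ (ρ * Real.exp u + τ)^q :=
        ne_of_lt (Real.rpow_lt_rpow hτ.le hστ hq0)
      have w1q : (0:ℝ) < 1/q := by positivity
      have w2q : (0:ℝ) < (q-1)/q := by positivity
      have wsum : 1/q + (q-1)/q = 1 := by field_simp; ring
      have hy := young_lt (w1 := 1/q) (w2 := (q-1)/q) (X := (ρ * Real.exp u + τ)^q)
        (Y := τ^q) w1q w2q wsum
        (Real.rpow_pos_of_pos hσp q) (Real.rpow_pos_of_pos hτ q) hXYne.symm
      have c1 : ((ρ * Real.exp u + τ)^q)^(1/q) = ρ * Real.exp u + τ := by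
        rw [← Real.rpow_mul hσp.le]
        rw [show q*(1/q) = 1 by field_simp]
        exact Real.rpow_one _
      have c2 : (τ^q)^((q-1)/q) = τ^(q-1) := by
        rw [← Real.rpow_mul hτ.le]
        congr 1
        field_simp
      rw [c1, c2] at hy
      have h5 := mul_lt_mul_of_pos_left hy hq0
      have h6 : q*((1/q)*(ρ * Real.exp u + τ)^q + ((q-1)/q)*τ^q)
          = (ρ * Real.exp u + τ)^q + (q-1)*τ^q := by
        field_simp
      rw [h6] at h5
      nlinarith [h5]
    -- reduce to quadpos
    have key := quadpos q (ρ * Real.exp u) τ ((ρ * Real.exp u + τ)^(q-2)) (τ^(q-1))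
      (τ^(q-1) * τ * Real.exp u)
      (by positivity) hτ (by positivity) hq0 hq1.le hp2pos ht1pos
      (by rw [e2, e3] at hVpos0; exact hVpos0)
      (by rw [e2, e3] at hYpos0; exact hYpos0)
    have eg : (N u + q*(q-1)*ρ^2*(Real.exp u)^2*(ρ * Real.exp u + τ)^(q-2)) * W u - N u * N u
        = (τ^(q-1) * τ * Real.exp u
            + q*(ρ * Real.exp u)*((ρ * Real.exp u + τ)^(q-2)*(ρ * Real.exp u + τ))
            + q*(q-1)*(ρ * Real.exp u)^2*(ρ * Real.exp u + τ)^(q-2))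
          * (τ^(q-1) * τ * Real.exp u
            + ((ρ * Real.exp u + τ)^(q-2)*(ρ * Real.exp u + τ)*(ρ * Real.exp u + τ)
              - τ^(q-1)*τ))
          - (τ^(q-1) * τ * Real.exp u
              + q*(ρ * Real.exp u)*((ρ * Real.exp u + τ)^(q-2)*(ρ * Real.exp u + τ)))
            * (τ^(q-1) * τ * Real.exp u
              + q*(ρ * Real.exp u)*((ρ * Real.exp u + τ)^(q-2)*(ρ * Real.exp u + τ))) := by
      simp only [hN, hW]
      rw [e1, e2, e3]
      ring
    rw [eg]
    exact key
  -- strict convexity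
  apply strictConvexOn_of_deriv2_pos (convex_Icc 0 L)
  · intro u hu
    have hd : HasDerivAt (fun u => Real.log (W u) - u) (N u / W u - 1) u :=
      ((hWd u).log (hWpos u hu.1).ne').sub (hasDerivAt_id u)
    exact hd.continuousAt.continuousWithinAt
  · intro u hu
    rw [interior_Icc] at hu
    have hΦd : ∀ v : ℝ, 0 < v →
        HasDerivAt (fun u => Real.log (W u) - u) (N v / W v - 1) v := fun v hv =>
      ((hWd v).log (hWpos v hv.le).ne').sub (hasDerivAt_id v)
    have hev : deriv (fun u => Real.log (W u) - u) =ᶠ[nhds u] (fun v => N v / W v - 1) := by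
      filter_upwards [Ioi_mem_nhds hu.1] with v hv
      exact (hΦd v hv).deriv
    have hd2 : HasDerivAt (fun v => N v / W v - 1)
        (((N u + q*(q-1)*ρ^2*(Real.exp u)^2*(ρ * Real.exp u + τ)^(q-2)) * W u - N u * N u)
          / (W u)^2) u := by
      have h9 := ((hNd u).div (hWd u) (hWpos u hu.1.le).ne')
      exact h9.sub_const 1
    have hit : deriv^[2] (fun u => Real.log (W u) - u) u
        = deriv (deriv (fun u => Real.log (W u) - u)) u := by
      rw [Function.iterate_succ_apply', Function.iterate_one]
    rw [hit, hev.deriv_eq, hd2.deriv]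
    apply div_pos (hnum u hu.1)
    exact pow_pos (hWpos u hu.1.le) 2

lemma keyA (q ρ x s t : ℝ) (hq : 2 ≤ q) (hρ0 : 0 < ρ) (hρ1 : ρ < 1) (hx : 0 < x)
    (ht : t = (x * (q*ρ*(ρ*x+(1-ρ))^(q-1)) - (ρ*x+(1-ρ))^q + (1-ρ)^q) / ((q-1) * x^q))
    (hs : s = ((ρ*x+(1-ρ))^q - (1-ρ)^q)/x - t * x^(q-1)) :
    ∀ a, 0 ≤ a → (ρ*a+(1-ρ))^q ≤ (1-ρ)^q + s*a + t*a^q := by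
  set τ := 1 - ρ with hτdef
  have hτ : 0 < τ := by simp only [hτdef]; linarith
  have hq1 : (1:ℝ) < q := by linarith
  have hq0 : (0:ℝ) < q := by linarith
  have hq1' : q - 1 ≠ 0 := by intro h; nlinarith [h]
  have hq10 : (0:ℝ) < q - 1 := by linarith
  have hσ : ∀ a : ℝ, 0 ≤ a → 0 < ρ*a + τ := fun a ha => by nlinarith
  have hlin : ∀ a : ℝ, HasDerivAt (fun b : ℝ => ρ*b+τ) ρ a := by
    intro a
    simpa using ((hasDerivAt_id a).const_mul ρ).add_const τ
  have hgdiff : ∀ a : ℝ, 0 ≤ a →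
      HasDerivAt (fun b : ℝ => (ρ*b+τ)^q) (q*ρ*(ρ*a+τ)^(q-1)) a := by
    intro a ha
    have h2 := (hlin a).rpow_const (p := q) (Or.inl (hσ a ha).ne')
    convert h2 using 1
    ring
  have hgddiff : ∀ a : ℝ, 0 ≤ a →
      HasDerivAt (fun b : ℝ => q*ρ*(ρ*b+τ)^(q-1)) (q*(q-1)*ρ^2*(ρ*a+τ)^(q-2)) a := by
    intro a ha
    have h2 := ((hlin a).rpow_const (p := q-1) (Or.inl (hσ a ha).ne')).const_mul (q*ρ)
    refine h2.congr_deriv ?_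
    rw [show q - 1 - 1 = q - 2 by ring]
    ring
  set K : ℝ → ℝ := fun a => (a * (q*ρ*(ρ*a+τ)^(q-1)) - (ρ*a+τ)^q + τ^q)/a^q with hK
  have hKderiv : ∀ a : ℝ, 0 < a → HasDerivAt K
      (q*((2-q)*τ*(ρ*a+τ)^(q-1) + (q-1)*τ^2*(ρ*a+τ)^(q-2) - τ^q) / a^(q+1)) a := by
    intro a ha
    have hσa := hσ a ha.le
    have hN : HasDerivAt (fun b : ℝ => b * (q*ρ*(ρ*b+τ)^(q-1)) - (ρ*b+τ)^q + τ^q)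
        (1 * (q*ρ*(ρ*a+τ)^(q-1)) + a * (q*(q-1)*ρ^2*(ρ*a+τ)^(q-2)) - q*ρ*(ρ*a+τ)^(q-1)) a := by
      exact (((hasDerivAt_id a).mul (hgddiff a ha.le)).sub (hgdiff a ha.le)).add_const _
    have hD : HasDerivAt (fun b : ℝ => b^q) (q*a^(q-1)) a :=
      Real.hasDerivAt_rpow_const (Or.inl ha.ne')
    have h3 := hN.div hD (Real.rpow_pos_of_pos ha q).ne'
    refine h3.congr_deriv ?_
    have e1 : (ρ*a+τ)^(q-1) = (ρ*a+τ)^(q-2) * (ρ*a+τ) := by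
      rw [← Real.rpow_add_one hσa.ne' (q-2)]; congr 1; ring
    have e2 : (ρ*a+τ)^q = (ρ*a+τ)^(q-2) * (ρ*a+τ) * (ρ*a+τ) := by
      rw [← Real.rpow_add_one hσa.ne' (q-2), ← Real.rpow_add_one hσa.ne' (q-2+1)]
      congr 1; ring
    have e3 : a^q = a^(q-1) * a := by
      rw [← Real.rpow_add_one ha.ne' (q-1)]; congr 1; ring
    have e4 : a^(q+1) = a^(q-1) * a * a := by
      rw [← Real.rpow_add_one ha.ne' (q-1), ← Real.rpow_add_one ha.ne' (q-1+1)]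
      congr 1; ring
    have hp2 : a^(q-1) ≠ 0 := (Real.rpow_pos_of_pos ha _).ne'
    rw [e1, e2, e3, e4]
    field_simp
    ring
  have hRle : ∀ a : ℝ, 0 < a →
      q*((2-q)*τ*(ρ*a+τ)^(q-1) + (q-1)*τ^2*(ρ*a+τ)^(q-2) - τ^q) ≤ 0 := by
    intro a ha
    have hσa := hσ a ha.le
    have hY := Real.geom_mean_le_arith_mean2_weighted
      (w₁ := 1/(q-1)) (w₂ := (q-2)/(q-1)) (p₁ := τ^(q-1)) (p₂ := (ρ*a+τ)^(q-1))
      (by positivity) (by apply div_nonneg <;> linarith)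
      (Real.rpow_pos_of_pos hτ _).le (Real.rpow_pos_of_pos hσa _).le
      (by field_simp; linarith)
    have w2 : (q-1)*(1/(q-1)) = 1 := by rw [mul_one_div]; exact div_self hq1'
    have w3 : (q-1)*((q-2)/(q-1)) = q-2 := by rw [mul_comm]; exact div_mul_cancel₀ _ hq1'
    rw [← Real.rpow_mul hτ.le, ← Real.rpow_mul hσa.le, w2, w3, Real.rpow_one] at hY
    have hY2 : (q-1) * (τ * (ρ*a+τ)^(q-2)) ≤ τ^(q-1) + (q-2) * (ρ*a+τ)^(q-1) := by
      have h5 := mul_le_mul_of_nonneg_left hY hq10.le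
      have h6 : (q-1)*((1/(q-1))*τ^(q-1) + ((q-2)/(q-1))*(ρ*a+τ)^(q-1))
          = τ^(q-1) + (q-2)*(ρ*a+τ)^(q-1) := by
        field_simp
      rw [h6] at h5
      linarith
    have hτq : τ^q = τ^(q-1)*τ := by
      rw [← Real.rpow_add_one hτ.ne' (q-1)]; congr 1; ring
    have hX : (2-q)*τ*(ρ*a+τ)^(q-1) + (q-1)*τ^2*(ρ*a+τ)^(q-2) - τ^q ≤ 0 := by
      rw [hτq]
      nlinarith [mul_le_mul_of_nonneg_left hY2 hτ.le]
    exact mul_nonpos_iff.2 (Or.inl ⟨hq0.le, hX⟩)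
  have hKanti : AntitoneOn K (Set.Ioi 0) := by
    apply antitoneOn_of_deriv_nonpos (convex_Ioi 0)
    · exact fun a ha => ((hKderiv a ha).continuousAt.continuousWithinAt)
    · rw [interior_Ioi]
      exact fun a ha => (hKderiv a ha).differentiableAt.differentiableWithinAt
    · intro a ha
      rw [interior_Ioi] at ha
      rw [(hKderiv a ha).deriv]
      apply div_nonpos_of_nonpos_of_nonneg (hRle a ha) (Real.rpow_pos_of_pos ha _).le
  set F : ℝ → ℝ := fun a => s + t*a^(q-1) - ((ρ*a+τ)^q - τ^q)/a with hF
  have hKx : t*(q-1) = K x := by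
    simp only [hK, ht]
    have hxq : x^q ≠ 0 := (Real.rpow_pos_of_pos hx q).ne'
    field_simp
  have hFderiv : ∀ a : ℝ, 0 < a → HasDerivAt F (a^(q-2) * (K x - K a)) a := by
    intro a ha
    have hσa := hσ a ha.le
    have h1 : HasDerivAt (fun b : ℝ => t*b^(q-1)) (t*((q-1)*a^(q-2))) a := by
      have := (Real.hasDerivAt_rpow_const (x := a) (p := q-1) (Or.inl ha.ne')).const_mul t
      rwa [show q-1-1 = q-2 by ring] at this
    have h2 : HasDerivAt (fun b : ℝ => ((ρ*b+τ)^q - τ^q)/b)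
        (((q*ρ*(ρ*a+τ)^(q-1)) * a - ((ρ*a+τ)^q - τ^q) * 1)/a^2) a :=
      ((hgdiff a ha.le).sub_const _).div (hasDerivAt_id a) ha.ne'
    have h3 := (h1.const_add s).sub h2
    refine h3.congr_deriv ?_
    have e3 : a^q = a^(q-2) * a * a := by
      rw [← Real.rpow_add_one ha.ne' (q-2), ← Real.rpow_add_one ha.ne' (q-2+1)]
      congr 1; ring
    rw [← hKx]
    simp only [hK]
    rw [e3]
    have hp2 : a^(q-2) ≠ 0 := (Real.rpow_pos_of_pos ha _).ne'
    field_simp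
    ring
  have hF0 : F x = 0 := by
    simp only [hF, hs]
    ring
  have hFanti : AntitoneOn F (Set.Ioc 0 x) := by
    apply antitoneOn_of_deriv_nonpos (convex_Ioc 0 x)
    · intro a ha
      exact (hFderiv a ha.1).continuousAt.continuousWithinAt
    · rw [interior_Ioc]
      exact fun a ha => (hFderiv a ha.1).differentiableAt.differentiableWithinAt
    · intro a ha
      rw [interior_Ioc] at ha
      rw [(hFderiv a ha.1).deriv]
      have hKxa : K x ≤ K a := hKanti (Set.mem_Ioi.2 ha.1) (Set.mem_Ioi.2 hx) ha.2.le
      exact mul_nonpos_iff.2 (Or.inl ⟨(Real.rpow_pos_of_pos ha.1 _).le, by linarith⟩)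
  have hFmono : MonotoneOn F (Set.Ici x) := by
    apply monotoneOn_of_deriv_nonneg (convex_Ici x)
    · intro a ha
      exact (hFderiv a (lt_of_lt_of_le hx ha)).continuousAt.continuousWithinAt
    · rw [interior_Ici]
      exact fun a ha => (hFderiv a (lt_trans hx ha)).differentiableAt.differentiableWithinAt
    · intro a ha
      rw [interior_Ici] at ha
      rw [(hFderiv a (lt_trans hx ha)).deriv]
      have hKxa : K a ≤ K x := hKanti (Set.mem_Ioi.2 hx) (Set.mem_Ioi.2 (lt_trans hx ha)) ha.le
      exact mul_nonneg (Real.rpow_pos_of_pos (lt_trans hx ha) _).le (by linarith)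
  have hFnonneg : ∀ a : ℝ, 0 < a → 0 ≤ F a := by
    intro a ha
    rcases le_or_gt a x with h | h
    · have := hFanti (Set.mem_Ioc.2 ⟨ha, h⟩) (Set.mem_Ioc.2 ⟨hx, le_refl x⟩) h
      rwa [hF0] at this
    · have := hFmono (Set.mem_Ici.2 (le_refl x)) (Set.mem_Ici.2 h.le) h.le
      rwa [hF0] at this
  intro a ha
  rcases eq_or_lt_of_le ha with h | h
  · rw [← h, Real.zero_rpow hq0.ne']
    have e : ρ*0 + τ = τ := by ring
    rw [e]
    linarith
  · have hFa := hFnonneg a h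
    simp only [hF] at hFa
    have hdiv : ((ρ*a+τ)^q - τ^q)/a ≤ s + t*a^(q-1) := by linarith
    have h7 := (div_le_iff₀ h).1 hdiv
    have e3 : a^q = a^(q-1) * a := by
      rw [← Real.rpow_add_one h.ne' (q-1)]; congr 1; ring
    rw [e3]
    nlinarith [h7]

/-- Rényi divergence of order `q` between mass functions `ν` and `μ` on a finite set:
`D_q(ν‖μ) = (1/(q-1)) ln Σ_x ν(x)^q / μ(x)^{q-1}`. -/
noncomputable def renyiDiv {Ω : Type*} [Fintype Ω] (q : ℝ) (ν μ : Ω → ℝ) : ℝ :=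
  (1 / (q - 1)) * Real.log (∑ x, ν x ^ q / μ x ^ (q - 1))

set_option maxHeartbeats 4000000 in
theorem stmt7 {Ω : Type*} [Fintype Ω] (hΩ : 2 ≤ Fintype.card Ω)
    (μ : Ω → ℝ) (hμpos : ∀ x, 0 < μ x) (hμsum : ∑ x, μ x = 1)
    (μs : ℝ) (hμs_le : ∀ x, μs ≤ μ x) (hμs_mem : ∃ x, μ x = μs)
    (q ρ lam : ℝ) (hq : 2 ≤ q) (hρ0 : 0 < ρ) (hρ1 : ρ < 1)
    (hlam : lam = Real.log (μs * (1 + ρ * (1 / μs - 1)) ^ q + (1 - μs) * (1 - ρ) ^ q) /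
      ((q - 1) * Real.log (1 / μs)))
    (ν : Ω → ℝ) (hνpos : ∀ x, 0 ≤ ν x) (hνsum : ∑ x, ν x = 1) :
    renyiDiv q (fun x => ρ * ν x + (1 - ρ) * μ x) μ ≤ lam * renyiDiv q ν μ ∧
      (renyiDiv q (fun x => ρ * ν x + (1 - ρ) * μ x) μ = lam * renyiDiv q ν μ ↔
        ν = μ ∨ ∃ xs, μ xs = μs ∧ ∀ y, ν y = if y = xs then 1 else 0) := by
  have hq1 : (1:ℝ) < q := by linarith
  have hq10 : (0:ℝ) < q - 1 := by linarith
  have hq1' : q - 1 ≠ 0 := ne_of_gt hq10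
  have hq0 : (0:ℝ) < q := by linarith
  obtain ⟨x0, hx0⟩ := hμs_mem
  have hμs0 : 0 < μs := hx0 ▸ hμpos x0
  have hμs1 : μs < 1 := by
    obtain ⟨a, b, hab⟩ := Fintype.exists_pair_of_one_lt_card (by omega : 1 < Fintype.card Ω)
    have hpair : μ a + μ b ≤ ∑ x, μ x := by
      have hss := Finset.sum_le_sum_of_subset_of_nonneg
        (Finset.subset_univ ({a, b} : Finset Ω)) (fun i _ _ => (hμpos i).le)
      rwa [Finset.sum_insert (by simp [hab]), Finset.sum_singleton] at hss
    have h1 := hμs_le a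
    have h2 := hμs_le b
    rw [hμsum] at hpair
    linarith
  set M := 1 / μs with hMdef
  have hM1 : 1 < M := by rw [hMdef, lt_div_iff₀ hμs0, one_mul]; exact hμs1
  have hMpos : (0:ℝ) < M := lt_trans one_pos hM1
  have hMμs : M * μs = 1 := by rw [hMdef]; exact one_div_mul_cancel hμs0.ne'
  set L := Real.log M with hLdef
  have hLpos : 0 < L := Real.log_pos hM1
  -- the density ratio
  set f : Ω → ℝ := fun x => ν x / μ x with hfdef
  have hf0 : ∀ x, 0 ≤ f x := fun x => div_nonneg (hνpos x) (hμpos x).le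
  have hν1 : ∀ x, ν x ≤ 1 := by
    intro x
    rw [← hνsum]
    exact Finset.single_le_sum (fun i _ => hνpos i) (Finset.mem_univ x)
  have hfM : ∀ x, f x ≤ M := by
    intro x
    have h1 : ν x / μ x ≤ 1 / μ x :=
      div_le_div₀ zero_le_one (hν1 x) (hμpos x) (le_refl (μ x))
    have h2 : 1 / μ x ≤ 1 / μs := one_div_le_one_div_of_le hμs0 (hμs_le x)
    calc f x = ν x / μ x := by simp only [hfdef]
      _ ≤ 1 / μ x := h1
      _ ≤ M := h2
  have hμf : ∀ x, μ x * f x = ν x := fun x => by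
    simp only [hfdef]
    rw [mul_comm]
    exact div_mul_cancel₀ _ (hμpos x).ne'
  have hsumf : ∑ x, μ x * f x = 1 :=
    (Finset.sum_congr rfl fun x _ => hμf x).trans hνsum
  set B := ∑ x, μ x * f x ^ q with hBdef
  set A := ∑ x, μ x * (ρ * f x + (1 - ρ)) ^ q with hAdef
  -- sum rewrites
  have hsB : ∑ x, ν x ^ q / μ x ^ (q-1) = B := by
    rw [hBdef]
    apply Finset.sum_congr rfl
    intro x _
    rw [← hμf x, Real.mul_rpow (hμpos x).le (hf0 x)]
    have e : μ x ^ q = μ x ^ (q-1) * μ x := by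
      rw [← Real.rpow_add_one (hμpos x).ne' (q-1)]; congr 1; ring
    rw [e]
    have hne : μ x ^ (q-1) ≠ 0 := (Real.rpow_pos_of_pos (hμpos x) _).ne'
    field_simp
  have hsA : ∑ x, (ρ * ν x + (1 - ρ) * μ x) ^ q / μ x ^ (q-1) = A := by
    rw [hAdef]
    apply Finset.sum_congr rfl
    intro x _
    have e0 : ρ * ν x + (1 - ρ) * μ x = μ x * (ρ * f x + (1 - ρ)) := by
      rw [← hμf x]; ring
    rw [e0, Real.mul_rpow (hμpos x).le (by
      have h9 := mul_nonneg hρ0.le (hf0 x)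
      linarith only [h9, hρ1] : (0:ℝ) ≤ ρ * f x + (1 - ρ))]
    have e : μ x ^ q = μ x ^ (q-1) * μ x := by
      rw [← Real.rpow_add_one (hμpos x).ne' (q-1)]; congr 1; ring
    rw [e]
    have hne : μ x ^ (q-1) ≠ 0 := (Real.rpow_pos_of_pos (hμpos x) _).ne'
    field_simp
  -- Jensen bounds
  have hB1 : 1 ≤ B := by
    have h := Real.rpow_arith_mean_le_arith_mean_rpow Finset.univ μ f
      (fun i _ => (hμpos i).le) hμsum (fun i _ => hf0 i) hq1.le
    rw [hsumf, Real.one_rpow] at h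
    exact h
  have hA1 : 1 ≤ A := by
    have hz : ∀ i ∈ Finset.univ, (0:ℝ) ≤ ρ * f i + (1 - ρ) := fun i _ => by
      have h9 := mul_nonneg hρ0.le (hf0 i)
      linarith only [h9, hρ1]
    have hzs : ∑ x, μ x * (ρ * f x + (1 - ρ)) = 1 := by
      have e : ∀ x : Ω, μ x * (ρ * f x + (1 - ρ)) = ρ * (μ x * f x) + (1-ρ) * μ x :=
        fun x => by ring
      rw [Finset.sum_congr rfl fun x _ => e x, Finset.sum_add_distrib, ← Finset.mul_sum,
        ← Finset.mul_sum, hsumf, hμsum]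
      ring
    have h := Real.rpow_arith_mean_le_arith_mean_rpow Finset.univ μ
      (fun x => ρ * f x + (1 - ρ)) (fun i _ => (hμpos i).le) hμsum hz hq1.le
    rw [hzs, Real.one_rpow] at h
    exact h
  have hB0 : 0 < B := lt_of_lt_of_le one_pos hB1
  have hA0 : 0 < A := lt_of_lt_of_le one_pos hA1
  -- B ≤ M^(q-1)
  have hptM : ∀ x, f x ^ q ≤ M^(q-1) * f x := by
    intro x
    rcases eq_or_lt_of_le (hf0 x) with h | h
    · rw [← h, Real.zero_rpow hq0.ne', mul_zero]
    · have e : f x ^ q = f x ^ (q-1) * f x := by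
        rw [← Real.rpow_add_one h.ne' (q-1)]; congr 1; ring
      rw [e]
      exact mul_le_mul_of_nonneg_right
        (Real.rpow_le_rpow (hf0 x) (hfM x) (by linarith)) (hf0 x)
  have hBM : B ≤ M^(q-1) := by
    calc B ≤ ∑ x, μ x * (M^(q-1) * f x) := by
          rw [hBdef]
          exact Finset.sum_le_sum fun x _ =>
            mul_le_mul_of_nonneg_left (hptM x) (hμpos x).le
      _ = M^(q-1) * ∑ x, μ x * f x := by
          rw [Finset.mul_sum]
          exact Finset.sum_congr rfl fun x _ => by ring
      _ = M^(q-1) := by rw [hsumf, mul_one]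
  -- X
  set X := B ^ (1/(q-1)) with hXdef
  have hexp0 : (0:ℝ) < 1/(q-1) := div_pos one_pos hq10
  have hX1 : 1 ≤ X := by
    rw [hXdef]
    calc (1:ℝ) = 1 ^ (1/(q-1)) := (Real.one_rpow _).symm
      _ ≤ B ^ (1/(q-1)) := Real.rpow_le_rpow zero_le_one hB1 hexp0.le
  have hX0 : 0 < X := lt_of_lt_of_le one_pos hX1
  have hcollapse : (M^(q-1)) ^ (1/(q-1)) = M := by
    rw [← Real.rpow_mul hMpos.le, mul_one_div, div_self hq1', Real.rpow_one]
  have hXM : X ≤ M := by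
    rw [hXdef, ← hcollapse]
    exact Real.rpow_le_rpow hB0.le hBM hexp0.le
  have hXq : X ^ (q-1) = B := by
    rw [hXdef, ← Real.rpow_mul hB0.le, one_div_mul_cancel hq1', Real.rpow_one]
  -- pointwise key inequality, summed
  set tco := (X * (q*ρ*(ρ*X+(1-ρ))^(q-1)) - (ρ*X+(1-ρ))^q + (1-ρ)^q) / ((q-1) * X^q)
    with htco
  set sco := ((ρ*X+(1-ρ))^q - (1-ρ)^q)/X - tco * X^(q-1) with hsco
  have hkey := keyA q ρ X sco tco hq hρ0 hρ1 hX0 htco hsco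
  have hAψ : A ≤ ((1-ρ)^q * (X-1) + (ρ*X+(1-ρ))^q) / X := by
    have h1 : A ≤ ∑ x, μ x * ((1-ρ)^q + sco * f x + tco * f x ^ q) := by
      rw [hAdef]
      exact Finset.sum_le_sum fun x _ =>
        mul_le_mul_of_nonneg_left (hkey (f x) (hf0 x)) (hμpos x).le
    have h2 : ∑ x, μ x * ((1-ρ)^q + sco * f x + tco * f x ^ q)
        = (1-ρ)^q + sco + tco * B := by
      have e : ∀ x : Ω, μ x * ((1-ρ)^q + sco * f x + tco * f x ^ q)
          = (1-ρ)^q * μ x + sco * (μ x * f x) + tco * (μ x * f x ^ q) := fun x => by ring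
      rw [Finset.sum_congr rfl fun x _ => e x, Finset.sum_add_distrib,
        Finset.sum_add_distrib, ← Finset.mul_sum, ← Finset.mul_sum, ← Finset.mul_sum,
        hμsum, hsumf, ← hBdef]
      ring
    have h3 : (1-ρ)^q + sco + tco * B = ((1-ρ)^q * (X-1) + (ρ*X+(1-ρ))^q) / X := by
      rw [hsco, ← hXq]
      field_simp [hX0.ne']
      ring
    exact h1.trans (le_of_eq (h2.trans h3))
  -- Φ and its convexity
  set Φ : ℝ → ℝ :=
    fun u => Real.log ((1-ρ)^q * (Real.exp u - 1) + (ρ * Real.exp u + (1-ρ))^q) - u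
    with hΦdef
  have hΦconv : StrictConvexOn ℝ (Set.Icc 0 L) Φ := keyC q ρ L hq hρ0 hρ1 hLpos
  have hΦ0 : Φ 0 = 0 := by
    simp only [hΦdef, Real.exp_zero]
    rw [show (1-ρ)^q * (1-1) + (ρ*1+(1-ρ))^q = 1 by
      rw [show ρ*1+(1-ρ) = 1 by ring, Real.one_rpow]; ring]
    rw [Real.log_one]; ring
  have hΦlog : ∀ y : ℝ, 1 ≤ y →
      Φ (Real.log y) = Real.log (((1-ρ)^q * (y-1) + (ρ*y+(1-ρ))^q) / y) := by
    intro y hy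
    have hy0 : 0 < y := lt_of_lt_of_le one_pos hy
    have hnum : 0 < (1-ρ)^q * (y-1) + (ρ*y+(1-ρ))^q := by
      have h2 : 0 < (ρ*y+(1-ρ))^q := Real.rpow_pos_of_pos (by
        have h9 := mul_le_mul_of_nonneg_left hy hρ0.le
        linarith only [h9, hρ1, hρ0]) q
      have h3 : 0 ≤ (1-ρ)^q * (y-1) :=
        mul_nonneg (Real.rpow_pos_of_pos (by linarith) q).le (by linarith)
      linarith
    simp only [hΦdef]
    rw [Real.exp_log hy0, Real.log_div hnum.ne' hy0.ne']
  -- chord inequalities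
  have hchords : ∀ u, 0 < u → u < L → Φ u * L < Φ L * u := by
    intro u h1 h2
    have ha : 0 < (L-u)/L := div_pos (by linarith) hLpos
    have hb : 0 < u/L := div_pos h1 hLpos
    have hab : (L-u)/L + u/L = 1 := by
      rw [← add_div, sub_add_cancel, div_self hLpos.ne']
    have hmem0 : (0:ℝ) ∈ Set.Icc 0 L := Set.mem_Icc.2 ⟨le_refl 0, hLpos.le⟩
    have hmemL : L ∈ Set.Icc 0 L := Set.mem_Icc.2 ⟨hLpos.le, le_refl L⟩
    have h := hΦconv.2 hmem0 hmemL (ne_of_lt hLpos) ha hb hab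
    simp only [smul_eq_mul] at h
    rw [show (L-u)/L * 0 + u/L * L = u by
      rw [mul_zero, zero_add, div_mul_cancel₀ _ hLpos.ne'], hΦ0, mul_zero, zero_add] at h
    calc Φ u * L < (u/L * Φ L) * L := mul_lt_mul_of_pos_right h hLpos
      _ = Φ L * u := by
        rw [div_mul_eq_mul_div, div_mul_cancel₀ _ hLpos.ne']
        ring
  have hchord : ∀ u, 0 ≤ u → u ≤ L → Φ u * L ≤ Φ L * u := by
    intro u h1 h2
    rcases eq_or_lt_of_le h1 with h | h
    · rw [← h, hΦ0]; simp
    rcases eq_or_lt_of_le h2 with h' | h'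
    · rw [h']
    · exact (hchords u h h').le
  -- value of Φ at L
  have hψM : Φ L = Real.log (μs * (1 + ρ * (M - 1)) ^ q + (1 - μs) * (1 - ρ) ^ q) := by
    rw [hLdef, hΦlog M hM1.le]
    congr 1
    have hg : ρ*M+(1-ρ) = 1 + ρ*(M-1) := by ring
    rw [hg, hMdef]
    field_simp [hμs0.ne']
    ring
  clear_value M L f B A X tco sco Φ
  have hlogB : Real.log B = (q-1) * Real.log X := by
    rw [← hXq, Real.log_rpow hX0]
  -- main inequality on logs
  have hmain : Real.log A ≤ lam * Real.log B := by
    have hu0 : 0 ≤ Real.log X := Real.log_nonneg hX1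
    have huL : Real.log X ≤ L := by rw [hLdef]; exact Real.log_le_log hX0 hXM
    have hch := hchord (Real.log X) hu0 huL
    have h1 : Real.log A ≤ Φ (Real.log X) := by
      rw [hΦlog X hX1]
      exact Real.log_le_log hA0 hAψ
    have h2 : Φ (Real.log X) ≤ Φ L * Real.log X / L := (le_div_iff₀ hLpos).2 hch
    have h3 : lam * Real.log B = Φ L * Real.log X / L := by
      rw [hlam, ← hψM, hlogB]
      field_simp [hq1', hLpos.ne']
    calc Real.log A ≤ Φ (Real.log X) := h1
      _ ≤ Φ L * Real.log X / L := h2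
      _ = lam * Real.log B := h3.symm
  -- finish
  simp only [renyiDiv]
  rw [hsA, hsB]
  constructor
  · calc 1/(q-1) * Real.log A ≤ 1/(q-1) * (lam * Real.log B) :=
        mul_le_mul_of_nonneg_left hmain (le_of_lt (div_pos one_pos hq10))
      _ = lam * (1/(q-1) * Real.log B) := by ring
  constructor
  · -- equality → characterization
    intro heq
    have heq' : Real.log A = lam * Real.log B :=
      mul_left_cancel₀ (one_div_ne_zero hq1') (by rw [heq]; ring)
    rcases eq_or_lt_of_le hB1 with hBeq | hBgt
    · -- B = 1 forces ν = μ
      left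
      have hpt : ∀ x : Ω, 0 ≤ μ x * (f x ^ q - 1 - q*(f x - 1)) := by
        intro x
        apply mul_nonneg (hμpos x).le
        have hber := one_add_mul_self_le_rpow_one_add
          (s := f x - 1) (by linarith [hf0 x]) hq1.le
        rw [show (1:ℝ) + (f x - 1) = f x by ring] at hber
        linarith
      have hzero : ∑ x, μ x * (f x ^ q - 1 - q*(f x - 1)) = 0 := by
        have e : ∀ x : Ω, μ x * (f x ^ q - 1 - q*(f x - 1))
            = (μ x * f x ^ q - μ x) - q * (μ x * f x - μ x) := fun x => by ring
        have h1 : ∑ x, (μ x * f x ^ q - μ x) = B - 1 := by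
          rw [Finset.sum_sub_distrib, ← hBdef, hμsum]
        have h2 : ∑ x, (μ x * f x - μ x) = 0 := by
          rw [Finset.sum_sub_distrib, hsumf, hμsum]; ring
        calc ∑ x, μ x * (f x ^ q - 1 - q*(f x - 1))
            = ∑ x, ((μ x * f x ^ q - μ x) - q * (μ x * f x - μ x)) :=
              Finset.sum_congr rfl fun x _ => e x
          _ = (∑ x, (μ x * f x ^ q - μ x)) - q * ∑ x, (μ x * f x - μ x) := by
              rw [Finset.sum_sub_distrib, Finset.mul_sum]
          _ = (B - 1) - q * 0 := by rw [h1, h2]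
          _ = 0 := by rw [← hBeq]; ring
      have hall := (Finset.sum_eq_zero_iff_of_nonneg (fun x _ => hpt x)).1 hzero
      funext x
      have hx := hall x (Finset.mem_univ x)
      have h0 : f x ^ q - 1 - q*(f x - 1) = 0 := by
        rcases mul_eq_zero.1 hx with h | h
        · exact absurd h (hμpos x).ne'
        · exact h
      have hfx : f x = 1 := by
        by_contra hne
        have hsne : f x - 1 ≠ 0 := fun hc => hne (by linarith [sub_eq_zero.1 hc])
        have hber := one_add_mul_self_lt_rpow_one_add
          (s := f x - 1) (by linarith [hf0 x]) hsne hq1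
        rw [show (1:ℝ) + (f x - 1) = f x by ring] at hber
        linarith
      have := hμf x
      rw [hfx, mul_one] at this
      exact this.symm
    rcases eq_or_lt_of_le hBM with hBM' | hBlt
    · -- B = M^(q-1) forces point mass at a minimal atom
      right
      have hpt : ∀ x : Ω, 0 ≤ μ x * (M^(q-1) * f x - f x ^ q) := fun x =>
        mul_nonneg (hμpos x).le (by linarith [hptM x])
      have hzero : ∑ x, μ x * (M^(q-1) * f x - f x ^ q) = 0 := by
        have e : ∀ x : Ω, μ x * (M^(q-1) * f x - f x ^ q)
            = M^(q-1) * (μ x * f x) - μ x * f x ^ q := fun x => by ring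
        calc ∑ x, μ x * (M^(q-1) * f x - f x ^ q)
            = ∑ x, (M^(q-1) * (μ x * f x) - μ x * f x ^ q) :=
              Finset.sum_congr rfl fun x _ => e x
          _ = M^(q-1) * (∑ x, μ x * f x) - ∑ x, μ x * f x ^ q := by
              rw [Finset.sum_sub_distrib, Finset.mul_sum]
          _ = 0 := by rw [hsumf, ← hBdef, ← hBM']; ring
      have hall := (Finset.sum_eq_zero_iff_of_nonneg (fun x _ => hpt x)).1 hzero
      have hex : ∃ x, 0 < ν x := by
        by_contra h
        push_neg at h
        have hz : ∑ x, ν x = 0 :=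
          Finset.sum_eq_zero fun x _ => le_antisymm (h x) (hνpos x)
        rw [hνsum] at hz
        norm_num at hz
      obtain ⟨xs, hxs⟩ := hex
      have hfpos : 0 < f xs := by
        simp only [hfdef]
        exact div_pos hxs (hμpos xs)
      have hfxs : f xs = M := by
        have h1 := hall xs (Finset.mem_univ xs)
        have h2 : M^(q-1) * f xs - f xs ^ q = 0 := by
          rcases mul_eq_zero.1 h1 with h | h
          · exact absurd h (hμpos xs).ne'
          · exact h
        by_contra hne
        have hlt : f xs < M := lt_of_le_of_ne (hfM xs) hne
        have e : f xs ^ q = f xs ^ (q-1) * f xs := by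
          rw [← Real.rpow_add_one hfpos.ne' (q-1)]; congr 1; ring
        have hstrict : f xs ^ q < M^(q-1) * f xs := by
          rw [e]
          exact mul_lt_mul_of_pos_right
            (Real.rpow_lt_rpow (hf0 xs) hlt (by linarith)) hfpos
        linarith
      have hν_eq : ν xs = M * μ xs := by rw [← hμf xs, hfxs]; ring
      have hμxs : μ xs = μs := by
        have h3 : M * μ xs ≤ 1 := by rw [← hν_eq]; exact hν1 xs
        have h2 := hμs_le xs
        have h4 : M * μs ≤ M * μ xs := mul_le_mul_of_nonneg_left h2 hMpos.le
        have h5 : M * μ xs ≤ M * μs := by linarith only [h3, hMμs, h4]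
        have h6 : μ xs ≤ μs := le_of_mul_le_mul_left (by linarith only [h5]) hMpos
        linarith only [h2, h6]
      have hνxs : ν xs = 1 := by rw [hν_eq, hμxs, hMμs]
      refine ⟨xs, hμxs, fun y => ?_⟩
      by_cases hy : y = xs
      · rw [if_pos hy, hy, hνxs]
      · rw [if_neg hy]
        have hrest : ∑ z ∈ Finset.univ.erase xs, ν z = 0 := by
          have hsplit := Finset.add_sum_erase Finset.univ ν (Finset.mem_univ xs)
          rw [hνsum, hνxs] at hsplit
          linarith
        exact (Finset.sum_eq_zero_iff_of_nonneg (fun z _ => hνpos z)).1 hrest y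
          (Finset.mem_erase.2 ⟨hy, Finset.mem_univ y⟩)
    · -- 1 < B < M^(q-1) : strict inequality, contradiction
      exfalso
      have hX1' : 1 < X := by
        rw [hXdef]
        exact (Real.one_lt_rpow_iff_of_pos hB0).2 (Or.inl ⟨hBgt, hexp0⟩)
      have hXM' : X < M := by
        rw [hXdef, ← hcollapse]
        exact Real.rpow_lt_rpow hB0.le hBlt hexp0
      have hu0 : 0 < Real.log X := Real.log_pos hX1'
      have huL : Real.log X < L := by rw [hLdef]; exact Real.log_lt_log hX0 hXM'
      have hstrict := hchords (Real.log X) hu0 huL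
      have h1 : Real.log A ≤ Φ (Real.log X) := by
        rw [hΦlog X hX1]
        exact Real.log_le_log hA0 hAψ
      have h2 : Φ (Real.log X) < Φ L * Real.log X / L := (lt_div_iff₀ hLpos).2 hstrict
      have h3 : lam * Real.log B = Φ L * Real.log X / L := by
        rw [hlam, ← hψM, hlogB]
        field_simp [hq1', hLpos.ne']
      linarith
  · -- characterization → equality
    intro hcase
    rcases hcase with hνμ | ⟨xs, hμxs, hνd⟩
    · have hf1 : ∀ x, f x = 1 := by
        intro x
        simp only [hfdef, hνμ]
        exact div_self (hμpos x).ne'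
      have hBeq : B = 1 := by
        rw [hBdef]
        rw [Finset.sum_congr rfl fun x _ => by rw [hf1 x, Real.one_rpow, mul_one]]
        exact hμsum
      have hAeq : A = 1 := by
        rw [hAdef]
        rw [Finset.sum_congr rfl fun x _ => by
          rw [hf1 x, show ρ*1+(1-ρ) = 1 by ring, Real.one_rpow, mul_one]]
        exact hμsum
      rw [hAeq, hBeq, Real.log_one]
      ring
    · -- point mass
      have hfeq : ∀ y, f y = if y = xs then M else 0 := by
        intro y
        by_cases hy : y = xs
        · rw [if_pos hy]
          simp only [hfdef]
          rw [hy, hνd xs, if_pos rfl, hμxs, hMdef]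
        · rw [if_neg hy]
          simp only [hfdef]
          rw [hνd y, if_neg hy, zero_div]
      have hBeq : B = M^(q-1) := by
        have e : ∀ y : Ω, μ y * f y ^ q = if y = xs then μs * M^q else 0 := by
          intro y
          by_cases hy : y = xs
          · rw [if_pos hy, hfeq y, if_pos hy, hy, hμxs]
          · rw [if_neg hy, hfeq y, if_neg hy, Real.zero_rpow hq0.ne', mul_zero]
        rw [hBdef, Finset.sum_congr rfl fun y _ => e y, Finset.sum_ite_eq' Finset.univ xs
          (fun _ => μs * M^q), if_pos (Finset.mem_univ xs)]
        have e2 : M^q = M^(q-1) * M := by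
          rw [← Real.rpow_add_one hMpos.ne' (q-1)]; congr 1; ring
        rw [e2, show μs * (M^(q-1) * M) = M^(q-1) * (M * μs) from by ring, hMμs, mul_one]
      have hAeq : A = μs * (1 + ρ * (M - 1)) ^ q + (1 - μs) * (1 - ρ) ^ q := by
        have e : ∀ y : Ω, μ y * (ρ * f y + (1 - ρ)) ^ q
            = μ y * (1-ρ)^q
              + (if y = xs then μs * (1 + ρ*(M-1))^q - μs * (1-ρ)^q else 0) := by
          intro y
          by_cases hy : y = xs
          · rw [if_pos hy, hfeq y, if_pos hy, hy, hμxs,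
              show ρ * M + (1 - ρ) = 1 + ρ*(M-1) by ring]
            ring
          · rw [if_neg hy, hfeq y, if_neg hy, show ρ * 0 + (1 - ρ) = 1 - ρ by ring]
            ring
        rw [hAdef, Finset.sum_congr rfl fun y _ => e y, Finset.sum_add_distrib,
          Finset.sum_ite_eq' Finset.univ xs
            (fun _ => μs * (1 + ρ*(M-1))^q - μs * (1-ρ)^q),
          if_pos (Finset.mem_univ xs), ← Finset.sum_mul, hμsum, one_mul]
        ring
      rw [hAeq, hBeq, Real.log_rpow hMpos, hlam, ← hLdef]
      field_simp [hq1', hLpos.ne']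
end

section
/- Let q ≥ 2, let k ≥ 3 be an integer, α > 0, and 0 < ρ < 1. Let X be a finitely supported real random variable with E[X] = 0 and −1 ≤ X ≤ α whose support has size at least 3 and at most k. Then there exists a finitely supported real random variable X' with E[X'] = 0, −1 ≤ X' ≤ α, X' not almost surely 0, and support of size at most k, such that R_{q,ρ}(X) < R_{q,ρ}(X'). -/
open Finset

/-- `N_{q,ρ}(X) = E[(1+ρX)^q]` for a finitely supported random variable given by its
probability mass function `ν : ℝ →₀ ℝ` on values. -/
noncomputable def Nfun (ν : ℝ →₀ ℝ) (q ρ : ℝ) : ℝ :=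
  ∑ t ∈ ν.support, ν t * (1 + ρ * t) ^ q

/-- `R_{q,ρ}(X) = ln N_{q,ρ}(X) / ln N_{q,1}(X)`. -/
noncomputable def Rfun (ν : ℝ →₀ ℝ) (q ρ : ℝ) : ℝ :=
  Real.log (Nfun ν q ρ) / Real.log (Nfun ν q 1)


lemma slopeMVT (q a b : ℝ) (hq : 1 ≤ q) (ha : -1 ≤ a) (hab : a < b) :
    ∃ ξ, a < ξ ∧ ξ < b ∧ (1+b)^q - (1+a)^q = q * (1+ξ)^(q-1) * (b-a) := by
  have hcont : ContinuousOn (fun u : ℝ => (1+u)^q) (Set.Icc a b) :=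
    (Continuous.rpow_const (by continuity) (fun u => Or.inr (by linarith))).continuousOn
  have hderiv : ∀ u ∈ Set.Ioo a b, HasDerivAt (fun u : ℝ => (1+u)^q) (q * (1+u)^(q-1)) u := by
    intro u hu
    have h0 : (1:ℝ) + u ≠ 0 := by have := hu.1; intro h; nlinarith
    have hinner : HasDerivAt (fun v : ℝ => 1 + v) 1 u := (hasDerivAt_id u).const_add 1
    have := (Real.hasDerivAt_rpow_const (x := 1+u) (p := q) (Or.inl h0)).comp u hinner
    exact this.congr_deriv (by ring)
  obtain ⟨ξ, hξ, heq⟩ := exists_hasDerivAt_eq_slope _ _ hab hcont hderiv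
  refine ⟨ξ, hξ.1, hξ.2, ?_⟩
  rw [eq_div_iff (by linarith : b - a ≠ 0)] at heq
  linarith

lemma gmono_pos (q a b : ℝ) (hq : 1 < q) (ha : 0 ≤ a) (hab : a < b) :
    (1+a)^q - q*a < (1+b)^q - q*b := by
  obtain ⟨ξ, h1, h2, e⟩ := slopeMVT q a b hq.le (by linarith) hab
  have hP : 1 < (1+ξ)^(q-1) :=
    (Real.one_lt_rpow_iff_of_pos (by linarith)).mpr (Or.inl ⟨by linarith, by linarith⟩)
  have h3 : 0 < q*(b-a)*((1+ξ)^(q-1) - 1) := by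
    apply mul_pos (mul_pos (by linarith) (by linarith)); linarith
  have key : ((1+b)^q - q*b) - ((1+a)^q - q*a) = q*(b-a)*((1+ξ)^(q-1) - 1) := by
    linear_combination e
  linarith

lemma gmono_neg (q a b : ℝ) (hq : 1 < q) (ha : -1 ≤ a) (hab : a < b) (hb : b ≤ 0) :
    (1+b)^q - q*b < (1+a)^q - q*a := by
  obtain ⟨ξ, h1, h2, e⟩ := slopeMVT q a b hq.le ha hab
  have hP : (1+ξ)^(q-1) < 1 :=
    Real.rpow_lt_one (by linarith) (by linarith) (by linarith)
  have h3 : 0 < q*(b-a)*(1 - (1+ξ)^(q-1)) := by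
    apply mul_pos (mul_pos (by linarith) (by linarith)); linarith
  have key : ((1+a)^q - q*a) - ((1+b)^q - q*b) = q*(b-a)*(1 - (1+ξ)^(q-1)) := by
    linear_combination -e
  linarith

lemma Dpos (q x y z : ℝ) (hq : 1 < q) (hx : -1 ≤ x) (hxy : x < y) (hyz : y < z) :
    0 < (z-y)*(1+x)^q + (x-z)*(1+y)^q + (y-x)*(1+z)^q := by
  obtain ⟨ξ₁, h11, h12, e1⟩ := slopeMVT q x y hq.le hx hxy
  obtain ⟨ξ₂, h21, h22, e2⟩ := slopeMVT q y z hq.le (by linarith) hyz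
  have hlt : (1+ξ₁)^(q-1) < (1+ξ₂)^(q-1) :=
    Real.rpow_lt_rpow (by linarith) (by linarith) (by linarith)
  have key : (z-y)*(1+x)^q + (x-z)*(1+y)^q + (y-x)*(1+z)^q
      = q*((y-x)*(z-y))*((1+ξ₂)^(q-1) - (1+ξ₁)^(q-1)) := by
    linear_combination (y-x)*e2 - (z-y)*e1
  rw [key]
  apply mul_pos (mul_pos (by linarith) (mul_pos (by linarith) (by linarith)))
  linarith


lemma core (Nρ N1 Dρ D1 δ : ℝ) (h1 : 1 < Nρ) (h2 : Nρ < N1) (hD1 : 0 < D1) (hδ : 0 < δ) :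
    ∃ ε : ℝ, ε ≠ 0 ∧ |ε| < δ ∧
      Real.log Nρ / Real.log N1 < Real.log (Nρ + ε * Dρ) / Real.log (N1 + ε * D1) := by
  set Lρ := Real.log Nρ with hLρdef
  set L1 := Real.log N1 with hL1def
  have hLρ : 0 < Lρ := Real.log_pos h1
  have hLL : Lρ < L1 := Real.log_lt_log (by linarith) h2
  have hL1 : 0 < L1 := lt_trans hLρ hLL
  set δ₀ : ℝ := min δ (min ((Nρ-1)/(|Dρ|+1)) ((N1-1)/(|D1|+1))) with hδ₀def
  have hδ₀ : 0 < δ₀ := by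
    refine lt_min hδ (lt_min ?_ ?_) <;>
      exact div_pos (by linarith) (by positivity)
  have hδ₀δ : δ₀ ≤ δ := min_le_left _ _
  have hP : ∀ ε : ℝ, |ε| ≤ δ₀ → 1 < Nρ + ε * Dρ := by
    intro ε hε
    have h3 : δ₀ * (|Dρ|+1) ≤ Nρ - 1 := by
      have : δ₀ ≤ (Nρ-1)/(|Dρ|+1) := le_trans (min_le_right _ _) (min_le_left _ _)
      rw [div_eq_mul_inv] at this
      calc δ₀ * (|Dρ|+1) ≤ ((Nρ-1) * (|Dρ|+1)⁻¹) * (|Dρ|+1) := by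
            apply mul_le_mul_of_nonneg_right this (by positivity)
        _ = Nρ - 1 := by field_simp
    have h4 : |ε * Dρ| < Nρ - 1 := by
      rw [abs_mul]
      have : |ε| * |Dρ| ≤ δ₀ * |Dρ| := mul_le_mul_of_nonneg_right hε (abs_nonneg _)
      nlinarith [abs_nonneg Dρ]
    have := neg_abs_le (ε * Dρ)
    linarith
  have hQ : ∀ ε : ℝ, |ε| ≤ δ₀ → 1 < N1 + ε * D1 := by
    intro ε hε
    have h3 : δ₀ * (|D1|+1) ≤ N1 - 1 := by
      have : δ₀ ≤ (N1-1)/(|D1|+1) := le_trans (min_le_right _ _) (min_le_right _ _)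
      rw [div_eq_mul_inv] at this
      calc δ₀ * (|D1|+1) ≤ ((N1-1) * (|D1|+1)⁻¹) * (|D1|+1) := by
            apply mul_le_mul_of_nonneg_right this (by positivity)
        _ = N1 - 1 := by field_simp
    have h4 : |ε * D1| < N1 - 1 := by
      rw [abs_mul]
      have : |ε| * |D1| ≤ δ₀ * |D1| := mul_le_mul_of_nonneg_right hε (abs_nonneg _)
      nlinarith [abs_nonneg D1]
    have := neg_abs_le (ε * D1)
    linarith
  set A : ℝ := L1*Dρ*N1 - Lρ*D1*Nρ with hAdef
  set B : ℝ := D1*Dρ*(L1-Lρ) with hBdef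
  set f : ℝ → ℝ := fun e => L1 * Real.log (Nρ + e*Dρ) - Lρ * Real.log (N1 + e*D1) with hfdef
  have hf0 : f 0 = 0 := by simp [hfdef, ← hLρdef, ← hL1def]; ring
  have hderiv : ∀ e : ℝ, |e| ≤ δ₀ →
      HasDerivAt f (L1*(Dρ/(Nρ + e*Dρ)) - Lρ*(D1/(N1 + e*D1))) e := by
    intro e he
    have hPe : (0:ℝ) < Nρ + e*Dρ := by linarith [hP e he]
    have hQe : (0:ℝ) < N1 + e*D1 := by linarith [hQ e he]
    have d1 : HasDerivAt (fun x : ℝ => Nρ + x*Dρ) Dρ e := by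
      simpa using ((hasDerivAt_id e).mul_const Dρ).const_add Nρ
    have d2 : HasDerivAt (fun x : ℝ => N1 + x*D1) D1 e := by
      simpa using ((hasDerivAt_id e).mul_const D1).const_add N1
    exact ((d1.log hPe.ne').const_mul L1).sub ((d2.log hQe.ne').const_mul Lρ)
  have hsignp : ∀ e : ℝ, |e| ≤ δ₀ → 0 < A + e*B →
      0 < L1*(Dρ/(Nρ + e*Dρ)) - Lρ*(D1/(N1 + e*D1)) := by
    intro e he hAB
    have hPe : (0:ℝ) < Nρ + e*Dρ := by linarith [hP e he]
    have hQe : (0:ℝ) < N1 + e*D1 := by linarith [hQ e he]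
    have hid : L1*(Dρ/(Nρ + e*Dρ)) - Lρ*(D1/(N1 + e*D1))
        = (A + e*B)/((Nρ + e*Dρ)*(N1 + e*D1)) := by
      rw [hAdef, hBdef, mul_div_assoc', mul_div_assoc', div_sub_div _ _ hPe.ne' hQe.ne']
      ring
    rw [hid]
    positivity
  have hsignn : ∀ e : ℝ, |e| ≤ δ₀ → A + e*B < 0 →
      L1*(Dρ/(Nρ + e*Dρ)) - Lρ*(D1/(N1 + e*D1)) < 0 := by
    intro e he hAB
    have hPe : (0:ℝ) < Nρ + e*Dρ := by linarith [hP e he]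
    have hQe : (0:ℝ) < N1 + e*D1 := by linarith [hQ e he]
    have hid : L1*(Dρ/(Nρ + e*Dρ)) - Lρ*(D1/(N1 + e*D1))
        = (A + e*B)/((Nρ + e*Dρ)*(N1 + e*D1)) := by
      rw [hAdef, hBdef, mul_div_assoc', mul_div_assoc', div_sub_div _ _ hPe.ne' hQe.ne']
      ring
    rw [hid]
    exact div_neg_of_neg_of_pos hAB (by positivity)
  -- conversion of a positive f value at admissible ε to the goal
  have finish : ∀ ε : ℝ, ε ≠ 0 → |ε| ≤ δ₀ → 0 < f ε →
      Real.log Nρ / Real.log N1 < Real.log (Nρ + ε * Dρ) / Real.log (N1 + ε * D1) := by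
    intro ε hne hεδ hfε
    have hQe : 1 < N1 + ε*D1 := hQ ε hεδ
    have hlogQ : 0 < Real.log (N1 + ε*D1) := Real.log_pos hQe
    rw [← hLρdef, ← hL1def, div_lt_div_iff₀ hL1 hlogQ]
    simp only [hfdef] at hfε
    linarith
  have finpos : ∀ δ₁ : ℝ, 0 < δ₁ → δ₁ ≤ δ₀ →
      (∀ s : ℝ, 0 < s → s < δ₁ → 0 < A + s*B) →
      ∃ ε : ℝ, ε ≠ 0 ∧ |ε| < δ ∧
      Real.log Nρ / Real.log N1 < Real.log (Nρ + ε * Dρ) / Real.log (N1 + ε * D1) := by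
    intro δ₁ hδ₁ hδ₁₀ hs
    set ε := δ₁/2 with hεdef
    have hε0 : 0 < ε := by positivity
    have hεδ₀ : ∀ s ∈ Set.Icc (0:ℝ) ε, |s| ≤ δ₀ := by
      intro s hsi
      rw [abs_le]; constructor <;> [linarith [hsi.1]; linarith [hsi.2, half_le_self hδ₁.le, hδ₁₀]]
    have hmono : StrictMonoOn f (Set.Icc 0 ε) := by
      apply strictMonoOn_of_deriv_pos (convex_Icc _ _)
      · intro s hsi
        exact (hderiv s (hεδ₀ s hsi)).continuousAt.continuousWithinAt
      · intro s hsi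
        rw [interior_Icc] at hsi
        have hd := hderiv s (hεδ₀ s ⟨hsi.1.le, hsi.2.le⟩)
        rw [hd.deriv]
        exact hsignp s (hεδ₀ s ⟨hsi.1.le, hsi.2.le⟩) (hs s hsi.1 (by linarith [hsi.2]))
    have : f 0 < f ε := hmono (Set.mem_Icc.mpr ⟨le_refl _, hε0.le⟩)
      (Set.mem_Icc.mpr ⟨hε0.le, le_refl _⟩) hε0
    have hf0 : f 0 = 0 := by simp [hfdef, ← hLρdef, ← hL1def]; ring
    refine ⟨ε, hε0.ne', ?_, finish ε hε0.ne' (hεδ₀ ε ⟨hε0.le, le_refl _⟩) (by linarith)⟩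
    rw [abs_of_pos hε0]
    linarith [half_lt_self hδ₁]
  have finneg : ∀ δ₁ : ℝ, 0 < δ₁ → δ₁ ≤ δ₀ →
      (∀ s : ℝ, -δ₁ < s → s < 0 → A + s*B < 0) →
      ∃ ε : ℝ, ε ≠ 0 ∧ |ε| < δ ∧
      Real.log Nρ / Real.log N1 < Real.log (Nρ + ε * Dρ) / Real.log (N1 + ε * D1) := by
    intro δ₁ hδ₁ hδ₁₀ hs
    have hε0 : -(δ₁/2) < 0 := by linarith
    have hεδ₀ : ∀ s ∈ Set.Icc (-(δ₁/2)) (0:ℝ), |s| ≤ δ₀ := by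
      intro s hsi
      rw [abs_le]
      exact ⟨by linarith [hsi.1], by linarith [hsi.2]⟩
    have hmono : StrictAntiOn f (Set.Icc (-(δ₁/2)) 0) := by
      apply strictAntiOn_of_deriv_neg (convex_Icc _ _)
      · intro s hsi
        exact (hderiv s (hεδ₀ s hsi)).continuousAt.continuousWithinAt
      · intro s hsi
        rw [interior_Icc] at hsi
        have hd := hderiv s (hεδ₀ s ⟨hsi.1.le, hsi.2.le⟩)
        rw [hd.deriv]
        exact hsignn s (hεδ₀ s ⟨hsi.1.le, hsi.2.le⟩)
          (hs s (by linarith [hsi.1]) hsi.2)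
    have hfε : 0 < f (-(δ₁/2)) := by
      have h := hmono (Set.mem_Icc.mpr ⟨le_refl _, hε0.le⟩)
        (Set.mem_Icc.mpr ⟨hε0.le, le_refl _⟩) hε0
      rw [hf0] at h
      exact h
    refine ⟨-(δ₁/2), hε0.ne, ?_, finish _ hε0.ne (hεδ₀ _ ⟨le_refl _, hε0.le⟩) hfε⟩
    rw [abs_of_neg hε0]
    linarith
  rcases lt_trichotomy A 0 with hA | hA | hA
  · refine finneg (min δ₀ ((-A)/(|B|+1))) (lt_min hδ₀ (div_pos (by linarith) (by positivity))) (min_le_left _ _) ?_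
    intro s hs1 hs2
    have habs : -s < (-A)/(|B|+1) := lt_of_lt_of_le (by linarith) (min_le_right _ _)
    have h6 : (-s) * (|B|+1) < -A := by
      have h := mul_lt_mul_of_pos_right habs (show (0:ℝ) < |B|+1 by positivity)
      rwa [div_mul_cancel₀ _ (by positivity : (|B|:ℝ)+1 ≠ 0)] at h
    clear habs
    have h7 : s*B ≤ (-s)*|B| := by nlinarith [le_abs_self B, neg_abs_le B, abs_nonneg B]
    nlinarith [abs_nonneg B]
  · have h9 : L1*Dρ*N1 = Lρ*D1*Nρ := by
      have : A = 0 := hA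
      rw [hAdef] at this
      linarith
    have h8 : 0 < Lρ*D1*Nρ := mul_pos (mul_pos hLρ hD1) (by linarith)
    have hDρ : 0 < Dρ := by
      by_contra hc
      push_neg at hc
      have h10 : 0 ≤ L1 * N1 * (-Dρ) :=
        mul_nonneg (mul_nonneg hL1.le (by linarith)) (by linarith)
      nlinarith
    have hB : 0 < B := by
      rw [hBdef]
      exact mul_pos (mul_pos hD1 hDρ) (by linarith)
    refine finpos δ₀ hδ₀ (le_refl _) ?_
    intro s hs1 _
    have h10 : 0 < s*B := mul_pos hs1 hB
    have h11 : A = 0 := hA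
    rw [h11]
    linarith
  · refine finpos (min δ₀ (A/(|B|+1))) (lt_min hδ₀ (by positivity)) (min_le_left _ _) ?_
    intro s hs1 hs2
    have habs : s < A/(|B|+1) := lt_of_lt_of_le hs2 (min_le_right _ _)
    have h6 : s * (|B|+1) < A := by
      have h := mul_lt_mul_of_pos_right habs (show (0:ℝ) < |B|+1 by positivity)
      rwa [div_mul_cancel₀ _ (by positivity : (|B|:ℝ)+1 ≠ 0)] at h
    clear habs
    have h7 : -(s*|B|) ≤ s*B := by nlinarith [le_abs_self B, neg_abs_le B, abs_nonneg B]
    nlinarith [abs_nonneg B]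

lemma Nfun_gt_one (ν : ℝ →₀ ℝ) (q r : ℝ) (hq : 1 < q) (hr0 : 0 < r) (hr1 : r ≤ 1)
    (hpos : ∀ t ∈ ν.support, 0 < ν t)
    (hsum : ∑ t ∈ ν.support, ν t = 1)
    (hmean : ∑ t ∈ ν.support, ν t * t = 0)
    (hrg : ∀ t ∈ ν.support, -1 ≤ t)
    (t₀ : ℝ) (ht₀ : t₀ ∈ ν.support) (ht₀0 : t₀ ≠ 0) :
    1 < Nfun ν q r := by
  have key : ∀ t, t ∈ ν.support → t ≠ 0 → 1 + q*r*t < (1+r*t)^q := by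
    intro t ht ht0
    rcases lt_trichotomy t 0 with h | h | h
    · have hm1 : -1 ≤ r*t := by nlinarith [hrg t ht]
      have := gmono_neg q (r*t) 0 hq hm1 (by nlinarith) le_rfl
      norm_num [Real.one_rpow] at this
      linarith
    · exact absurd h ht0
    · have := gmono_pos q 0 (r*t) hq le_rfl (by positivity)
      norm_num [Real.one_rpow] at this
      linarith
  have keyle : ∀ t ∈ ν.support, 1 + q*r*t ≤ (1+r*t)^q := by
    intro t ht
    by_cases ht0 : t = 0
    · subst ht0; norm_num [Real.one_rpow]
    · exact (key t ht ht0).le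
  have hlt : ∑ t ∈ ν.support, ν t * (1 + q*r*t) < ∑ t ∈ ν.support, ν t * (1+r*t)^q :=
    Finset.sum_lt_sum (fun t ht => mul_le_mul_of_nonneg_left (keyle t ht) (hpos t ht).le)
      ⟨t₀, ht₀, mul_lt_mul_of_pos_left (key t₀ ht₀ ht₀0) (hpos t₀ ht₀)⟩
  have hL : ∑ t ∈ ν.support, ν t * (1 + q*r*t) = 1 := by
    rw [Finset.sum_congr rfl (fun t _ => by ring :
      ∀ t ∈ ν.support, ν t * (1 + q*r*t) = ν t + (q*r)*(ν t * t))]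
    rw [Finset.sum_add_distrib, hsum, ← Finset.mul_sum, hmean]
    ring
  rw [Nfun]
  linarith

lemma Nfun_lt_N1 (ν : ℝ →₀ ℝ) (q ρ : ℝ) (hq : 1 < q) (hρ0 : 0 < ρ) (hρ1 : ρ < 1)
    (hpos : ∀ t ∈ ν.support, 0 < ν t)
    (hmean : ∑ t ∈ ν.support, ν t * t = 0)
    (hrg : ∀ t ∈ ν.support, -1 ≤ t)
    (t₀ : ℝ) (ht₀ : t₀ ∈ ν.support) (ht₀0 : t₀ ≠ 0) :
    Nfun ν q ρ < Nfun ν q 1 := by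
  have key : ∀ t, t ∈ ν.support → t ≠ 0 → (1+ρ*t)^q < (1+t)^q + q*(ρ-1)*t := by
    intro t ht ht0
    rcases lt_trichotomy t 0 with h | h | h
    · have := gmono_neg q t (ρ*t) hq (hrg t ht) (by nlinarith) (by nlinarith)
      linarith
    · exact absurd h ht0
    · have := gmono_pos q (ρ*t) t hq (by positivity) (by nlinarith)
      linarith
  have keyle : ∀ t ∈ ν.support, (1+ρ*t)^q ≤ (1+t)^q + q*(ρ-1)*t := by
    intro t ht
    by_cases ht0 : t = 0
    · subst ht0; norm_num
    · exact (key t ht ht0).le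
  have hlt : ∑ t ∈ ν.support, ν t * (1+ρ*t)^q
      < ∑ t ∈ ν.support, ν t * ((1+t)^q + q*(ρ-1)*t) :=
    Finset.sum_lt_sum (fun t ht => mul_le_mul_of_nonneg_left (keyle t ht) (hpos t ht).le)
      ⟨t₀, ht₀, mul_lt_mul_of_pos_left (key t₀ ht₀ ht₀0) (hpos t₀ ht₀)⟩
  have hR : ∑ t ∈ ν.support, ν t * ((1+t)^q + q*(ρ-1)*t)
      = ∑ t ∈ ν.support, ν t * (1+t)^q := by
    rw [Finset.sum_congr rfl (fun t _ => by ring :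
      ∀ t ∈ ν.support, ν t * ((1+t)^q + q*(ρ-1)*t) = ν t * (1+t)^q + (q*(ρ-1))*(ν t * t))]
    rw [Finset.sum_add_distrib, ← Finset.mul_sum, hmean]
    ring
  rw [Nfun, Nfun]
  simp only [one_mul]
  linarith

theorem stmt9 (q ρ α : ℝ) (k : ℕ) (hq : 2 ≤ q) (hk : 3 ≤ k)
    (hρ0 : 0 < ρ) (hρ1 : ρ < 1) (hα : 0 < α)
    (ν : ℝ →₀ ℝ) (hνpos : ∀ t, 0 ≤ ν t) (hνsum : ∑ t ∈ ν.support, ν t = 1)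
    (hmean : ∑ t ∈ ν.support, ν t * t = 0)
    (hrange : ∀ t ∈ ν.support, -1 ≤ t ∧ t ≤ α)
    (hsupp3 : 3 ≤ ν.support.card) (hsuppk : ν.support.card ≤ k) :
    ∃ ν' : ℝ →₀ ℝ, (∀ t, 0 ≤ ν' t) ∧ (∑ t ∈ ν'.support, ν' t = 1) ∧
      (∑ t ∈ ν'.support, ν' t * t = 0) ∧
      (∀ t ∈ ν'.support, -1 ≤ t ∧ t ≤ α) ∧
      (∃ t ∈ ν'.support, t ≠ 0) ∧
      ν'.support.card ≤ k ∧
      Rfun ν q ρ < Rfun ν' q ρ := by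
  classical
  have hq1 : 1 < q := by linarith
  set S := ν.support with hSdef
  have hpos : ∀ t ∈ S, 0 < ν t := fun t ht =>
    lt_of_le_of_ne (hνpos t) (Ne.symm (Finsupp.mem_support_iff.mp ht))
  have hrg : ∀ t ∈ S, -1 ≤ t := fun t ht => (hrange t ht).1
  have hne : S.Nonempty := Finset.card_pos.mp (by omega)
  set x := S.min' hne with hxdef
  set z := S.max' hne with hzdef
  have hx : x ∈ S := S.min'_mem hne
  have hz : z ∈ S := S.max'_mem hne
  have hxz : x < z := S.min'_lt_max'_of_card (by omega)
  have hmidcard : 0 < (S \ {x, z}).card := by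
    have h1 : ({x, z} : Finset ℝ).card ≤ 2 :=
      le_trans (Finset.card_insert_le _ _) (by simp)
    have h2 := Finset.le_card_sdiff ({x, z} : Finset ℝ) S
    omega
  obtain ⟨y, hymem⟩ := Finset.card_pos.mp hmidcard
  rw [Finset.mem_sdiff] at hymem
  obtain ⟨hyS, hynotin⟩ := hymem
  have hyx : y ≠ x := fun h => hynotin (by simp [h])
  have hyz' : y ≠ z := fun h => hynotin (by simp [h])
  have hxy : x < y := lt_of_le_of_ne (S.min'_le y hyS) (Ne.symm hyx)
  have hyz : y < z := lt_of_le_of_ne (S.le_max' y hyS) hyz'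
  -- a nonzero support point
  obtain ⟨t₀, ht₀S, ht₀0⟩ : ∃ t ∈ S, t ≠ 0 := by
    by_cases h0 : z = 0
    · exact ⟨y, hyS, by rw [h0] at hyz; exact ne_of_lt hyz⟩
    · exact ⟨z, hz, h0⟩
  -- N and D quantities
  set Nρ := Nfun ν q ρ with hNρdef
  set N1 := Nfun ν q 1 with hN1def
  set Dρ : ℝ := (z-y)*(1+ρ*x)^q + (x-z)*(1+ρ*y)^q + (y-x)*(1+ρ*z)^q with hDρdef
  set D1 : ℝ := (z-y)*(1+1*x)^q + (x-z)*(1+1*y)^q + (y-x)*(1+1*z)^q with hD1def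
  have hNρ1 : 1 < Nρ :=
    Nfun_gt_one ν q ρ hq1 hρ0 hρ1.le hpos hνsum hmean hrg t₀ ht₀S ht₀0
  have hNρN1 : Nρ < N1 :=
    Nfun_lt_N1 ν q ρ hq1 hρ0 hρ1 hpos hmean hrg t₀ ht₀S ht₀0
  have hD1pos : 0 < D1 := by
    rw [hD1def]
    simp only [one_mul]
    exact Dpos q x y z hq1 (hrg x hx) hxy hyz
  -- perturbation direction
  set w : ℝ → ℝ := fun t => if t = x then z-y else if t = y then x-z else if t = z then y-x else 0
    with hw
  set C : ℝ := |z-y| + |x-z| + |y-x| + 1 with hC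
  have hCpos : 0 < C := by positivity
  have hwb : ∀ t, |w t| ≤ C := by
    intro t
    rw [hC]
    simp only [hw]
    split_ifs
    · linarith [abs_nonneg (x-z), abs_nonneg (y-x), le_abs_self (z-y)]
    · linarith [abs_nonneg (z-y), abs_nonneg (y-x), le_abs_self (x-z)]
    · linarith [abs_nonneg (z-y), abs_nonneg (x-z), le_abs_self (y-x)]
    · rw [abs_zero]; positivity
  set m : ℝ := S.inf' hne (fun t => ν t) with hm
  have hm0 : 0 < m := (Finset.lt_inf'_iff hne).mpr hpos
  have hmle : ∀ t ∈ S, m ≤ ν t := fun t ht => Finset.inf'_le _ ht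
  have hδpos : 0 < m / C := div_pos hm0 hCpos
  obtain ⟨ε, hε0, hεδ, hεR⟩ := core Nρ N1 Dρ D1 (m / C) hNρ1 hNρN1 hD1pos hδpos
  have hνε : ∀ t ∈ S, 0 < ν t + ε * w t := by
    intro t ht
    have h1 : |ε| * C < m := by
      have h := mul_lt_mul_of_pos_right hεδ hCpos
      rwa [div_mul_cancel₀ _ hCpos.ne'] at h
    have h2 : |ε * w t| ≤ |ε| * C := by
      rw [abs_mul]
      exact mul_le_mul_of_nonneg_left (hwb t) (abs_nonneg ε)
    have h3 : m ≤ ν t := hmle t ht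
    linarith [neg_abs_le (ε * w t)]
  have hw0 : ∀ a, a ∉ S → w a = 0 := by
    intro a ha
    simp only [hw]
    split_ifs with h1 h2 h3
    · subst h1; exact absurd hx ha
    · subst h2; exact absurd hyS ha
    · subst h3; exact absurd hz ha
    · rfl
  set ν' : ℝ →₀ ℝ := ⟨S, fun t => ν t + ε * w t, by
    intro a
    constructor
    · intro ha; exact (hνε a ha).ne'
    · intro hne2
      by_contra haS
      apply hne2
      have hν0 : ν a = 0 := Finsupp.notMem_support_iff.mp haS
      show ν a + ε * w a = 0
      rw [hν0, hw0 a haS, mul_zero, add_zero]⟩ with hν'def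
  have hν'coe : ∀ t, ν' t = ν t + ε * w t := fun _ => rfl
  have hν'supp : ν'.support = S := rfl
  -- sum of w against any function
  have hsubset : ({x, y, z} : Finset ℝ) ⊆ S := by
    intro t ht
    simp only [Finset.mem_insert, Finset.mem_singleton] at ht
    rcases ht with rfl | rfl | rfl <;> assumption
  have hsum3 : ∀ h : ℝ → ℝ, ∑ t ∈ S, w t * h t = (z-y)*h x + (x-z)*h y + (y-x)*h z := by
    intro h
    rw [← Finset.sum_subset hsubset (fun t _ htn => ?_)]
    · have hxmem : x ∉ ({y, z} : Finset ℝ) := by simp [Ne.symm hyx, hxz.ne]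
      have hymem2 : y ∉ ({z} : Finset ℝ) := by simp [hyz']
      rw [Finset.sum_insert hxmem, Finset.sum_insert hymem2, Finset.sum_singleton]
      have hwx : w x = z - y := by simp [hw, hxy.ne']
      have hwy : w y = x - z := by simp [hw, hyx]
      have hwz : w z = y - x := by simp [hw, hxz.ne', Ne.symm hyz']
      rw [hwx, hwy, hwz]
      ring
    · have hn : w t = 0 := by
        simp only [Finset.mem_insert, Finset.mem_singleton] at htn
        push_neg at htn
        simp [hw, htn.1, htn.2.1, htn.2.2]
      rw [hn, zero_mul]
  have hsumgen : ∀ h : ℝ → ℝ, ∑ t ∈ S, ν' t * h t =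
      ∑ t ∈ S, ν t * h t + ε * ((z-y)*h x + (x-z)*h y + (y-x)*h z) := by
    intro h
    calc ∑ t ∈ S, ν' t * h t
        = ∑ t ∈ S, (ν t * h t + ε * (w t * h t)) :=
          Finset.sum_congr rfl (fun t _ => by rw [hν'coe t]; ring)
      _ = ∑ t ∈ S, ν t * h t + ε * ∑ t ∈ S, w t * h t := by
          rw [Finset.sum_add_distrib, ← Finset.mul_sum]
      _ = _ := by rw [hsum3 h]
  refine ⟨ν', ?_, ?_, ?_, ?_, ⟨t₀, ht₀S, ht₀0⟩, le_trans (le_of_eq (by rw [hν'supp])) hsuppk, ?_⟩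
  · intro t
    by_cases ht : t ∈ S
    · exact (hνε t ht).le
    · have : ν' t = 0 := Finsupp.notMem_support_iff.mp (by rwa [hν'supp])
      rw [this]
  · rw [hν'supp]
    have h := hsumgen (fun _ => 1)
    simp only [mul_one] at h
    rw [h, hνsum]
    ring
  · rw [hν'supp]
    have h := hsumgen (fun t => t)
    rw [h, hmean]
    ring
  · intro t ht
    rw [hν'supp] at ht
    exact hrange t ht
  · have hNν'ρ : Nfun ν' q ρ = Nρ + ε * Dρ := by
      rw [Nfun, hν'supp, hsumgen (fun t => (1 + ρ*t)^q), hNρdef, Nfun, hDρdef]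
    have hNν'1 : Nfun ν' q 1 = N1 + ε * D1 := by
      rw [Nfun, hν'supp, hsumgen (fun t => (1 + 1*t)^q), hN1def, Nfun, hD1def]
    rw [Rfun, Rfun, hNν'ρ, hNν'1]
    exact hεR
end

section
/- Let q > 2, z ≥ −1, and 0 < ρ < 1. Then the ratio h(ρ,y,z) := g(1,y,z)/g(ρ,y,z) is strictly increasing in y ≥ −1; in particular, for all −1 ≤ y₁ < y₂ with y₁ ≠ z and y₂ ≠ z it holds that g(1,y₁,z)·g(ρ,y₂,z) < g(1,y₂,z)·g(ρ,y₁,z). -/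
open Set

/-- Monotone L'Hôpital rule: if `f z = g z = 0`, `f' = R · g'` on `Ici a` with `R` strictly
monotone, and `g'` has the appropriate sign pattern, then the continuously extended ratio
`f/g` is strictly monotone on `Ici a`. -/
lemma ratio_aux {a z : ℝ} (haz : a ≤ z) (f g f' g' R : ℝ → ℝ)
    (hf : ∀ y, HasDerivAt f (f' y) y) (hg : ∀ y, HasDerivAt g (g' y) y)
    (hfz : f z = 0) (hgz : g z = 0)
    (hfac : ∀ y ∈ Ici a, f' y = R y * g' y)
    (hR : StrictMonoOn R (Ici a))
    (hpos : ∀ y ∈ Ici a, z < y → 0 < g' y)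
    (hneg : (∀ y ∈ Ici a, y < z → g' y < 0) ∨ (∀ y ∈ Ici a, y < z → 0 < g' y)) :
    StrictMonoOn (fun y => if y = z then R z else f y / g y) (Ici a) ∧
      (∀ y ∈ Ici a, z < y → 0 < g y) ∧
      ((∀ y ∈ Ici a, y < z → g' y < 0) → ∀ y ∈ Ici a, y < z → 0 < g y) := by
  have hgc : Continuous g :=
    continuous_iff_continuousAt.2 fun y => (hg y).differentiableAt.continuousAt
  have hfc : Continuous f :=
    continuous_iff_continuousAt.2 fun y => (hf y).differentiableAt.continuousAt
  have g'ne : ∀ y ∈ Ici a, y ≠ z → g' y ≠ 0 := by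
    intro y hy hne
    rcases lt_or_gt_of_ne hne with h | h
    · rcases hneg with hn | hn
      · exact (hn y hy h).ne
      · exact (hn y hy h).ne'
    · exact (hpos y hy h).ne'
  have hMVT : ∀ y1 y2, a ≤ y1 → y1 < y2 → (z ≤ y1 ∨ y2 ≤ z) →
      ∃ η ∈ Ioo y1 y2, f y2 - f y1 = R η * (g y2 - g y1) := by
    intro y1 y2 h1 h12 hside
    obtain ⟨c, hc, hrel⟩ := exists_ratio_hasDerivAt_eq_ratio_slope f f' h12
      hfc.continuousOn (fun x _ => hf x) g g' hgc.continuousOn (fun x _ => hg x)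
    have hca : c ∈ Ici a := le_trans h1 hc.1.le
    have hcne : c ≠ z := by
      rcases hside with h | h
      · exact (lt_of_le_of_lt h hc.1).ne'
      · exact (lt_of_lt_of_le hc.2 h).ne
    rw [hfac c hca] at hrel
    have h3 : (f y2 - f y1 - R c * (g y2 - g y1)) * g' c = 0 := by linear_combination -hrel
    rcases mul_eq_zero.1 h3 with h4 | h4
    · exact ⟨c, hc, by linarith⟩
    · exact absurd h4 (g'ne c hca hcne)
  have hkey : ∀ y ∈ Ici a, y ≠ z → ∃ ξ, (ξ ∈ Ioo z y ∨ ξ ∈ Ioo y z) ∧ f y = R ξ * g y := by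
    intro y hy hne
    rcases lt_or_gt_of_ne hne with h | h
    · obtain ⟨η, hη, he⟩ := hMVT y z hy h (Or.inr le_rfl)
      rw [hfz, hgz] at he
      exact ⟨η, Or.inr hη, by linear_combination -he⟩
    · obtain ⟨η, hη, he⟩ := hMVT z y haz h (Or.inl le_rfl)
      rw [hfz, hgz] at he
      exact ⟨η, Or.inl hη, by linear_combination he⟩
  have gmonoR : StrictMonoOn g (Ici z) := by
    apply strictMonoOn_of_deriv_pos (convex_Ici z) hgc.continuousOn
    intro x hx
    rw [interior_Ici] at hx
    rw [(hg x).deriv]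
    exact hpos x (le_trans haz hx.le) hx
  have gposR : ∀ y ∈ Ici a, z < y → 0 < g y := by
    intro y _ hy
    have := gmonoR self_mem_Ici hy.le hy
    rwa [hgz] at this
  have gantiL : (∀ y ∈ Ici a, y < z → g' y < 0) → StrictAntiOn g (Icc a z) := by
    intro hn
    apply strictAntiOn_of_deriv_neg (convex_Icc a z) hgc.continuousOn
    intro x hx
    rw [interior_Icc] at hx
    rw [(hg x).deriv]
    exact hn x hx.1.le hx.2
  have gmonoL : (∀ y ∈ Ici a, y < z → 0 < g' y) → StrictMonoOn g (Icc a z) := by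
    intro hn
    apply strictMonoOn_of_deriv_pos (convex_Icc a z) hgc.continuousOn
    intro x hx
    rw [interior_Icc] at hx
    rw [(hg x).deriv]
    exact hn x hx.1.le hx.2
  have gposL : (∀ y ∈ Ici a, y < z → g' y < 0) → ∀ y ∈ Ici a, y < z → 0 < g y := by
    intro hn y hy hyz
    have := gantiL hn ⟨hy, hyz.le⟩ ⟨haz, le_refl z⟩ hyz
    rwa [hgz] at this
  have gnegL : (∀ y ∈ Ici a, y < z → 0 < g' y) → ∀ y ∈ Ici a, y < z → g y < 0 := by
    intro hn y hy hyz
    have := gmonoL hn ⟨hy, hyz.le⟩ ⟨haz, le_refl z⟩ hyz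
    rwa [hgz] at this
  refine ⟨?_, gposR, gposL⟩
  intro y1 hy1 y2 hy2 h12
  simp only
  rcases lt_trichotomy y1 z with h1z | h1z | h1z
  · -- y1 < z
    obtain ⟨ξ1, hξ1, he1⟩ := hkey y1 hy1 h1z.ne
    have hξ1' : ξ1 ∈ Ioo y1 z := by
      rcases hξ1 with h | h
      · exact absurd (h.1.trans h.2) (by linarith)
      · exact h
    have hξ1a : ξ1 ∈ Ici a := le_trans hy1 hξ1'.1.le
    rcases lt_trichotomy y2 z with h2z | h2z | h2z
    · -- y1 < y2 < z
      obtain ⟨ξ2, hξ2, he2⟩ := hkey y2 hy2 h2z.ne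
      have hξ2' : ξ2 ∈ Ioo y2 z := by
        rcases hξ2 with h | h
        · exact absurd (h.1.trans h.2) (by linarith)
        · exact h
      have hξ2a : ξ2 ∈ Ici a := le_trans hy2 hξ2'.1.le
      obtain ⟨η, hη, he⟩ := hMVT y1 y2 hy1 h12 (Or.inr h2z.le)
      have hηa : η ∈ Ici a := le_trans hy1 hη.1.le
      have hRR : R η < R ξ2 := hR hηa hξ2a (hη.2.trans hξ2'.1)
      have hE : f y2 * g y1 - f y1 * g y2 = ((g y2 - g y1) * g y2) * (R η - R ξ2) := by
        linear_combination (g y2) * he + (g y1 - g y2) * he2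
      rw [if_neg h1z.ne, if_neg h2z.ne]
      rcases hneg with hn | hn
      · have hg1 : 0 < g y1 := gposL hn y1 hy1 h1z
        have hg2 : 0 < g y2 := gposL hn y2 hy2 h2z
        have hΔ : g y2 < g y1 := gantiL hn ⟨hy1, h1z.le⟩ ⟨hy2, h2z.le⟩ h12
        have hsign : 0 < ((g y2 - g y1) * g y2) * (R η - R ξ2) :=
          mul_pos_of_neg_of_neg (mul_neg_of_neg_of_pos (by linarith) hg2) (by linarith)
        rw [div_lt_div_iff₀ hg1 hg2]
        linarith
      · have hg1 : g y1 < 0 := gnegL hn y1 hy1 h1z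
        have hg2 : g y2 < 0 := gnegL hn y2 hy2 h2z
        have hΔ : g y1 < g y2 := gmonoL hn ⟨hy1, h1z.le⟩ ⟨hy2, h2z.le⟩ h12
        have hsign : 0 < ((g y2 - g y1) * g y2) * (R η - R ξ2) :=
          mul_pos_of_neg_of_neg (mul_neg_of_pos_of_neg (by linarith) hg2) (by linarith)
        rw [← neg_div_neg_eq (f y1) (g y1), ← neg_div_neg_eq (f y2) (g y2),
          div_lt_div_iff₀ (by linarith) (by linarith)]
        nlinarith [hE, hsign]
    · -- y2 = z
      subst h2z
      rw [if_neg h1z.ne, if_pos rfl]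
      have hg1ne : g y1 ≠ 0 := by
        rcases hneg with hn | hn
        · exact (gposL hn y1 hy1 h1z).ne'
        · exact (gnegL hn y1 hy1 h1z).ne
      rw [he1, mul_div_assoc, div_self hg1ne, mul_one]
      exact hR hξ1a haz hξ1'.2
    · -- y1 < z < y2
      obtain ⟨ξ2, hξ2, he2⟩ := hkey y2 hy2 h2z.ne'
      have hξ2' : ξ2 ∈ Ioo z y2 := by
        rcases hξ2 with h | h
        · exact h
        · exact absurd (h.1.trans h.2) (by linarith)
      have hξ2a : ξ2 ∈ Ici a := le_trans haz hξ2'.1.le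
      have hg1ne : g y1 ≠ 0 := by
        rcases hneg with hn | hn
        · exact (gposL hn y1 hy1 h1z).ne'
        · exact (gnegL hn y1 hy1 h1z).ne
      have hg2 : 0 < g y2 := gposR y2 hy2 h2z
      rw [if_neg h1z.ne, if_neg h2z.ne']
      rw [he1, he2, mul_div_assoc, div_self hg1ne, mul_one, mul_div_assoc,
        div_self hg2.ne', mul_one]
      exact hR hξ1a hξ2a (hξ1'.2.trans hξ2'.1)
  · -- y1 = z
    subst h1z
    rw [if_pos rfl, if_neg h12.ne']
    obtain ⟨ξ2, hξ2, he2⟩ := hkey y2 hy2 h12.ne'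
    have hξ2' : ξ2 ∈ Ioo y1 y2 := by
      rcases hξ2 with h | h
      · exact h
      · exact absurd (h.1.trans h.2) (by linarith)
    have hg2 : 0 < g y2 := gposR y2 hy2 h12
    rw [he2, mul_div_assoc, div_self hg2.ne', mul_one]
    exact hR haz (le_trans hy1 hξ2'.1.le) hξ2'.1
  · -- z < y1 < y2
    obtain ⟨ξ1, hξ1, he1⟩ := hkey y1 hy1 h1z.ne'
    have hξ1' : ξ1 ∈ Ioo z y1 := by
      rcases hξ1 with h | h
      · exact h
      · exact absurd (h.1.trans h.2) (by linarith)
    obtain ⟨η, hη, he⟩ := hMVT y1 y2 hy1 h12 (Or.inl h1z.le)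
    have hg1 : 0 < g y1 := gposR y1 hy1 h1z
    have hg2 : 0 < g y2 := gposR y2 hy2 (h1z.trans h12)
    have hΔ : g y1 < g y2 := gmonoR h1z.le (h1z.trans h12).le h12
    have hRR : R ξ1 < R η :=
      hR (le_trans haz hξ1'.1.le) (le_trans hy1 hη.1.le) (hξ1'.2.trans hη.1)
    have hE : f y2 * g y1 - f y1 * g y2 = ((g y2 - g y1) * g y1) * (R η - R ξ1) := by
      linear_combination (g y1) * he + (g y1 - g y2) * he1
    have hsign : 0 < ((g y2 - g y1) * g y1) * (R η - R ξ1) :=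
      mul_pos (mul_pos (by linarith) hg1) (by linarith)
    rw [if_neg h1z.ne', if_neg (h1z.trans h12).ne']
    rw [div_lt_div_iff₀ hg1 hg2]
    linarith

/-- `g(ρ,y,z) := (1+ρy)^q − (1+ρz)^q + qρ(z−y)(1+ρz)^{q−1}` (real powers). -/
noncomputable def gfun (q ρ y z : ℝ) : ℝ :=
  (1 + ρ * y) ^ q - (1 + ρ * z) ^ q + q * ρ * (z - y) * (1 + ρ * z) ^ (q - 1)

/-- The ratio `h(ρ,y,z) = g(1,y,z)/g(ρ,y,z)`, continuously extended at `y = z`. -/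
noncomputable def hfun (q ρ y z : ℝ) : ℝ :=
  if y = z then (1 + y) ^ (q - 2) / (ρ ^ 2 * (1 + ρ * y) ^ (q - 2))
  else gfun q 1 y z / gfun q ρ y z

lemma hasDerivAt_aff_rpow (c r p y : ℝ) (hp : 1 ≤ p) :
    HasDerivAt (fun x : ℝ => (c + r * x) ^ p) (p * (c + r * y) ^ (p - 1) * r) y := by
  have h1 : HasDerivAt (fun x : ℝ => c + r * x) r y := by
    simpa using ((hasDerivAt_id y).const_mul r).const_add c
  have h2 := (Real.hasDerivAt_rpow_const (x := c + r * y) (p := p) (Or.inr hp)).comp y h1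
  exact h2

lemma gfun_hasDerivAt (q ρ z : ℝ) (hq : 1 ≤ q) (y : ℝ) :
    HasDerivAt (fun y => gfun q ρ y z)
      (q * ρ * ((1 + ρ * y) ^ (q - 1) - (1 + ρ * z) ^ (q - 1))) y := by
  have h1 := hasDerivAt_aff_rpow 1 ρ q y hq
  have h2 : HasDerivAt (fun y : ℝ => q * ρ * (z - y) * (1 + ρ * z) ^ (q - 1))
      (-(q * ρ * (1 + ρ * z) ^ (q - 1))) y := by
    have h0 : HasDerivAt (fun y : ℝ => z - y) (-1) y := (hasDerivAt_id y).const_sub z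
    have := (h0.const_mul (q * ρ)).mul_const ((1 + ρ * z) ^ (q - 1))
    exact this.congr_deriv (by ring)
  have h3 := (h1.sub_const ((1 + ρ * z) ^ q)).add h2
  have e : (fun y => gfun q ρ y z) =
      fun x : ℝ => (1 + ρ * x) ^ q - (1 + ρ * z) ^ q + q * ρ * (z - x) * (1 + ρ * z) ^ (q - 1) := by
    funext x; simp only [gfun]
  rw [e]
  exact h3.congr_deriv (by ring)

lemma d1_hasDerivAt (q ρ z : ℝ) (hq : 2 ≤ q) (y : ℝ) :
    HasDerivAt (fun y : ℝ => q * ρ * ((1 + ρ * y) ^ (q - 1) - (1 + ρ * z) ^ (q - 1)))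
      (q * (q - 1) * (ρ ^ 2 * (1 + ρ * y) ^ (q - 2))) y := by
  have h1 := hasDerivAt_aff_rpow 1 ρ (q - 1) y (by linarith)
  have h2 := (h1.sub_const ((1 + ρ * z) ^ (q - 1))).const_mul (q * ρ)
  refine h2.congr_deriv ?_
  rw [show q - 1 - 1 = q - 2 by ring]
  ring

lemma R2_mono (q ρ : ℝ) (hq : 2 < q) (hρ0 : 0 < ρ) (hρ1 : ρ < 1) :
    StrictMonoOn (fun y : ℝ => (1 + y) ^ (q - 2) / (ρ ^ 2 * (1 + ρ * y) ^ (q - 2)))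
      (Ici (-1 : ℝ)) := by
  intro y1 h1 y2 h2 h12
  have h1' : (-1 : ℝ) ≤ y1 := h1
  have h2' : (-1 : ℝ) ≤ y2 := h2
  have hb1 : (0 : ℝ) < 1 + ρ * y1 := by nlinarith
  have hb2 : (0 : ℝ) < 1 + ρ * y2 := by nlinarith
  have ha1 : (0 : ℝ) ≤ 1 + y1 := by linarith
  have hp : (0 : ℝ) < q - 2 := by linarith
  simp only
  rw [div_lt_div_iff₀ (by positivity) (by positivity)]
  have key : ((1 + y1) * (1 + ρ * y2)) ^ (q - 2) < ((1 + y2) * (1 + ρ * y1)) ^ (q - 2) := by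
    apply Real.rpow_lt_rpow (by positivity) ?_ hp
    nlinarith
  rw [Real.mul_rpow ha1 hb2.le, Real.mul_rpow (by linarith) hb1.le] at key
  have := mul_lt_mul_of_pos_left key (show (0 : ℝ) < ρ ^ 2 by positivity)
  nlinarith [this]

lemma d1_pos (q ρ z y : ℝ) (hq : 2 < q) (hρ : 0 < ρ) (hρ1 : ρ ≤ 1) (hz : -1 ≤ z) (hy : z < y) :
    0 < q * ρ * ((1 + ρ * y) ^ (q - 1) - (1 + ρ * z) ^ (q - 1)) := by
  have h0 : (0 : ℝ) ≤ 1 + ρ * z := by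
    nlinarith [mul_nonneg hρ.le (show (0:ℝ) ≤ z + 1 by linarith)]
  have h1 : (1 + ρ * z) ^ (q - 1) < (1 + ρ * y) ^ (q - 1) :=
    Real.rpow_lt_rpow h0 (by nlinarith) (by linarith)
  exact mul_pos (mul_pos (by linarith) hρ) (by linarith)

lemma d1_neg (q ρ z y : ℝ) (hq : 2 < q) (hρ : 0 < ρ) (hρ1 : ρ ≤ 1) (hy' : -1 ≤ y) (hy : y < z) :
    q * ρ * ((1 + ρ * y) ^ (q - 1) - (1 + ρ * z) ^ (q - 1)) < 0 := by
  have h0 : (0 : ℝ) ≤ 1 + ρ * y := by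
    nlinarith [mul_nonneg hρ.le (show (0:ℝ) ≤ y + 1 by linarith)]
  have h1 : (1 + ρ * y) ^ (q - 1) < (1 + ρ * z) ^ (q - 1) :=
    Real.rpow_lt_rpow h0 (by nlinarith) (by linarith)
  exact mul_neg_of_pos_of_neg (mul_pos (by linarith) hρ) (by linarith)

theorem stmt11 (q ρ z : ℝ) (hq : 2 < q) (hρ0 : 0 < ρ) (hρ1 : ρ < 1) (hz : -1 ≤ z) :
    StrictMonoOn (fun y => hfun q ρ y z) (Set.Ici (-1 : ℝ)) ∧
      ∀ y₁ y₂ : ℝ, -1 ≤ y₁ → y₁ < y₂ → y₁ ≠ z → y₂ ≠ z →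
        gfun q 1 y₁ z * gfun q ρ y₂ z < gfun q 1 y₂ z * gfun q ρ y₁ z := by
  have hq1 : (1 : ℝ) ≤ q := by linarith
  have hq2 : (2 : ℝ) ≤ q := hq.le
  -- first-level derivatives
  have hf0 : ∀ y, HasDerivAt (fun y => gfun q 1 y z)
      (q * ((1 + y) ^ (q - 1) - (1 + z) ^ (q - 1))) y := by
    intro y
    have := gfun_hasDerivAt q 1 z hq1 y
    simpa using this
  have hg0 : ∀ y, HasDerivAt (fun y => gfun q ρ y z)
      (q * ρ * ((1 + ρ * y) ^ (q - 1) - (1 + ρ * z) ^ (q - 1))) y :=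
    gfun_hasDerivAt q ρ z hq1
  -- second-level derivatives
  have hF1 : ∀ y, HasDerivAt (fun y : ℝ => q * ((1 + y) ^ (q - 1) - (1 + z) ^ (q - 1)))
      (q * (q - 1) * (1 + y) ^ (q - 2)) y := by
    intro y
    have := d1_hasDerivAt q 1 z hq2 y
    simpa using this
  have hG1 : ∀ y, HasDerivAt
      (fun y : ℝ => q * ρ * ((1 + ρ * y) ^ (q - 1) - (1 + ρ * z) ^ (q - 1)))
      (q * (q - 1) * (ρ ^ 2 * (1 + ρ * y) ^ (q - 2))) y :=
    d1_hasDerivAt q ρ z hq2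
  have hbase : ∀ y : ℝ, -1 ≤ y → (0 : ℝ) < 1 + ρ * y := by
    intro y hy
    nlinarith
  -- level-1 application
  obtain ⟨H1mono, -, -⟩ := ratio_aux (a := (-1 : ℝ)) hz
    (fun y : ℝ => q * ((1 + y) ^ (q - 1) - (1 + z) ^ (q - 1)))
    (fun y : ℝ => q * ρ * ((1 + ρ * y) ^ (q - 1) - (1 + ρ * z) ^ (q - 1)))
    (fun y : ℝ => q * (q - 1) * (1 + y) ^ (q - 2))
    (fun y : ℝ => q * (q - 1) * (ρ ^ 2 * (1 + ρ * y) ^ (q - 2)))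
    (fun y : ℝ => (1 + y) ^ (q - 2) / (ρ ^ 2 * (1 + ρ * y) ^ (q - 2)))
    hF1 hG1 (by simp) (by simp)
    (by
      intro y hy
      have hb := hbase y hy
      have hbne : (1 + ρ * y) ^ (q - 2) ≠ 0 := (Real.rpow_pos_of_pos hb (q - 2)).ne'
      rw [div_mul_eq_mul_div, eq_div_iff (mul_pos (pow_pos hρ0 2) (Real.rpow_pos_of_pos hb _)).ne']
      ring)
    (R2_mono q ρ hq hρ0 hρ1)
    (by
      intro y hy _
      have hb := hbase y hy
      have : (0 : ℝ) < (1 + ρ * y) ^ (q - 2) := Real.rpow_pos_of_pos hb (q - 2)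
      have hq1' : (0 : ℝ) < q - 1 := by linarith
      positivity)
    (Or.inr (by
      intro y hy _
      have hb := hbase y hy
      have : (0 : ℝ) < (1 + ρ * y) ^ (q - 2) := Real.rpow_pos_of_pos hb (q - 2)
      have hq1' : (0 : ℝ) < q - 1 := by linarith
      positivity))
  have H1mono' : StrictMonoOn (fun y : ℝ =>
      if y = z then (1 + z) ^ (q - 2) / (ρ ^ 2 * (1 + ρ * z) ^ (q - 2))
      else (q * ((1 + y) ^ (q - 1) - (1 + z) ^ (q - 1))) /
        (q * ρ * ((1 + ρ * y) ^ (q - 1) - (1 + ρ * z) ^ (q - 1)))) (Ici (-1 : ℝ)) := H1mono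
  -- level-0 application
  obtain ⟨Fmono, hgR, hgL'⟩ := ratio_aux (a := (-1 : ℝ)) hz
    (fun y : ℝ => gfun q 1 y z) (fun y : ℝ => gfun q ρ y z)
    (fun y : ℝ => q * ((1 + y) ^ (q - 1) - (1 + z) ^ (q - 1)))
    (fun y : ℝ => q * ρ * ((1 + ρ * y) ^ (q - 1) - (1 + ρ * z) ^ (q - 1)))
    (fun y : ℝ =>
      if y = z then (1 + z) ^ (q - 2) / (ρ ^ 2 * (1 + ρ * z) ^ (q - 2))
      else (q * ((1 + y) ^ (q - 1) - (1 + z) ^ (q - 1))) /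
        (q * ρ * ((1 + ρ * y) ^ (q - 1) - (1 + ρ * z) ^ (q - 1))))
    hf0 hg0 (by simp [gfun]) (by simp [gfun])
    (by
      intro y hy
      by_cases h : y = z
      · subst h
        simp
      · simp only [if_neg h]
        rw [div_mul_cancel₀]
        rcases lt_or_gt_of_ne h with hlt | hgt
        · exact (d1_neg q ρ z y hq hρ0 hρ1.le hy hlt).ne
        · exact (d1_pos q ρ z y hq hρ0 hρ1.le hz hgt).ne')
    H1mono'
    (fun y hy hzy => d1_pos q ρ z y hq hρ0 hρ1.le hz hzy)
    (Or.inl (fun y hy hyz => d1_neg q ρ z y hq hρ0 hρ1.le hy hyz))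
  have hgL := hgL' (fun y hy hyz => d1_neg q ρ z y hq hρ0 hρ1.le hy hyz)
  constructor
  · have heq : (fun y => hfun q ρ y z) = (fun y : ℝ =>
        if y = z then (1 + z) ^ (q - 2) / (ρ ^ 2 * (1 + ρ * z) ^ (q - 2))
        else gfun q 1 y z / gfun q ρ y z) := by
      funext y
      by_cases h : y = z
      · subst h; simp [hfun]
      · simp [hfun, h]
    rw [heq]
    have := Fmono
    simpa using this
  · intro y1 y2 h1 h12 hne1 hne2
    have h2 : (-1 : ℝ) ≤ y2 := le_trans h1 h12.le
    have hm := Fmono h1 h2 h12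
    simp only [if_neg hne1, if_neg hne2] at hm
    have hg1 : 0 < gfun q ρ y1 z := by
      rcases lt_or_gt_of_ne hne1 with h | h
      · exact hgL y1 h1 h
      · exact hgR y1 h1 h
    have hg2 : 0 < gfun q ρ y2 z := by
      rcases lt_or_gt_of_ne hne2 with h | h
      · exact hgL y2 h2 h
      · exact hgR y2 h2 h
    exact (div_lt_div_iff₀ hg1 hg2).1 hm
end
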